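/- arXiv:2601.10249 — 4 statements merged into one kernel-verified Lean document; each statement's English description precedes it below -/
import Mathlib

section
/- Uniform tail asymptotics (Claim 'Asymptotics of an integral'): Fix an integer Δ ≥ 3. For every η > 0 there exists T > 0 (depending only on Δ and η) such that for every degree-constraint distribution p = (p_2,…,p_Δ) and every t ≥ T, the improper integral ∫_t^∞ (λ_p'(s))² ds converges and |t · ∫_t^∞ (λ_p'(s))² ds − 1| ≤ η. -/
open Real MeasureTheory Filter

noncomputable section

/-- Tail sums: `s_k = Σ_{d=k}^Δ r_d` (also used as `q_k` for distributions `p`). -/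
def tailS (Δ : ℕ) (r : ℕ → ℝ) (k : ℕ) : ℝ := ∑ d ∈ Finset.Icc k Δ, r d

/-- Membership in the set `R_Δ`: `r_2 = -1`, `r_k ≥ 0` for `3 ≤ k ≤ Δ`, `r_k = 0` for `k > Δ`,
and `Σ_{k=3}^Δ r_k = 1`. -/
def memR (Δ : ℕ) (r : ℕ → ℝ) : Prop :=
  r 2 = -1 ∧ (∀ k, 3 ≤ k → k ≤ Δ → 0 ≤ r k) ∧ (∀ k, Δ < k → r k = 0) ∧
    (∑ k ∈ Finset.Icc 3 Δ, r k) = 1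

/-- The Molloy–Reed constant `Υ_r = Σ_{k=3}^Δ k(k-2) r_k`. -/
def Upsilon (Δ : ℕ) (r : ℕ → ℝ) : ℝ := ∑ k ∈ Finset.Icc 3 Δ, (k : ℝ) * ((k : ℝ) - 2) * r k

/-- `Λ_r(t) = λ'(t) · ∫_0^{λ(t)} e^x/(1+x)² · (Σ_{k=2}^{Δ-1} x^k/k! · s_{k+1}) dx`. -/
def LamErr (lam : ℝ → ℝ) (Δ : ℕ) (r : ℕ → ℝ) (t : ℝ) : ℝ :=
  deriv lam t * ∫ x in (0:ℝ)..(lam t),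
    Real.exp x / (1 + x) ^ 2 *
      ∑ k ∈ Finset.Icc 2 (Δ - 1), x ^ k / (Nat.factorial k : ℝ) * tailS Δ r (k + 1)

/-- `H_r(t) = e^{-λ(t)} (Λ_r'(t) - λ'(t)Λ_r(t) + λ'(t) Σ_{k=0}^{Δ-2} λ(t)^k/k! · r_{k+2})`. -/
def Herr (lam : ℝ → ℝ) (Δ : ℕ) (r : ℕ → ℝ) (t : ℝ) : ℝ :=
  Real.exp (-lam t) *
    (deriv (LamErr lam Δ r) t - deriv lam t * LamErr lam Δ r t +
      deriv lam t * ∑ k ∈ Finset.range (Δ - 1), lam t ^ k / (Nat.factorial k : ℝ) * r (k + 2))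

/-- `I_r(t) = e^{-λ(t)} ( -Λ_r(t) + Σ_{k=1}^{Δ-2} λ(t)^k/k! · s_{k+2})`. -/
def Ierr (lam : ℝ → ℝ) (Δ : ℕ) (r : ℕ → ℝ) (t : ℝ) : ℝ :=
  Real.exp (-lam t) *
    (-LamErr lam Δ r t +
      ∑ k ∈ Finset.Icc 1 (Δ - 2), lam t ^ k / (Nat.factorial k : ℝ) * tailS Δ r (k + 2))

/-- `u(t) = 1 + λ(t) ∫_0^t (λ'(s)-1)/λ(s)² ds`. -/
def uAux (lam : ℝ → ℝ) (t : ℝ) : ℝ :=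
  1 + lam t * ∫ s in (0:ℝ)..t, (deriv lam s - 1) / (lam s) ^ 2

/-- `α_r(t) = -∫_0^t u(s) H_r(s) λ(s) ds`. -/
def alphaAux (lam : ℝ → ℝ) (Δ : ℕ) (r : ℕ → ℝ) (t : ℝ) : ℝ :=
  -∫ s in (0:ℝ)..t, uAux lam s * Herr lam Δ r s * lam s

/-- `β_r(t) = ∫_0^t H_r(s) λ(s)² ds`. -/
def betaAux (lam : ℝ → ℝ) (Δ : ℕ) (r : ℕ → ℝ) (t : ℝ) : ℝ :=
  ∫ s in (0:ℝ)..t, Herr lam Δ r s * (lam s) ^ 2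

/-- `ω_r(t) = α_r(t) λ(t) + β_r(t) u(t)`. -/
def omegaAux (lam : ℝ → ℝ) (Δ : ℕ) (r : ℕ → ℝ) (t : ℝ) : ℝ :=
  alphaAux lam Δ r t * lam t + betaAux lam Δ r t * uAux lam t

/-- `t^-_{p,δ} = (1-δ)/(ε Υ_r)`. -/
def tMinus (Δ : ℕ) (r : ℕ → ℝ) (ε δ : ℝ) : ℝ := (1 - δ) / (ε * Upsilon Δ r)

/-- `t^+_{p,δ} = (1+δ)/(ε Υ_r)`. -/
def tPlus (Δ : ℕ) (r : ℕ → ℝ) (ε δ : ℝ) : ℝ := (1 + δ) / (ε * Upsilon Δ r)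

/-- `w^-_{p,δ}`. -/
def wMinus (lam : ℝ → ℝ) (Δ : ℕ) (r : ℕ → ℝ) (ε δ : ℝ) (t : ℝ) : ℝ :=
  if t ≤ tMinus Δ r ε δ then lam t + (1 + δ / 2) * ε * omegaAux lam Δ r t
  else lam (tMinus Δ r ε δ) + (1 + δ / 2) * ε * omegaAux lam Δ r (tMinus Δ r ε δ)

/-- `w^+_{p,δ}`. -/
def wPlus (lam : ℝ → ℝ) (Δ : ℕ) (r : ℕ → ℝ) (ε δ : ℝ) (t : ℝ) : ℝ :=
  if t ≤ tPlus Δ r ε δ then lam t + (1 - δ / 2) * ε * omegaAux lam Δ r t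
  else lam (tPlus Δ r ε δ) + (1 - δ / 2) * ε * omegaAux lam Δ r (tPlus Δ r ε δ)

/-- `Ī^-_{p,δ}(t) = e^{-λ(t)} + (1-δ) ε I_r(t)`. -/
def IbarMinus (lam : ℝ → ℝ) (Δ : ℕ) (r : ℕ → ℝ) (ε δ : ℝ) (t : ℝ) : ℝ :=
  Real.exp (-lam t) + (1 - δ) * ε * Ierr lam Δ r t

/-- `Ī^+_{p,δ}(t) = e^{-λ(t)} + (1+δ) ε I_r(t)`. -/
def IbarPlus (lam : ℝ → ℝ) (Δ : ℕ) (r : ℕ → ℝ) (ε δ : ℝ) (t : ℝ) : ℝ :=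
  Real.exp (-lam t) + (1 + δ) * ε * Ierr lam Δ r t

/-- `Ĩ_p(x) = e^{-x} (1 + ε Σ_{k=1}^{Δ-2} x^k/k! · s_{k+2})`. -/
def Itilde (Δ : ℕ) (r : ℕ → ℝ) (ε : ℝ) (x : ℝ) : ℝ :=
  Real.exp (-x) *
    (1 + ε * ∑ k ∈ Finset.Icc 1 (Δ - 2), x ^ k / (Nat.factorial k : ℝ) * tailS Δ r (k + 2))

set_option maxHeartbeats 1000000
open Topology


def gFun (Δ : ℕ) (c : ℕ → ℝ) (x : ℝ) : ℝ :=
  ∑ k ∈ Finset.range Δ, x ^ k / (Nat.factorial k : ℝ) * c k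

def gdFun (Δ : ℕ) (c : ℕ → ℝ) (x : ℝ) : ℝ :=
  ∑ k ∈ Finset.range (Δ - 1), x ^ k / (Nat.factorial k : ℝ) * c (k + 1)

def phiFun (Δ : ℕ) (c : ℕ → ℝ) (x : ℝ) : ℝ :=
  ∑ k ∈ Finset.range Δ, c k *
    (Real.exp (-x) * ∑ j ∈ Finset.range (k + 1), x ^ j / (Nat.factorial j : ℝ))

lemma hasDerivAt_gFun (Δ : ℕ) (hΔ : 1 ≤ Δ) (c : ℕ → ℝ) (x : ℝ) :
    HasDerivAt (gFun Δ c) (gdFun Δ c x) x := by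
  have h : ∀ k : ℕ, HasDerivAt (fun y : ℝ => y ^ k / (Nat.factorial k : ℝ) * c k)
      ((k : ℝ) * x ^ (k - 1) / (Nat.factorial k : ℝ) * c k) x := by
    intro k
    simpa [div_eq_mul_inv, mul_comm, mul_assoc, mul_left_comm] using
      ((hasDerivAt_pow k x).mul_const ((Nat.factorial k : ℝ)⁻¹ * c k))
  have H : HasDerivAt (gFun Δ c)
      (∑ k ∈ Finset.range Δ, (k : ℝ) * x ^ (k - 1) / (Nat.factorial k : ℝ) * c k) x :=
    HasDerivAt.fun_sum (u := Finset.range Δ) (fun k _hk => h k)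
  convert H using 1
  obtain ⟨m, rfl⟩ : ∃ m, Δ = m + 1 := ⟨Δ - 1, by omega⟩
  rw [Finset.sum_range_succ']
  simp only [Nat.add_sub_cancel, gdFun, Nat.add_sub_cancel]
  rw [show ((0:ℕ):ℝ) * x ^ (0-1) / (Nat.factorial 0 : ℝ) * c 0 = 0 by norm_num]
  rw [add_zero]
  apply Finset.sum_congr rfl
  intro k _
  have : (Nat.factorial (k+1) : ℝ) = (k+1) * Nat.factorial k := by
    rw [Nat.factorial_succ]; push_cast; ring
  rw [this]
  have hk : (Nat.factorial k : ℝ) ≠ 0 := Nat.cast_ne_zero.2 (Nat.factorial_ne_zero k)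
  field_simp
  push_cast; ring

lemma hasDerivAt_expsum (k : ℕ) (x : ℝ) :
    HasDerivAt (fun y : ℝ => Real.exp (-y) * ∑ j ∈ Finset.range (k + 1), y ^ j / (Nat.factorial j : ℝ))
      (-(Real.exp (-x) * x ^ k / (Nat.factorial k : ℝ))) x := by
  have hS : ∀ j : ℕ, HasDerivAt (fun y : ℝ => y ^ j / (Nat.factorial j : ℝ))
      ((j : ℝ) * x ^ (j - 1) / (Nat.factorial j : ℝ)) x := by
    intro j
    simpa [div_eq_mul_inv] using ((hasDerivAt_pow j x).mul_const ((Nat.factorial j : ℝ)⁻¹))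
  have hSsum : HasDerivAt (fun y : ℝ => ∑ j ∈ Finset.range (k + 1), y ^ j / (Nat.factorial j : ℝ))
      (∑ j ∈ Finset.range k, x ^ j / (Nat.factorial j : ℝ)) x := by
    have H : HasDerivAt (fun y : ℝ => ∑ j ∈ Finset.range (k + 1), y ^ j / (Nat.factorial j : ℝ))
        (∑ j ∈ Finset.range (k + 1), (j : ℝ) * x ^ (j - 1) / (Nat.factorial j : ℝ)) x :=
      HasDerivAt.fun_sum (fun j _hj => hS j)
    convert H using 1
    rw [Finset.sum_range_succ']
    rw [show ((0:ℕ):ℝ) * x ^ (0-1) / (Nat.factorial 0 : ℝ) = 0 by norm_num, add_zero]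
    apply Finset.sum_congr rfl
    intro j _
    have : (Nat.factorial (j+1) : ℝ) = (j+1) * Nat.factorial j := by
      rw [Nat.factorial_succ]; push_cast; ring
    rw [this]
    have hj : (Nat.factorial j : ℝ) ≠ 0 := Nat.cast_ne_zero.2 (Nat.factorial_ne_zero j)
    field_simp
    simp only [Nat.add_sub_cancel, Nat.cast_add, Nat.cast_one]; ring
  have hE : HasDerivAt (fun y : ℝ => Real.exp (-y)) (-Real.exp (-x)) x := by
    convert (hasDerivAt_neg x).exp using 1; ring
  have := hE.fun_mul hSsum
  refine this.congr_deriv ?_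
  rw [Finset.sum_range_succ]
  ring

lemma hasDerivAt_phiFun (Δ : ℕ) (c : ℕ → ℝ) (x : ℝ) :
    HasDerivAt (phiFun Δ c) (-(Real.exp (-x) * gFun Δ c x)) x := by
  have H : HasDerivAt (phiFun Δ c)
      (∑ k ∈ Finset.range Δ, c k * (-(Real.exp (-x) * x ^ k / (Nat.factorial k : ℝ)))) x :=
    HasDerivAt.fun_sum (fun k _hk => (hasDerivAt_expsum k x).const_mul (c k))
  convert H using 1
  rw [gFun, Finset.mul_sum, ← Finset.sum_neg_distrib]
  exact Finset.sum_congr rfl fun k _ => by ring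

lemma pow_div_fact_mono {x : ℝ} : ∀ (m : ℕ), (m : ℝ) ≤ x → ∀ j ≤ m,
    x ^ j / (Nat.factorial j : ℝ) ≤ x ^ m / (Nat.factorial m : ℝ) := by
  intro m
  induction m with
  | zero => intro _ j hj; interval_cases j; simp
  | succ n ih =>
    intro hx j hj
    have hn : (n : ℝ) ≤ x := by push_cast at hx ⊢; linarith
    rcases Nat.lt_succ_iff_lt_or_eq.1 (Nat.lt_succ_of_le hj) with h | rfl
    · have h1 : x ^ j / (Nat.factorial j : ℝ) ≤ x ^ n / (Nat.factorial n : ℝ) :=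
        ih hn j (Nat.lt_succ_iff.1 h)
      refine h1.trans ?_
      have hx0 : 0 ≤ x := le_trans (by positivity) hx
      have hfn : (0:ℝ) < (Nat.factorial n : ℝ) := by positivity
      have hfs : (Nat.factorial (n+1) : ℝ) = (n+1) * Nat.factorial n := by
        rw [Nat.factorial_succ]; push_cast; ring
      rw [pow_succ, hfs, div_le_div_iff₀ hfn (by positivity)]
      have : (n:ℝ) + 1 ≤ x := by push_cast at hx; linarith
      nlinarith [mul_nonneg (mul_nonneg (sub_nonneg.2 this) (pow_nonneg hx0 n)) hfn.le]
    · exact le_refl _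

section Ineq
variable {Δ : ℕ} {c : ℕ → ℝ}

lemma gFun_ge (hΔ : 3 ≤ Δ) (hc0 : c 0 = 1) (hc1 : c 1 = 1) (hcnn : ∀ k, 0 ≤ c k)
    {x : ℝ} (hx : 0 ≤ x) : 1 + x ≤ gFun Δ c x := by
  have hsub : Finset.range 2 ⊆ Finset.range Δ := Finset.range_subset_range.2 (by omega)
  have h := Finset.sum_le_sum_of_subset_of_nonneg hsub
    (fun k _ _ => mul_nonneg (div_nonneg (pow_nonneg hx _) (by positivity)) (hcnn _))
    (f := fun k => x ^ k / (Nat.factorial k : ℝ) * c k)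
  calc 1 + x = ∑ k ∈ Finset.range 2, x ^ k / (Nat.factorial k : ℝ) * c k := by
        simp [Finset.sum_range_succ, hc0, hc1]
    _ ≤ gFun Δ c x := h

lemma gFun_pos (hΔ : 3 ≤ Δ) (hc0 : c 0 = 1) (hc1 : c 1 = 1) (hcnn : ∀ k, 0 ≤ c k)
    (hcle : ∀ k, c k ≤ 1) {x : ℝ} (hx : -(1/4) ≤ x) : 0 < gFun Δ c x := by
  rcases le_or_gt 0 x with h0 | h0
  · have := gFun_ge hΔ hc0 hc1 hcnn h0; linarith
  · have hsplit : gFun Δ c x =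
        (∑ k ∈ Finset.Ico 0 2, x ^ k / (Nat.factorial k : ℝ) * c k)
        + ∑ k ∈ Finset.Ico 2 Δ, x ^ k / (Nat.factorial k : ℝ) * c k := by
      rw [gFun, Finset.range_eq_Ico, ← Finset.sum_Ico_consecutive _ (by omega : 0 ≤ 2) (by omega : 2 ≤ Δ)]
    have h01 : (∑ k ∈ Finset.Ico 0 2, x ^ k / (Nat.factorial k : ℝ) * c k) = 1 + x := by
      rw [show Finset.Ico 0 2 = Finset.range 2 from rfl]
      simp [Finset.sum_range_succ, hc0, hc1]
    have habs : |∑ k ∈ Finset.Ico 2 Δ, x ^ k / (Nat.factorial k : ℝ) * c k| ≤ 3 * x ^ 2 := by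
      refine le_trans (Finset.abs_sum_le_sum_abs _ _) ?_
      have hterm : ∀ k ∈ Finset.Ico 2 Δ,
          |x ^ k / (Nat.factorial k : ℝ) * c k| ≤ x ^ 2 * (1 / (Nat.factorial k : ℝ)) := by
        intro k hk
        obtain ⟨hk2, _⟩ := Finset.mem_Ico.1 hk
        have h1 : |x ^ k / (Nat.factorial k : ℝ) * c k| ≤ |x| ^ k / (Nat.factorial k : ℝ) := by
          rw [abs_mul, abs_div, abs_pow]
          have : |(Nat.factorial k : ℝ)| = (Nat.factorial k : ℝ) := abs_of_nonneg (by positivity)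
          rw [this]
          have hck : |c k| ≤ 1 := abs_le.2 ⟨by linarith [hcnn k], hcle k⟩
          have hd : (0:ℝ) ≤ |x| ^ k / (Nat.factorial k : ℝ) := by positivity
          nlinarith [hd, abs_nonneg (c k)]
        refine h1.trans ?_
        rw [div_le_iff₀ (by positivity)]
        have hxle : |x| ≤ 1 := by rw [abs_of_neg h0]; linarith
        have : |x| ^ k ≤ |x| ^ 2 := pow_le_pow_of_le_one (abs_nonneg x) hxle hk2
        calc |x| ^ k ≤ |x| ^ 2 := this
          _ = x ^ 2 := sq_abs x
          _ = x ^ 2 * (1 / (Nat.factorial k : ℝ)) * (Nat.factorial k : ℝ) := by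
              field_simp
      refine le_trans (Finset.sum_le_sum hterm) ?_
      rw [← Finset.mul_sum]
      have hfs : ∑ k ∈ Finset.Ico 2 Δ, (1 / (Nat.factorial k : ℝ)) ≤ 3 := by
        have h1 : ∑ k ∈ Finset.Ico 2 Δ, (1 / (Nat.factorial k : ℝ)) ≤
            ∑ k ∈ Finset.range Δ, (1 / (Nat.factorial k : ℝ)) := by
          refine Finset.sum_le_sum_of_subset_of_nonneg ?_ (fun k _ _ => by positivity)
          rw [Finset.range_eq_Ico]; exact Finset.Ico_subset_Ico (by omega) le_rfl
        have h2 : ∑ k ∈ Finset.range Δ, ((1:ℝ) ^ k / (Nat.factorial k : ℝ)) ≤ Real.exp 1 :=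
          Real.sum_le_exp_of_nonneg (by norm_num) Δ
        simp only [one_pow] at h2
        have := Real.exp_one_lt_d9
        linarith
      nlinarith [sq_nonneg x]
    have := abs_le.1 habs
    rw [hsplit, h01]
    nlinarith [this.1]

lemma gdFun_nonneg (hcnn : ∀ k, 0 ≤ c k) {x : ℝ} (hx : 0 ≤ x) : 0 ≤ gdFun Δ c x := by
  apply Finset.sum_nonneg; intro k _
  exact mul_nonneg (div_nonneg (pow_nonneg hx _) (by positivity)) (hcnn _)

lemma gFun_nonneg (hcnn : ∀ k, 0 ≤ c k) {x : ℝ} (hx : 0 ≤ x) : 0 ≤ gFun Δ c x := by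
  apply Finset.sum_nonneg; intro k _
  exact mul_nonneg (div_nonneg (pow_nonneg hx _) (by positivity)) (hcnn _)

lemma gdFun_le_gFun (hcnn : ∀ k, 0 ≤ c k) (hcm : ∀ k, c (k+1) ≤ c k) {x : ℝ} (hx : 0 ≤ x) :
    gdFun Δ c x ≤ gFun Δ c x := by
  have h1 : gdFun Δ c x ≤ ∑ k ∈ Finset.range (Δ - 1), x ^ k / (Nat.factorial k : ℝ) * c k := by
    refine Finset.sum_le_sum fun k _ => ?_
    have : (0:ℝ) ≤ x ^ k / (Nat.factorial k : ℝ) :=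
      div_nonneg (pow_nonneg hx _) (by positivity)
    exact mul_le_mul_of_nonneg_left (hcm k) this
  refine h1.trans ?_
  refine Finset.sum_le_sum_of_subset_of_nonneg (Finset.range_subset_range.2 (by omega)) ?_
  intro k _ _
  exact mul_nonneg (div_nonneg (pow_nonneg hx _) (by positivity)) (hcnn _)

lemma mul_gdFun_le (hΔ : 1 ≤ Δ) (hcnn : ∀ k, 0 ≤ c k) {x : ℝ} (hx : 0 ≤ x) :
    x * gdFun Δ c x ≤ (Δ : ℝ) * gFun Δ c x := by
  rw [gdFun, Finset.mul_sum]
  have step : ∀ k ∈ Finset.range (Δ - 1),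
      x * (x ^ k / (Nat.factorial k : ℝ) * c (k+1)) ≤
      (Δ:ℝ) * (x ^ (k+1) / (Nat.factorial (k+1) : ℝ) * c (k+1)) := by
    intro k hk
    have hkΔ : k + 1 ≤ Δ := by have := Finset.mem_range.1 hk; omega
    have hfs : (Nat.factorial (k+1) : ℝ) = (k+1) * Nat.factorial k := by
      rw [Nat.factorial_succ]; push_cast; ring
    have hfk : (0:ℝ) < (Nat.factorial k : ℝ) := by positivity
    have h1 : x * (x ^ k / (Nat.factorial k : ℝ)) = ((k:ℝ)+1) * (x ^ (k+1) / (Nat.factorial (k+1) : ℝ)) := by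
      rw [hfs, pow_succ]; field_simp
    have h2 : ((k:ℝ)+1) ≤ (Δ:ℝ) := by exact_mod_cast hkΔ
    have h3 : (0:ℝ) ≤ x ^ (k+1) / (Nat.factorial (k+1) : ℝ) * c (k+1) :=
      mul_nonneg (div_nonneg (pow_nonneg hx _) (by positivity)) (hcnn _)
    calc x * (x ^ k / (Nat.factorial k : ℝ) * c (k+1))
        = ((k:ℝ)+1) * (x ^ (k+1) / (Nat.factorial (k+1) : ℝ) * c (k+1)) := by rw [← mul_assoc, h1]; ring
      _ ≤ (Δ:ℝ) * (x ^ (k+1) / (Nat.factorial (k+1) : ℝ) * c (k+1)) :=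
          mul_le_mul_of_nonneg_right h2 h3
  refine (Finset.sum_le_sum step).trans ?_
  rw [← Finset.mul_sum]
  have hΔ0 : (0:ℝ) ≤ (Δ:ℝ) := by positivity
  apply mul_le_mul_of_nonneg_left _ hΔ0
  obtain ⟨m, rfl⟩ : ∃ m, Δ = m + 1 := ⟨Δ - 1, by omega⟩
  rw [gFun, Finset.sum_range_succ', Nat.add_sub_cancel]
  have : (0:ℝ) ≤ x ^ 0 / (Nat.factorial 0 : ℝ) * c 0 :=
    mul_nonneg (div_nonneg (pow_nonneg hx _) (by positivity)) (hcnn _)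
  linarith [le_refl (∑ k ∈ Finset.range m, x ^ (k+1) / (Nat.factorial (k+1) : ℝ) * c (k+1))]

lemma gFun_zero (hΔ : 1 ≤ Δ) (hc0 : c 0 = 1) : gFun Δ c 0 = 1 := by
  rw [gFun]
  rw [Finset.sum_eq_single 0]
  · simp [hc0]
  · intro k _ hk
    obtain ⟨m, rfl⟩ : ∃ m, k = m + 1 := ⟨k - 1, by omega⟩
    simp [pow_succ]
  · intro h; exact absurd (Finset.mem_range.2 (by omega)) h

lemma phiFun_nonneg (hcnn : ∀ k, 0 ≤ c k) {x : ℝ} (hx : 0 ≤ x) : 0 ≤ phiFun Δ c x := by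
  apply Finset.sum_nonneg; intro k _
  refine mul_nonneg (hcnn k) (mul_nonneg (Real.exp_nonneg _) ?_)
  apply Finset.sum_nonneg; intro j _
  exact div_nonneg (pow_nonneg hx _) (by positivity)

lemma phiFun_le_bound (hΔ : 3 ≤ Δ) (hcnn : ∀ k, 0 ≤ c k) {x : ℝ} (hx : (Δ : ℝ) ≤ x) :
    Real.exp (-x) * gFun Δ c x ≤ phiFun Δ c x ∧
    phiFun Δ c x ≤ (1 + (Δ:ℝ)^2 / x) * (Real.exp (-x) * gFun Δ c x) := by
  have hx0 : (0:ℝ) < x := lt_of_lt_of_le (by positivity) hx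
  have key : ∀ k ∈ Finset.range Δ,
      x ^ k / (Nat.factorial k : ℝ) ≤ (∑ j ∈ Finset.range (k+1), x ^ j / (Nat.factorial j : ℝ)) ∧
      (∑ j ∈ Finset.range (k+1), x ^ j / (Nat.factorial j : ℝ)) ≤
        (1 + (Δ:ℝ)^2 / x) * (x ^ k / (Nat.factorial k : ℝ)) := by
    intro k hk
    have hkΔ : k < Δ := Finset.mem_range.1 hk
    have hRnn : 0 ≤ ∑ j ∈ Finset.range k, x ^ j / (Nat.factorial j : ℝ) := by
      apply Finset.sum_nonneg; intro j _
      exact div_nonneg (pow_nonneg hx0.le _) (by positivity)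
    constructor
    · rw [Finset.sum_range_succ]; linarith
    · rw [Finset.sum_range_succ]
      have hR : (∑ j ∈ Finset.range k, x ^ j / (Nat.factorial j : ℝ)) ≤
          ((Δ:ℝ)^2 / x) * (x ^ k / (Nat.factorial k : ℝ)) := by
        rcases Nat.eq_zero_or_pos k with rfl | hkpos
        · simpa using by positivity
        · obtain ⟨m, rfl⟩ : ∃ m, k = m + 1 := ⟨k - 1, by omega⟩
          have hmx : (m : ℝ) ≤ x := by
            have : (m:ℝ) ≤ (Δ:ℝ) := by exact_mod_cast (by omega : m ≤ Δ)
            linarith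
          have h1 : (∑ j ∈ Finset.range (m+1), x ^ j / (Nat.factorial j : ℝ)) ≤
              (m+1 : ℝ) * (x ^ m / (Nat.factorial m : ℝ)) := by
            calc (∑ j ∈ Finset.range (m+1), x ^ j / (Nat.factorial j : ℝ))
                ≤ ∑ _j ∈ Finset.range (m+1), x ^ m / (Nat.factorial m : ℝ) :=
                  Finset.sum_le_sum (fun j hj => pow_div_fact_mono m hmx j (Nat.lt_succ_iff.1 (Finset.mem_range.1 hj)))
              _ = (m+1 : ℝ) * (x ^ m / (Nat.factorial m : ℝ)) := by
                  rw [Finset.sum_const, Finset.card_range]; push_cast; ring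
          refine h1.trans ?_
          have hfs : (Nat.factorial (m+1) : ℝ) = (m+1) * Nat.factorial m := by
            rw [Nat.factorial_succ]; push_cast; ring
          have hmΔ : ((m:ℝ)+1) ≤ (Δ:ℝ) := by exact_mod_cast (by omega : m + 1 ≤ Δ)
          have hfm : (0:ℝ) < (Nat.factorial m : ℝ) := by positivity
          have heq : (Δ:ℝ)^2 / x * (x ^ (m+1) / (Nat.factorial (m+1) : ℝ))
              = (Δ:ℝ)^2 * (x ^ m / (Nat.factorial (m+1) : ℝ)) := by
            rw [pow_succ]; field_simp; ring
          rw [heq, hfs]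
          have hpm : (0:ℝ) ≤ x ^ m := pow_nonneg hx0.le m
          have h2 : ((m:ℝ) + 1) * (x ^ m / (Nat.factorial m : ℝ))
              = ((m:ℝ)+1)^2 * (x ^ m / (((m:ℝ)+1) * (Nat.factorial m : ℝ))) := by
            field_simp
          rw [h2]
          have hsq : ((m:ℝ)+1)^2 ≤ (Δ:ℝ)^2 := by nlinarith [hmΔ, Nat.cast_nonneg (α := ℝ) m]
          exact mul_le_mul_of_nonneg_right hsq
            (div_nonneg hpm (by positivity))
      linarith
  constructor
  · rw [phiFun, gFun, Finset.mul_sum]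
    refine Finset.sum_le_sum fun k hk => ?_
    have h := (key k hk).1
    have : Real.exp (-x) * (x ^ k / (Nat.factorial k : ℝ) * c k)
        = c k * (Real.exp (-x) * (x ^ k / (Nat.factorial k : ℝ))) := by ring
    rw [this]
    exact mul_le_mul_of_nonneg_left
      (mul_le_mul_of_nonneg_left h (Real.exp_nonneg _)) (hcnn k)
  · rw [phiFun, gFun, Finset.mul_sum, Finset.mul_sum]
    refine Finset.sum_le_sum fun k hk => ?_
    have h := (key k hk).2
    have heq : (1 + (Δ:ℝ)^2 / x) * (Real.exp (-x) * (x ^ k / (Nat.factorial k : ℝ) * c k))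
        = c k * (Real.exp (-x) * ((1 + (Δ:ℝ)^2 / x) * (x ^ k / (Nat.factorial k : ℝ)))) := by ring
    rw [heq]
    exact mul_le_mul_of_nonneg_left
      (mul_le_mul_of_nonneg_left h (Real.exp_nonneg _)) (hcnn k)

lemma phiFun_tendsto (Δ : ℕ) (c : ℕ → ℝ) : Tendsto (phiFun Δ c) atTop (𝓝 0) := by
  have : ∀ k : ℕ, Tendsto (fun x : ℝ => c k *
      (Real.exp (-x) * ∑ j ∈ Finset.range (k + 1), x ^ j / (Nat.factorial j : ℝ))) atTop (𝓝 0) := by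
    intro k
    have h1 : Tendsto (fun x : ℝ =>
        ∑ j ∈ Finset.range (k + 1), (x ^ j * Real.exp (-x)) / (Nat.factorial j : ℝ)) atTop (𝓝 0) := by
      have := tendsto_finset_sum (Finset.range (k+1)) (fun j _ =>
        (Real.tendsto_pow_mul_exp_neg_atTop_nhds_zero j).div_const (Nat.factorial j : ℝ))
      simpa using this
    have h2 : (fun x : ℝ => Real.exp (-x) * ∑ j ∈ Finset.range (k + 1), x ^ j / (Nat.factorial j : ℝ))
        = fun x : ℝ => ∑ j ∈ Finset.range (k + 1), (x ^ j * Real.exp (-x)) / (Nat.factorial j : ℝ) := by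
      funext x; rw [Finset.mul_sum]; exact Finset.sum_congr rfl fun j _ => by ring
    rw [show (0:ℝ) = c k * 0 by ring]
    exact (h2 ▸ h1).const_mul (c k)
  have := tendsto_finset_sum (Finset.range Δ) (fun k _ => this k)
  rw [Finset.sum_const_zero] at this
  exact this

end Ineq

section TailSLemmas
variable {Δ : ℕ} {p : ℕ → ℝ}

lemma tailS_one (hΔ : 3 ≤ Δ) (hplt : ∀ k, k < 2 → p k = 0)
    (hpsum : (∑ k ∈ Finset.Icc 2 Δ, p k) = 1) : tailS Δ p 1 = 1 := by
  rw [tailS, show Finset.Icc 1 Δ = insert 1 (Finset.Icc 2 Δ) by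
    ext x; simp [Finset.mem_Icc, Finset.mem_insert]; omega]
  rw [Finset.sum_insert (by simp [Finset.mem_Icc])]
  rw [hplt 1 (by omega), hpsum, zero_add]

lemma tailS_mono (h : ∀ k, 0 ≤ p k) (k : ℕ) : tailS Δ p (k + 1) ≤ tailS Δ p k := by
  apply Finset.sum_le_sum_of_subset_of_nonneg (Finset.Icc_subset_Icc (by omega) le_rfl)
  intro i _ _; exact h i

lemma tailS_nonneg (h : ∀ k, 0 ≤ p k) (k : ℕ) : 0 ≤ tailS Δ p k :=
  Finset.sum_nonneg fun i _ => h i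

lemma tailS_le_one (hΔ : 3 ≤ Δ) (h : ∀ k, 0 ≤ p k) (hplt : ∀ k, k < 2 → p k = 0)
    (hpsum : (∑ k ∈ Finset.Icc 2 Δ, p k) = 1) (k : ℕ) : tailS Δ p (k + 1) ≤ 1 := by
  rw [← tailS_one hΔ hplt hpsum]
  induction k with
  | zero => exact le_rfl
  | succ n ih => exact le_trans (tailS_mono h (n+1)) ih

lemma tailS_two (hΔ : 3 ≤ Δ) (hpsum : (∑ k ∈ Finset.Icc 2 Δ, p k) = 1) : tailS Δ p 2 = 1 := hpsum

end TailSLemmas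


/-- Uniform tail asymptotics: `∫_t^∞ (λ_p'(s))² ds ~ 1/t` uniformly in the
degree-constraint distribution `p`. -/
theorem tail_integral_asymptotics (Δ : ℕ) (hΔ : 3 ≤ Δ) :
    ∀ η : ℝ, 0 < η → ∃ T : ℝ, 0 < T ∧
      ∀ p : ℕ → ℝ, (∀ k, 0 ≤ p k) → (∀ k, k < 2 → p k = 0) → (∀ k, Δ < k → p k = 0) →
        (∑ k ∈ Finset.Icc 2 Δ, p k) = 1 →
        ∀ lamp : ℝ → ℝ, Differentiable ℝ lamp → lamp 0 = 0 →
          (∀ t : ℝ, 0 ≤ t → deriv lamp t =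
            Real.exp (-lamp t) *
              ∑ k ∈ Finset.range Δ, lamp t ^ k / (Nat.factorial k : ℝ) * tailS Δ p (k + 1)) →
          ∀ t : ℝ, T ≤ t →
            MeasureTheory.IntegrableOn (fun s => (deriv lamp s) ^ 2) (Set.Ici t) ∧
            |t * (∫ s in Set.Ici t, (deriv lamp s) ^ 2) - 1| ≤ η := by
  intro η hη
  obtain ⟨η₀, hη₀def⟩ : ∃ v : ℝ, v = min η 1 := ⟨_, rfl⟩
  have hη₀pos : 0 < η₀ := by rw [hη₀def]; exact lt_min hη zero_lt_one
  have hη₀le1 : η₀ ≤ 1 := by rw [hη₀def]; exact min_le_right _ _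
  have hη₀leη : η₀ ≤ η := by rw [hη₀def]; exact min_le_left _ _
  obtain ⟨x₀, hx₀def⟩ : ∃ v : ℝ, v = 20 * ((Δ:ℝ)^2 + Δ) / η₀ := ⟨_, rfl⟩
  have hΔpos : (0:ℝ) < Δ := by positivity
  have hx₀pos : 0 < x₀ := by rw [hx₀def]; positivity
  have hx₀η : η₀ * x₀ = 20 * ((Δ:ℝ)^2 + Δ) := by
    rw [hx₀def]; field_simp
  have hΔx₀ : (Δ:ℝ) / x₀ ≤ η₀ / 20 := by
    rw [div_le_div_iff₀ hx₀pos (by norm_num)]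
    nlinarith [sq_nonneg ((Δ:ℝ))]
  have hΔ2x₀ : (Δ:ℝ)^2 / x₀ ≤ η₀ / 20 := by
    rw [div_le_div_iff₀ hx₀pos (by norm_num)]
    nlinarith
  have hΔx₀' : (Δ:ℝ) ≤ x₀ := by
    have h20 : 20 * ((Δ:ℝ)^2 + Δ) ≤ x₀ := by
      rw [hx₀def, le_div_iff₀ hη₀pos]; nlinarith [sq_nonneg ((Δ:ℝ))]
    nlinarith [sq_nonneg ((Δ:ℝ))]
  obtain ⟨T₀, hT₀def⟩ : ∃ v : ℝ, v = (x₀ + 1) * Real.exp x₀ := ⟨_, rfl⟩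
  have hT₀pos : 0 < T₀ := by rw [hT₀def]; positivity
  refine ⟨max (T₀ * (1 + 20 / η₀)) (20 / η₀), lt_max_of_lt_right (by positivity), ?_⟩
  intro p hpnn hplt hpgt hpsum lamp hdiff hlam0 hderiv t ht
  -- coefficient sequence
  set c : ℕ → ℝ := fun k => tailS Δ p (k + 1) with hcdef
  have hc0 : c 0 = 1 := tailS_one hΔ hplt hpsum
  have hc1 : c 1 = 1 := tailS_two hΔ hpsum
  have hcnn : ∀ k, 0 ≤ c k := fun k => tailS_nonneg hpnn (k+1)
  have hcm : ∀ k, c (k+1) ≤ c k := fun k => tailS_mono hpnn (k+1)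
  have hcle : ∀ k, c k ≤ 1 := fun k => tailS_le_one hΔ hpnn hplt hpsum k
  have hΔ1 : 1 ≤ Δ := by omega
  -- basics
  have hcont : Continuous lamp := hdiff.continuous
  have hg : ∀ s : ℝ, 0 ≤ s → deriv lamp s = Real.exp (-lamp s) * gFun Δ c (lamp s) :=
    fun s hs => hderiv s hs
  have hgcont : Continuous (gFun Δ c) := by
    apply continuous_finset_sum; intro k _
    exact (continuous_pow k).div_const _ |>.mul continuous_const
  have hgdcont : Continuous (gdFun Δ c) := by
    apply continuous_finset_sum; intro k _
    exact (continuous_pow k).div_const _ |>.mul continuous_const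
  have hderivCont : ContinuousOn (deriv lamp) (Set.Ici 0) := by
    apply ContinuousOn.congr (f := fun s => Real.exp (-lamp s) * gFun Δ c (lamp s))
    · exact (((hcont.neg).rexp).mul (hgcont.comp hcont)).continuousOn
    · intro s hs; exact hg s hs
  have hFTC : ∀ A B : ℝ, 0 ≤ A → A ≤ B → ∫ s in A..B, deriv lamp s = lamp B - lamp A := by
    intro A B hA hAB
    refine intervalIntegral.integral_deriv_eq_sub (fun s _ => hdiff s) ?_
    apply ContinuousOn.intervalIntegrable
    apply hderivCont.mono
    rw [Set.uIcc_of_le hAB]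
    exact fun s hs => le_trans hA hs.1
  -- lamp stays above -1/4
  have hq : ∀ s : ℝ, 0 ≤ s → -(1/4) < lamp s := by
    by_contra hcon
    push_neg at hcon
    obtain ⟨s₀, hs₀, hs₀le⟩ := hcon
    set B : Set ℝ := {u | 0 ≤ u} ∩ {u | lamp u ≤ -(1/4)} with hBdef
    have hBne : B.Nonempty := ⟨s₀, hs₀, hs₀le⟩
    have hBclosed : IsClosed B :=
      (isClosed_le continuous_const continuous_id).inter
        (isClosed_le hcont continuous_const)
    have hBbdd : BddBelow B := ⟨0, fun u hu => hu.1⟩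
    set t₁ : ℝ := sInf B with ht₁def
    have ht₁mem : t₁ ∈ B := hBclosed.csInf_mem hBne hBbdd
    have ht₁nn : 0 ≤ t₁ := ht₁mem.1
    have ht₁le : lamp t₁ ≤ -(1/4) := ht₁mem.2
    have ht₁pos : 0 < t₁ := by
      rcases lt_or_eq_of_le ht₁nn with h | h
      · exact h
      · exfalso; rw [← h, hlam0] at ht₁le; norm_num at ht₁le
    have hlow : ∀ u : ℝ, 0 ≤ u → u < t₁ → -(1/4) < lamp u := by
      intro u hu hut
      by_contra hc
      push_neg at hc
      exact absurd (csInf_le hBbdd ⟨hu, hc⟩) (not_le.2 hut)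
    have hIcc : ∀ u ∈ Set.Icc (0:ℝ) t₁, -(1/4) ≤ lamp u := by
      intro u hu
      rcases lt_or_eq_of_le hu.2 with h | h
      · exact le_of_lt (hlow u hu.1 h)
      · rw [h]
        have htd : Tendsto lamp (𝓝[<] t₁) (𝓝 (lamp t₁)) :=
          (hcont.tendsto t₁).mono_left nhdsWithin_le_nhds
        refine ge_of_tendsto htd ?_
        filter_upwards [Ioo_mem_nhdsLT ht₁pos] with u hu
        exact le_of_lt (hlow u hu.1.le hu.2)
    have hdnn : ∀ u ∈ Set.Icc (0:ℝ) t₁, 0 ≤ deriv lamp u := by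
      intro u hu
      rw [hg u hu.1]
      exact mul_nonneg (Real.exp_nonneg _)
        (le_of_lt (gFun_pos hΔ hc0 hc1 hcnn hcle (hIcc u hu)))
    have h0 : (0:ℝ) ≤ ∫ s in (0:ℝ)..t₁, deriv lamp s :=
      intervalIntegral.integral_nonneg ht₁nn hdnn
    rw [hFTC 0 t₁ le_rfl ht₁nn, hlam0, sub_zero] at h0
    linarith
  -- monotone, nonneg
  have hmono : MonotoneOn lamp (Set.Ici (0:ℝ)) := by
    apply monotoneOn_of_deriv_nonneg (convex_Ici 0) hcont.continuousOn
    · exact fun s _ => (hdiff s).differentiableWithinAt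
    · intro s hs
      rw [interior_Ici] at hs
      rw [hg s (le_of_lt hs)]
      exact mul_nonneg (Real.exp_nonneg _)
        (le_of_lt (gFun_pos hΔ hc0 hc1 hcnn hcle (le_of_lt (hq s (le_of_lt hs)))))
  have hnn : ∀ s : ℝ, 0 ≤ s → 0 ≤ lamp s := by
    intro s hs
    have := hmono (Set.mem_Ici.2 (le_refl (0:ℝ))) (Set.mem_Ici.2 hs) hs
    rwa [hlam0] at this
  have hgpos : ∀ s : ℝ, 0 ≤ s → 0 < gFun Δ c (lamp s) :=
    fun s hs => gFun_pos hΔ hc0 hc1 hcnn hcle (by linarith [hnn s hs])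
  have hg1 : ∀ s : ℝ, 0 ≤ s → 1 ≤ gFun Δ c (lamp s) := by
    intro s hs
    have := gFun_ge hΔ hc0 hc1 hcnn (hnn s hs)
    linarith [hnn s hs]
  -- growth
  have hgrow : ∀ M : ℝ, 0 ≤ M → ∀ s : ℝ, (M+1) * Real.exp M ≤ s → M ≤ lamp s := by
    intro M hM s hs
    have hspos : 0 < s := lt_of_lt_of_le (by positivity) hs
    by_contra hc
    push_neg at hc
    have hub : ∀ u ∈ Set.Icc (0:ℝ) s, lamp u ≤ M := by
      intro u hu
      exact le_trans (hmono (Set.mem_Ici.2 hu.1) (Set.mem_Ici.2 hspos.le) hu.2) hc.le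
    have hdlb : ∀ u ∈ Set.Icc (0:ℝ) s, Real.exp (-M) ≤ deriv lamp u := by
      intro u hu
      rw [hg u hu.1]
      have h1 : Real.exp (-M) ≤ Real.exp (-lamp u) :=
        Real.exp_le_exp.2 (by linarith [hub u hu])
      have h2 : 1 ≤ gFun Δ c (lamp u) := hg1 u hu.1
      nlinarith [Real.exp_pos (-lamp u)]
    have hcmp : ∫ u in (0:ℝ)..s, Real.exp (-M) ≤ ∫ u in (0:ℝ)..s, deriv lamp u := by
      apply intervalIntegral.integral_mono_on hspos.le intervalIntegrable_const
      · apply ContinuousOn.intervalIntegrable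
        apply hderivCont.mono
        rw [Set.uIcc_of_le hspos.le]
        exact fun u hu => hu.1
      · exact hdlb
    rw [intervalIntegral.integral_const, hFTC 0 s le_rfl hspos.le, hlam0, sub_zero, smul_eq_mul,
      sub_zero] at hcmp
    have hps : s * Real.exp (-M) ≥ (M+1) * Real.exp M * Real.exp (-M) :=
      mul_le_mul_of_nonneg_right hs (Real.exp_nonneg _)
    rw [mul_assoc, ← Real.exp_add, add_neg_cancel, Real.exp_zero, mul_one] at hps
    linarith
  have htends : Tendsto lamp atTop atTop := by
    rw [tendsto_atTop]
    intro M
    rw [eventually_atTop]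
    refine ⟨(max M 0 + 1) * Real.exp (max M 0), fun s hs => ?_⟩
    exact le_trans (le_max_left M 0) (hgrow (max M 0) (le_max_right M 0) s hs)
  -- psi
  set ψ : ℝ → ℝ := fun s => Real.exp (lamp s) / gFun Δ c (lamp s) with hψdef
  have hψderiv : ∀ s : ℝ, 0 ≤ s →
      HasDerivAt ψ (1 - gdFun Δ c (lamp s) / gFun Δ c (lamp s)) s := by
    intro s hs
    have hgne : gFun Δ c (lamp s) ≠ 0 := ne_of_gt (hgpos s hs)
    have h1 : HasDerivAt (fun x => Real.exp x / gFun Δ c x)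
        ((Real.exp (lamp s) * gFun Δ c (lamp s) - Real.exp (lamp s) * gdFun Δ c (lamp s)) /
          (gFun Δ c (lamp s))^2) (lamp s) :=
      (Real.hasDerivAt_exp (lamp s)).div (hasDerivAt_gFun Δ hΔ1 c (lamp s)) hgne
    have h2 := h1.comp s (hdiff s).hasDerivAt
    refine h2.congr_deriv ?_
    rw [hg s hs, Real.exp_neg]
    have he : Real.exp (lamp s) ≠ 0 := ne_of_gt (Real.exp_pos _)
    field_simp
  have hψ0 : ψ 0 = 1 := by
    rw [hψdef]; simp only [hlam0, Real.exp_zero, gFun_zero hΔ1 hc0]; norm_num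
  have hIcont : ContinuousOn (fun s => 1 - gdFun Δ c (lamp s) / gFun Δ c (lamp s)) (Set.Ici 0) := by
    apply ContinuousOn.sub continuousOn_const
    exact ContinuousOn.div (hgdcont.comp hcont).continuousOn (hgcont.comp hcont).continuousOn
      (fun s hs => ne_of_gt (hgpos s hs))
  have hψFTC : ∀ A B : ℝ, 0 ≤ A → A ≤ B →
      ∫ s in A..B, (1 - gdFun Δ c (lamp s) / gFun Δ c (lamp s)) = ψ B - ψ A := by
    intro A B hA hAB
    refine intervalIntegral.integral_eq_sub_of_hasDerivAt
      (fun s hs => hψderiv s ?_) ?_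
    · rw [Set.uIcc_of_le hAB] at hs; linarith [hs.1]
    · apply ContinuousOn.intervalIntegrable
      apply hIcont.mono
      rw [Set.uIcc_of_le hAB]
      exact fun s hs => le_trans hA hs.1
  have hψle : ∀ s : ℝ, 0 ≤ s → ψ s ≤ 1 + s := by
    intro s hs
    have h1 : ∫ u in (0:ℝ)..s, (1 - gdFun Δ c (lamp u) / gFun Δ c (lamp u)) ≤
        ∫ u in (0:ℝ)..s, (1:ℝ) := by
      apply intervalIntegral.integral_mono_on hs
      · apply ContinuousOn.intervalIntegrable
        apply hIcont.mono
        rw [Set.uIcc_of_le hs]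
        exact fun u hu => hu.1
      · exact intervalIntegrable_const
      · intro u hu
        have := div_nonneg (gdFun_nonneg (Δ := Δ) hcnn (hnn u hu.1)) (le_of_lt (hgpos u hu.1))
        linarith
    rw [hψFTC 0 s le_rfl hs, hψ0] at h1
    simp only [intervalIntegral.integral_const, smul_eq_mul, mul_one, sub_zero] at h1
    linarith
  have hψge : ∀ s : ℝ, T₀ ≤ s → (s - T₀) * (1 - η₀/20) ≤ ψ s := by
    intro s hs
    have hT₀nn : (0:ℝ) ≤ T₀ := hT₀pos.le
    have hsnn : (0:ℝ) ≤ s := le_trans hT₀nn hs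
    have hlamT₀ : x₀ ≤ lamp T₀ := hgrow x₀ hx₀pos.le T₀ (le_of_eq hT₀def.symm)
    have h1 : ∫ u in T₀..s, (1 - (Δ:ℝ)/x₀) ≤
        ∫ u in T₀..s, (1 - gdFun Δ c (lamp u) / gFun Δ c (lamp u)) := by
      apply intervalIntegral.integral_mono_on hs intervalIntegrable_const
      · apply ContinuousOn.intervalIntegrable
        apply hIcont.mono
        rw [Set.uIcc_of_le hs]
        exact fun u hu => le_trans hT₀nn hu.1
      · intro u hu
        have hunn : (0:ℝ) ≤ u := le_trans hT₀nn hu.1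
        have hLu : x₀ ≤ lamp u :=
          le_trans hlamT₀ (hmono (Set.mem_Ici.2 hT₀nn) (Set.mem_Ici.2 hunn) hu.1)
        have hLupos : 0 < lamp u := lt_of_lt_of_le hx₀pos hLu
        have hgu : 0 < gFun Δ c (lamp u) := hgpos u hunn
        have h2 : gdFun Δ c (lamp u) / gFun Δ c (lamp u) ≤ (Δ:ℝ) / lamp u := by
          rw [div_le_div_iff₀ hgu hLupos]
          have := mul_gdFun_le (c := c) hΔ1 hcnn hLupos.le
          nlinarith
        have h3 : (Δ:ℝ) / lamp u ≤ (Δ:ℝ) / x₀ :=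
          div_le_div_of_nonneg_left hΔpos.le hx₀pos hLu
        linarith
    rw [hψFTC T₀ s hT₀nn hs] at h1
    simp only [intervalIntegral.integral_const, smul_eq_mul] at h1
    have hψT₀ : 0 ≤ ψ T₀ := div_nonneg (Real.exp_nonneg _) (le_of_lt (hgpos T₀ hT₀nn))
    have hd : (Δ:ℝ)/x₀ ≤ η₀/20 := hΔx₀
    have h2 : (s - T₀) * (1 - η₀/20) ≤ (s - T₀) * (1 - (Δ:ℝ)/x₀) :=
      mul_le_mul_of_nonneg_left (by linarith) (sub_nonneg.2 hs)
    linarith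
  -- Phi
  have hΦderiv : ∀ s : ℝ, 0 ≤ s →
      HasDerivAt (fun u => -phiFun Δ c (lamp u)) ((deriv lamp s)^2) s := by
    intro s hs
    have h1 := (hasDerivAt_phiFun Δ c (lamp s)).comp s (hdiff s).hasDerivAt
    have h2 := h1.neg
    refine h2.congr_deriv ?_
    rw [hg s hs]; ring
  have hΦFTC : ∀ A B : ℝ, 0 ≤ A → A ≤ B →
      ∫ s in A..B, (deriv lamp s)^2 = phiFun Δ c (lamp A) - phiFun Δ c (lamp B) := by
    intro A B hA hAB
    have := intervalIntegral.integral_eq_sub_of_hasDerivAt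
      (f := fun u => -phiFun Δ c (lamp u)) (f' := fun s => (deriv lamp s)^2)
      (fun s hs => hΦderiv s (by rw [Set.uIcc_of_le hAB] at hs; linarith [hs.1]))
      (((hderivCont.mono (by rw [Set.uIcc_of_le hAB]; exact fun s hs => le_trans hA hs.1)).pow 2).intervalIntegrable)
    rw [this]; ring
  -- tail integral identity
  have hTail : ∀ s : ℝ, 0 ≤ s →
      MeasureTheory.IntegrableOn (fun u => (deriv lamp u) ^ 2) (Set.Ici s) ∧
      (∫ u in Set.Ici s, (deriv lamp u) ^ 2) = phiFun Δ c (lamp s) := by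
    intro s hs
    have hΦnn : ∀ u : ℝ, 0 ≤ u → 0 ≤ phiFun Δ c (lamp u) :=
      fun u hu => phiFun_nonneg hcnn (hnn u hu)
    have hfi : ∀ T : ℝ, IntegrableOn (fun u => (deriv lamp u)^2) (Set.Ioc s T) := by
      intro T
      have hcont2 : ContinuousOn (fun u => (deriv lamp u)^2) (Set.Icc s (max s T)) :=
        ((hderivCont.mono (fun u hu => le_trans hs hu.1)).pow 2)
      exact (hcont2.integrableOn_Icc).mono_set
        (fun u hu => ⟨le_of_lt hu.1, le_trans hu.2 (le_max_right s T)⟩)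
    have hnorm : ∀ T : ℝ, s ≤ T → ∫ u in s..T, ‖(deriv lamp u)^2‖ =
        phiFun Δ c (lamp s) - phiFun Δ c (lamp T) := by
      intro T hT
      rw [← hΦFTC s T hs hT]
      apply intervalIntegral.integral_congr
      intro u _
      show ‖(deriv lamp u)^2‖ = (deriv lamp u)^2
      rw [Real.norm_eq_abs, abs_of_nonneg (sq_nonneg _)]
    have hev : ∀ᶠ T in (atTop : Filter ℝ),
        ∫ u in s..T, ‖(deriv lamp u)^2‖ ≤ phiFun Δ c (lamp s) := by
      filter_upwards [eventually_ge_atTop s] with T hT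
      rw [hnorm T hT]
      linarith [hΦnn T (le_trans hs hT)]
    have hIoi : IntegrableOn (fun u => (deriv lamp u)^2) (Set.Ioi s) :=
      integrableOn_Ioi_of_intervalIntegral_norm_bounded
        (phiFun Δ c (lamp s)) s hfi tendsto_id hev
    have hIci : IntegrableOn (fun u => (deriv lamp u)^2) (Set.Ici s) := by
      rwa [integrableOn_Ici_iff_integrableOn_Ioi]
    refine ⟨hIci, ?_⟩
    have h1 : Tendsto (fun T => ∫ u in s..T, (deriv lamp u)^2) atTop
        (𝓝 (∫ u in Set.Ioi s, (deriv lamp u)^2)) :=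
      intervalIntegral_tendsto_integral_Ioi s hIoi tendsto_id
    have h2 : Tendsto (fun T => ∫ u in s..T, (deriv lamp u)^2) atTop
        (𝓝 (phiFun Δ c (lamp s))) := by
      have h3 : Tendsto (fun T => phiFun Δ c (lamp s) - phiFun Δ c (lamp T)) atTop
          (𝓝 (phiFun Δ c (lamp s) - 0)) :=
        tendsto_const_nhds.sub ((phiFun_tendsto Δ c).comp htends)
      rw [sub_zero] at h3
      apply h3.congr'
      filter_upwards [eventually_ge_atTop s] with T hT
      exact (hΦFTC s T hs hT).symm
    rw [MeasureTheory.integral_Ici_eq_integral_Ioi]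
    exact tendsto_nhds_unique h1 h2
  -- final arithmetic
  have ht1 : T₀ * (1 + 20/η₀) ≤ t := le_trans (le_max_left _ _) ht
  have ht2 : 20/η₀ ≤ t := le_trans (le_max_right _ _) ht
  have htpos : 0 < t := lt_of_lt_of_le (by positivity) ht2
  have htnn : 0 ≤ t := htpos.le
  obtain ⟨hInt, hVal⟩ := hTail t htnn
  refine ⟨hInt, ?_⟩
  rw [hVal]
  have h20η : 0 < 20/η₀ := by positivity
  have hT₀t : T₀ < t :=
    lt_of_lt_of_le (lt_mul_of_one_lt_right hT₀pos (by linarith)) ht1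
  have hT₀let : T₀ ≤ t := hT₀t.le
  have hL : x₀ ≤ lamp t := by
    apply hgrow x₀ hx₀pos.le t
    rw [← hT₀def]; exact hT₀let
  have hLnn : 0 ≤ lamp t := hnn t htnn
  have hΔL : (Δ:ℝ) ≤ lamp t := le_trans hΔx₀' hL
  have hf : 0 < Real.exp (-(lamp t)) * gFun Δ c (lamp t) :=
    mul_pos (Real.exp_pos _) (hgpos t htnn)
  have hψt : ψ t = 1 / (Real.exp (-(lamp t)) * gFun Δ c (lamp t)) := by
    simp only [hψdef]
    rw [Real.exp_neg, one_div, mul_inv, inv_inv, div_eq_mul_inv]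
  obtain ⟨hΦlow, hΦhigh⟩ := phiFun_le_bound (c := c) hΔ hcnn hΔL
  -- lower bound
  have hflow : 1 ≤ (1 + t) * (Real.exp (-(lamp t)) * gFun Δ c (lamp t)) := by
    have h1 : ψ t ≤ 1 + t := hψle t htnn
    rw [hψt, div_le_iff₀ hf] at h1
    linarith
  have hlow : 1 - η₀ ≤ t * phiFun Δ c (lamp t) := by
    have h2 : t * (Real.exp (-(lamp t)) * gFun Δ c (lamp t)) ≤ t * phiFun Δ c (lamp t) :=
      mul_le_mul_of_nonneg_left hΦlow htnn
    set F := Real.exp (-(lamp t)) * gFun Δ c (lamp t) with hFdef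
    rcases le_or_gt F η₀ with hc' | hc'
    · nlinarith [h2, hflow, hc', htnn]
    · have h3 : t * η₀ ≤ t * F := mul_le_mul_of_nonneg_left hc'.le htnn
      have h4 : 20 ≤ t * η₀ := by
        rw [div_le_iff₀ hη₀pos] at ht2; linarith
      linarith
  -- upper bound
  have hψget := hψge t hT₀let
  rw [hψt] at hψget
  have hη20 : η₀/20 < 1 := by linarith
  have hD : 0 < (t - T₀) * (1 - η₀/20) := mul_pos (by linarith) (by linarith)
  have hfupper : Real.exp (-(lamp t)) * gFun Δ c (lamp t) ≤ 1 / ((t - T₀) * (1 - η₀/20)) := by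
    rw [le_div_iff₀ hD]
    have := (le_div_iff₀ hf).1 hψget
    linarith
  have hupper : t * phiFun Δ c (lamp t) ≤ 1 + η₀ := by
    have h3a : (Δ:ℝ)^2 / lamp t ≤ (Δ:ℝ)^2 / x₀ :=
      div_le_div_of_nonneg_left (sq_nonneg _) hx₀pos hL
    have h4 : phiFun Δ c (lamp t) ≤
        (1 + η₀/20) * (Real.exp (-(lamp t)) * gFun Δ c (lamp t)) :=
      le_trans hΦhigh (mul_le_mul_of_nonneg_right (by linarith) hf.le)
    have h5 : phiFun Δ c (lamp t) ≤ (1 + η₀/20) * (1 / ((t - T₀) * (1 - η₀/20))) :=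
      le_trans h4 (mul_le_mul_of_nonneg_left hfupper (by linarith))
    have h6 : t * phiFun Δ c (lamp t) ≤ t * ((1 + η₀/20) * (1 / ((t - T₀) * (1 - η₀/20)))) :=
      mul_le_mul_of_nonneg_left h5 htnn
    refine le_trans h6 ?_
    rw [mul_one_div, ← mul_div_assoc, div_le_iff₀ hD]
    have h1 : T₀ * (η₀ + 20) ≤ t * η₀ := by
      have heq : T₀ * (η₀ + 20) = T₀ * (1 + 20/η₀) * η₀ := by field_simp
      rw [heq]
      exact mul_le_mul_of_nonneg_right ht1 hη₀pos.le
    have h7 : 20 * t ≤ (t - T₀) * (η₀ + 20) := by nlinarith [h1]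
    have hc1 : (0:ℝ) < (1 + η₀) * (1 - η₀/20) := mul_pos (by linarith) (by linarith)
    have p1 : (1 + η₀/20) * (η₀ + 20) ≤ 20 * ((1 + η₀) * (1 - η₀/20)) := by
      nlinarith [mul_le_mul_of_nonneg_left hη₀le1 hη₀pos.le]
    have step1 : 20 * t * ((1 + η₀) * (1 - η₀/20)) ≤
        ((t - T₀) * (η₀ + 20)) * ((1 + η₀) * (1 - η₀/20)) :=
      mul_le_mul_of_nonneg_right h7 hc1.le
    have key : t * (1 + η₀/20) * (η₀ + 20) ≤
        ((1 + η₀) * ((t - T₀) * (1 - η₀/20))) * (η₀ + 20) := by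
      calc t * (1 + η₀/20) * (η₀ + 20)
          = t * ((1 + η₀/20) * (η₀ + 20)) := by ring
        _ ≤ t * (20 * ((1 + η₀) * (1 - η₀/20))) := mul_le_mul_of_nonneg_left p1 htpos.le
        _ = 20 * t * ((1 + η₀) * (1 - η₀/20)) := by ring
        _ ≤ ((t - T₀) * (η₀ + 20)) * ((1 + η₀) * (1 - η₀/20)) := step1
        _ = ((1 + η₀) * ((t - T₀) * (1 - η₀/20))) * (η₀ + 20) := by ring
    exact le_of_mul_le_mul_right key (by linarith)
  rw [abs_le]
  constructor
  · linarith
  · linarith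
end
end

section
/- Bounds on the 2-regular solution λ (Claim 'Bounds on λ(t)', first part): For all t ≥ 0 one has log(t+1) ≤ λ(t) ≤ 2·log(2t+1) and λ'(t) ≥ 1/(t+1). -/
open Real MeasureTheory Filter

noncomputable section

private lemma mono_from_zero (f : ℝ → ℝ) (hf : Differentiable ℝ f)
    (h : ∀ t : ℝ, 0 < t → 0 ≤ deriv f t) : ∀ t : ℝ, 0 ≤ t → f 0 ≤ f t := by
  intro t ht
  have hmono : MonotoneOn f (Set.Ici (0:ℝ)) := by
    refine monotoneOn_of_deriv_nonneg (convex_Ici 0) hf.continuous.continuousOn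
      (fun x _ => (hf x).differentiableWithinAt) ?_
    intro x hx
    rw [interior_Ici] at hx
    exact h x hx
  exact hmono (Set.mem_Ici.mpr le_rfl) ht ht

/-- Bounds on the 2-regular solution `λ`:
`log(t+1) ≤ λ(t) ≤ 2 log(2t+1)` and `λ'(t) ≥ 1/(t+1)` for all `t ≥ 0`. -/
theorem lambda_bounds (lam : ℝ → ℝ) (hdiff : Differentiable ℝ lam) (h0 : lam 0 = 0)
    (hode : ∀ t : ℝ, 0 ≤ t → deriv lam t = Real.exp (-lam t) * (1 + lam t)) :
    ∀ t : ℝ, 0 ≤ t →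
      Real.log (t + 1) ≤ lam t ∧ lam t ≤ 2 * Real.log (2 * t + 1) ∧
        1 / (t + 1) ≤ deriv lam t := by
  have hL : ∀ t : ℝ, HasDerivAt lam (deriv lam t) t := fun t => (hdiff t).hasDerivAt
  -- Step 1: λ ≥ 0
  have h1 : ∀ t : ℝ, 0 ≤ t → 0 ≤ lam t := by
    have key : ∀ t : ℝ, 0 ≤ t → lam 0 * Real.exp (lam 0) ≤ lam t * Real.exp (lam t) := by
      refine mono_from_zero (fun s => lam s * Real.exp (lam s)) (by fun_prop) ?_
      intro t ht
      have hd : HasDerivAt (fun s => lam s * Real.exp (lam s))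
          (deriv lam t * Real.exp (lam t) + lam t * (Real.exp (lam t) * deriv lam t)) t :=
        (hL t).mul ((hL t).exp)
      rw [hd.deriv, hode t ht.le, Real.exp_neg]
      have hE := Real.exp_pos (lam t)
      have hE' : Real.exp (lam t) ≠ 0 := ne_of_gt hE
      field_simp
      nlinarith [sq_nonneg (1 + lam t)]
    intro t ht
    have := key t ht
    rw [h0, zero_mul] at this
    nlinarith [Real.exp_pos (lam t)]
  -- Step 2: e^λ ≥ t+1
  have h2 : ∀ t : ℝ, 0 ≤ t → t + 1 ≤ Real.exp (lam t) := by
    have key : ∀ t : ℝ, 0 ≤ t →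
        Real.exp (lam 0) - (0 + 1) ≤ Real.exp (lam t) - (t + 1) := by
      refine mono_from_zero (fun s => Real.exp (lam s) - (s + 1)) (by fun_prop) ?_
      intro t ht
      have hd : HasDerivAt (fun s => Real.exp (lam s) - (s + 1))
          (Real.exp (lam t) * deriv lam t - 1) t :=
        ((hL t).exp).sub ((hasDerivAt_id t).add_const 1)
      rw [hd.deriv, hode t ht.le, Real.exp_neg]
      have hE' : Real.exp (lam t) ≠ 0 := ne_of_gt (Real.exp_pos _)
      field_simp
      linarith [h1 t ht.le]
    intro t ht
    have := key t ht
    rw [h0, Real.exp_zero] at this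
    linarith
  -- Step 3: e^{λ/2} ≤ 2t+1
  have h3 : ∀ t : ℝ, 0 ≤ t → Real.exp (lam t / 2) ≤ 2 * t + 1 := by
    have key : ∀ t : ℝ, 0 ≤ t →
        (2 * 0 + 1) - Real.exp (lam 0 / 2) ≤ (2 * t + 1) - Real.exp (lam t / 2) := by
      refine mono_from_zero (fun s => (2 * s + 1) - Real.exp (lam s / 2)) (by fun_prop) ?_
      intro t ht
      have hd : HasDerivAt (fun s => (2 * s + 1) - Real.exp (lam s / 2))
          (2 * 1 - Real.exp (lam t / 2) * (deriv lam t / 2)) t := by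
        exact (((hasDerivAt_id t).const_mul 2).add_const 1).sub
          (((hL t).div_const 2).exp)
      rw [hd.deriv, hode t ht.le]
      have hA := Real.exp_pos (lam t / 2)
      have hexp : Real.exp (lam t) = Real.exp (lam t / 2) * Real.exp (lam t / 2) := by
        rw [← Real.exp_add]; ring_nf
      have hge : lam t / 2 + 1 ≤ Real.exp (lam t / 2) := Real.add_one_le_exp _
      have hl := h1 t ht.le
      rw [Real.exp_neg, hexp]
      have hA' : Real.exp (lam t / 2) ≠ 0 := ne_of_gt hA
      field_simp
      nlinarith [hge, hl, hA]
    intro t ht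
    have := key t ht
    rw [h0] at this
    norm_num at this
    linarith
  -- Step 4: e^λ ≤ (t+1)(1+λ)
  have h4 : ∀ t : ℝ, 0 ≤ t → Real.exp (lam t) ≤ (t + 1) * (1 + lam t) := by
    have key : ∀ t : ℝ, 0 ≤ t →
        (0 + 1) * (1 + lam 0) - Real.exp (lam 0) ≤ (t + 1) * (1 + lam t) - Real.exp (lam t) := by
      refine mono_from_zero (fun s => (s + 1) * (1 + lam s) - Real.exp (lam s)) (by fun_prop) ?_
      intro t ht
      have hd : HasDerivAt (fun s => (s + 1) * (1 + lam s) - Real.exp (lam s))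
          (1 * (1 + lam t) + (t + 1) * (0 + deriv lam t)
            - Real.exp (lam t) * deriv lam t) t := by
        exact (((hasDerivAt_id t).add_const 1).mul ((hasDerivAt_const t 1).add (hL t))).sub
          ((hL t).exp)
      rw [hd.deriv, hode t ht.le, Real.exp_neg]
      have hE := Real.exp_pos (lam t)
      have hE' : Real.exp (lam t) ≠ 0 := ne_of_gt hE
      have hl := h1 t ht.le
      field_simp
      nlinarith [mul_nonneg ht.le hl]
    intro t ht
    have := key t ht
    rw [h0, Real.exp_zero] at this
    norm_num at this
    linarith
  -- conclude
  intro t ht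
  have ht1 : (0:ℝ) < t + 1 := by linarith
  have hl := h1 t ht
  refine ⟨?_, ?_, ?_⟩
  · rw [Real.log_le_iff_le_exp ht1]
    exact h2 t ht
  · have h2t : (0:ℝ) < 2 * t + 1 := by linarith
    have := (Real.le_log_iff_exp_le h2t).mpr (h3 t ht)
    linarith
  · rw [hode t ht, Real.exp_neg]
    have hE := Real.exp_pos (lam t)
    have h4' := h4 t ht
    rw [div_le_iff₀ ht1, inv_mul_eq_div, div_mul_eq_mul_div, le_div_iff₀ hE]
    nlinarith
end
end

section
/- Squeeze for λ_p (Lemma 'Bounds on λ_p'): Fix an integer Δ ≥ 3. For every δ ∈ (0,1) there exists ε₀ ∈ (0,1) such that for every ε ∈ (0,ε₀), every r ∈ R_Δ, with p = p(ε,r) and λ_p the solution of the corresponding initial value problem: for all t ∈ [0, 2/(ε·Υ_r)] one has λ(t) + (1−δ)·ε·Λ_r(t) ≤ λ_p(t) ≤ λ(t) + (1+δ)·ε·Λ_r(t). -/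
open Real MeasureTheory Filter

noncomputable section

lemma nonneg_of_ode (f : ℝ → ℝ) (hf : Differentiable ℝ f) (h0 : f 0 = 0)
    (hd : ∀ t, 0 ≤ t → f t = 0 → 1 ≤ deriv f t) :
    ∀ t, 0 ≤ t → 0 ≤ f t := by
  by_contra h
  push_neg at h
  obtain ⟨t₀, ht₀, hft₀⟩ := h
  set E := {t : ℝ | 0 ≤ t ∧ f t < 0} with hE_def
  have hE : E.Nonempty := ⟨t₀, ht₀, hft₀⟩
  have hbd : BddBelow E := ⟨0, fun x hx => hx.1⟩
  set c := sInf E with hc_def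
  have hc0 : 0 ≤ c := le_csInf hE (fun x hx => hx.1)
  have hfc_le : f c ≤ 0 := by
    have h1 : c ∈ closure E := csInf_mem_closure hE hbd
    have h2 : closure E ⊆ {t : ℝ | f t ≤ 0} := by
      apply closure_minimal
      · exact fun x hx => le_of_lt hx.2
      · exact isClosed_le hf.continuous continuous_const
    exact h2 h1
  have hfc : f c = 0 := by
    rcases lt_or_eq_of_le hfc_le with hlt | heq
    · -- f c < 0 : derive contradiction (find a smaller element of E)
      exfalso
      have hcpos : 0 < c := by
        rcases eq_or_lt_of_le hc0 with h' | h'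
        · rw [← h'] at hlt; rw [h0] at hlt; exact absurd hlt (lt_irrefl 0)
        · exact h'
      have hev : ∀ᶠ x in nhds c, f x < 0 :=
        ContinuousAt.eventually_lt hf.continuous.continuousAt continuousAt_const hlt
      obtain ⟨η, hη, hball⟩ := Metric.eventually_nhds_iff.mp hev
      set s := max (c - η/2) (c/2) with hs_def
      have hs0 : 0 ≤ s := le_trans (by linarith) (le_max_right _ _)
      have hslt : s < c := max_lt (by linarith) (by linarith)
      have hsd : dist s c < η := by
        rw [Real.dist_eq, abs_of_nonpos (by linarith)]
        have : c - η/2 ≤ s := le_max_left _ _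
        linarith
      have hsE : s ∈ E := ⟨hs0, hball hsd⟩
      exact absurd (csInf_le hbd hsE) (not_le.mpr hslt)
    · exact heq
  have h1 : 1 ≤ deriv f c := hd c hc0 hfc
  have hder : HasDerivAt f (deriv f c) c := (hf c).hasDerivAt
  have hslope := hasDerivAt_iff_tendsto_slope.mp hder
  have hev2 : ∀ᶠ x in nhdsWithin c {c}ᶜ, 0 < slope f c x :=
    hslope.eventually (eventually_gt_nhds (by linarith))
  rw [eventually_nhdsWithin_iff] at hev2
  obtain ⟨η, hη, hball⟩ := Metric.eventually_nhds_iff.mp hev2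
  obtain ⟨s, hsE, hslt⟩ := lt_sInf_add_pos hE hη
  have hcs : c ≤ s := csInf_le hbd hsE
  have hne : s ≠ c := by
    intro hh
    rw [hh] at hsE
    exact absurd hfc (ne_of_lt hsE.2)
  have hd2 : dist s c < η := by
    rw [Real.dist_eq, abs_of_nonneg (by linarith)]
    linarith [hslt]
  have hpos : 0 < slope f c s := hball hd2 hne
  rw [slope_def_field] at hpos
  have hsc : 0 < s - c := sub_pos.mpr (lt_of_le_of_ne hcs (Ne.symm hne))
  have hfs : 0 < f s - f c := by
    have := mul_pos hpos hsc
    rw [div_mul_cancel₀] at this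
    · exact this
    · exact ne_of_gt hsc
  rw [hfc] at hfs
  linarith [hsE.2]


lemma integral_inv_comp (ψ : ℝ → ℝ) (hc : Continuous ψ) (hpos : ∀ x, 0 < ψ x)
    (f : ℝ → ℝ) (hf : Differentiable ℝ f) (h0 : f 0 = 0)
    (hode : ∀ t, 0 ≤ t → deriv f t = ψ (f t)) :
    ∀ t, 0 ≤ t → ∫ x in (0:ℝ)..(f t), (ψ x)⁻¹ = t := by
  intro t ht
  set F : ℝ → ℝ := fun y => ∫ x in (0:ℝ)..y, (ψ x)⁻¹ with hF_def
  have hci : Continuous fun x => (ψ x)⁻¹ := hc.inv₀ (fun x => (hpos x).ne')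
  have hFd : ∀ y : ℝ, HasDerivAt F ((ψ y)⁻¹) y := by
    intro y
    exact intervalIntegral.integral_hasDerivAt_right (hci.intervalIntegrable _ _)
      (hci.stronglyMeasurable.stronglyMeasurableAtFilter) hci.continuousAt
  have key : ∀ s ∈ Set.Ico (0:ℝ) t, HasDerivWithinAt (fun u => F (f u) - u) 0 (Set.Ici s) s := by
    intro s hs
    have h1 : HasDerivAt (fun u => F (f u)) ((ψ (f s))⁻¹ * deriv f s) s :=
      HasDerivAt.comp s (hFd (f s)) (hf s).hasDerivAt
    have h2 : (ψ (f s))⁻¹ * deriv f s = 1 := by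
      rw [hode s hs.1]
      field_simp [(hpos (f s)).ne']
    have h3 : HasDerivAt (fun u => F (f u) - u) ((ψ (f s))⁻¹ * deriv f s - 1) s :=
      h1.sub (hasDerivAt_id s)
    rw [h2] at h3
    simpa using h3.hasDerivWithinAt
  have hcont : ContinuousOn (fun u => F (f u) - u) (Set.Icc 0 t) := by
    intro s _
    exact (((hFd (f s)).comp s (hf s).hasDerivAt).sub (hasDerivAt_id s)).continuousAt.continuousWithinAt
  have := constant_of_has_deriv_right_zero hcont key t (Set.right_mem_Icc.mpr ht)
  simp only [h0] at this
  have hF0 : F 0 = 0 := intervalIntegral.integral_same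
  rw [hF0] at this
  linarith [this]

lemma exp_div_pow_aux (n : ℕ) (b : ℝ) (hb : 0 ≤ b) :
    Real.exp b / (1+b)^n - 1 ≤ ∫ x in (0:ℝ)..b, Real.exp x / (1+x)^n := by
  set h : ℝ → ℝ := fun x => Real.exp x / (1+x)^n with hh_def
  set h' : ℝ → ℝ := fun x =>
    (Real.exp x * (1+x)^n - Real.exp x * (n * (1+x)^(n-1))) / ((1+x)^n)^2 with hh'_def
  have hd : ∀ x ∈ Set.uIcc (0:ℝ) b, HasDerivAt h (h' x) x := by
    intro x hx
    rw [Set.uIcc_of_le hb] at hx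
    have hx1 : (0:ℝ) < 1 + x := by linarith [hx.1]
    have hd1 : HasDerivAt (fun x : ℝ => (1+x)^n) (n * (1+x)^(n-1)) x := by
      have := (hasDerivAt_pow n (1+x)).comp x ((hasDerivAt_id x).const_add 1)
      simpa [Function.comp_def] using this
    exact (Real.hasDerivAt_exp x).div hd1 (pow_ne_zero _ hx1.ne')
  have hcont : ContinuousOn h' (Set.uIcc (0:ℝ) b) := by
    apply ContinuousOn.div
    · fun_prop
    · fun_prop
    · intro x hx
      rw [Set.uIcc_of_le hb] at hx
      have hx1 : (0:ℝ) < 1 + x := by linarith [hx.1]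
      positivity
  have hint : IntervalIntegrable h' volume 0 b := hcont.intervalIntegrable
  have heq : ∫ x in (0:ℝ)..b, h' x = h b - h 0 :=
    intervalIntegral.integral_eq_sub_of_hasDerivAt hd hint
  have hmono : ∫ x in (0:ℝ)..b, h' x ≤ ∫ x in (0:ℝ)..b, Real.exp x / (1+x)^n := by
    apply intervalIntegral.integral_mono_on hb hint
    · apply ContinuousOn.intervalIntegrable
      apply ContinuousOn.div
      · fun_prop
      · fun_prop
      · intro x hx
        rw [Set.uIcc_of_le hb] at hx
        have hx1 : (0:ℝ) < 1 + x := by linarith [hx.1]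
        positivity
    · intro x hx
      have hx1 : (0:ℝ) < 1 + x := by linarith [hx.1]
      show (Real.exp x * (1+x)^n - Real.exp x * (n * (1+x)^(n-1))) / ((1+x)^n)^2
          ≤ Real.exp x / (1+x)^n
      have h2 : ((1+x)^n)^2 = (1+x)^n * (1+x)^n := sq _
      rw [h2]
      rw [div_le_div_iff₀ (by positivity) (by positivity)]
      have hnn : 0 ≤ Real.exp x * (n * (1+x)^(n-1)) := by positivity
      nlinarith [pow_pos hx1 n, Real.exp_pos x, mul_pos (pow_pos hx1 n) (pow_pos hx1 n)]
  have hval : h b - h 0 = Real.exp b / (1+b)^n - 1 := by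
    simp [hh_def]
  linarith [heq ▸ hmono, hval]

noncomputable def Spoly (Δ : ℕ) (r : ℕ → ℝ) (x : ℝ) : ℝ :=
  ∑ k ∈ Finset.Icc 2 (Δ-1), x^k/(Nat.factorial k : ℝ) * tailS Δ r (k+1)

lemma tailS_nonneg_s3 {Δ : ℕ} {r : ℕ → ℝ} (hr : memR Δ r) {k : ℕ} (hk : 3 ≤ k) :
    0 ≤ tailS Δ r k := by
  apply Finset.sum_nonneg
  intro d hd
  rw [Finset.mem_Icc] at hd
  exact hr.2.1 d (le_trans hk hd.1) hd.2

lemma tailS_le_one_s3 {Δ : ℕ} {r : ℕ → ℝ} (hr : memR Δ r) {k : ℕ} (hk : 3 ≤ k) :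
    tailS Δ r k ≤ 1 := by
  rw [← hr.2.2.2]
  apply Finset.sum_le_sum_of_subset_of_nonneg
  · apply Finset.Icc_subset_Icc_left hk
  · intro i hi _
    rw [Finset.mem_Icc] at hi
    exact hr.2.1 i hi.1 hi.2

lemma Spoly_nonneg {Δ : ℕ} {r : ℕ → ℝ} (hr : memR Δ r) {x : ℝ} (hx : 0 ≤ x) :
    0 ≤ Spoly Δ r x := by
  apply Finset.sum_nonneg
  intro k hk
  rw [Finset.mem_Icc] at hk
  have h1 : 0 ≤ tailS Δ r (k+1) := tailS_nonneg_s3 hr (by omega)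
  have h2 : (0:ℝ) ≤ x^k / (Nat.factorial k : ℝ) := by positivity
  exact mul_nonneg h2 h1

lemma Spoly_mono {Δ : ℕ} {r : ℕ → ℝ} (hr : memR Δ r) {x y : ℝ} (hx : 0 ≤ x) (hxy : x ≤ y) :
    Spoly Δ r x ≤ Spoly Δ r y := by
  apply Finset.sum_le_sum
  intro k hk
  rw [Finset.mem_Icc] at hk
  have h1 : 0 ≤ tailS Δ r (k+1) := tailS_nonneg_s3 hr (by omega)
  apply mul_le_mul_of_nonneg_right _ h1
  apply div_le_div_of_nonneg_right ?_ (by positivity)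
  exact pow_le_pow_left₀ hx hxy k

lemma Spoly_le {Δ : ℕ} {r : ℕ → ℝ} (hr : memR Δ r) {x : ℝ} (hx : 0 ≤ x) :
    Spoly Δ r x ≤ (Δ : ℝ) * (1+x)^Δ := by
  have h1 : Spoly Δ r x ≤ (Finset.Icc 2 (Δ-1)).card • ((1+x)^Δ) := by
    apply Finset.sum_le_card_nsmul
    intro k hk
    rw [Finset.mem_Icc] at hk
    have h2 : tailS Δ r (k+1) ≤ 1 := tailS_le_one_s3 hr (by omega)
    have h3 : 0 ≤ tailS Δ r (k+1) := tailS_nonneg_s3 hr (by omega)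
    have h4 : x^k/(Nat.factorial k : ℝ) * tailS Δ r (k+1) ≤ x^k := by
      have h5 : x^k/(Nat.factorial k : ℝ) ≤ x^k := by
        apply div_le_self (by positivity)
        exact_mod_cast Nat.one_le_iff_ne_zero.mpr (Nat.factorial_ne_zero k)
      calc x^k/(Nat.factorial k : ℝ) * tailS Δ r (k+1) ≤ x^k/(Nat.factorial k : ℝ) * 1 := by
            apply mul_le_mul_of_nonneg_left h2 (by positivity)
        _ = x^k/(Nat.factorial k : ℝ) := by ring
        _ ≤ x^k := h5
    calc x^k/(Nat.factorial k : ℝ) * tailS Δ r (k+1) ≤ x^k := h4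
      _ ≤ (1+x)^k := pow_le_pow_left₀ hx (by linarith) k
      _ ≤ (1+x)^Δ := pow_le_pow_right₀ (by linarith) (by omega)
  calc Spoly Δ r x ≤ (Finset.Icc 2 (Δ-1)).card • ((1+x)^Δ) := h1
    _ = ((Finset.Icc 2 (Δ-1)).card : ℝ) * (1+x)^Δ := by rw [nsmul_eq_mul]
    _ ≤ (Δ : ℝ) * (1+x)^Δ := by
        apply mul_le_mul_of_nonneg_right _ (by positivity)
        rw [Nat.card_Icc]
        have : (Δ - 1 + 1 - 2 : ℕ) ≤ Δ := by omega
        exact_mod_cast this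

lemma Spoly_cont (Δ : ℕ) (r : ℕ → ℝ) : Continuous (Spoly Δ r) := by
  apply continuous_finset_sum
  intro k _
  exact (((continuous_pow k).div_const _).mul continuous_const)

lemma Spoly_zero (Δ : ℕ) (r : ℕ → ℝ) : Spoly Δ r 0 = 0 := by
  apply Finset.sum_eq_zero
  intro k hk
  rw [Finset.mem_Icc] at hk
  rw [zero_pow (by omega)]
  ring

lemma Upsilon_ge {Δ : ℕ} {r : ℕ → ℝ} (hr : memR Δ r) : 3 ≤ Upsilon Δ r := by
  have h1 : ∀ k ∈ Finset.Icc 3 Δ, 3 * r k ≤ (k : ℝ) * ((k:ℝ) - 2) * r k := by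
    intro k hk
    rw [Finset.mem_Icc] at hk
    have hrk : 0 ≤ r k := hr.2.1 k hk.1 hk.2
    have hk3 : (3:ℝ) ≤ (k:ℝ) := by exact_mod_cast hk.1
    have h5 : (3:ℝ) ≤ (k:ℝ) * ((k:ℝ) - 2) := by nlinarith
    exact mul_le_mul_of_nonneg_right h5 hrk
  calc (3:ℝ) = 3 * ∑ k ∈ Finset.Icc 3 Δ, r k := by rw [hr.2.2.2]; ring
    _ = ∑ k ∈ Finset.Icc 3 Δ, 3 * r k := by rw [Finset.mul_sum]
    _ ≤ Upsilon Δ r := Finset.sum_le_sum h1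

set_option maxHeartbeats 1000000 in
/-- Squeeze for `λ_p`: for small `ε`, on `[0, 2/(ε Υ_r)]` one has
`λ + (1-δ) ε Λ_r ≤ λ_p ≤ λ + (1+δ) ε Λ_r`. -/
theorem lambda_p_squeeze (Δ : ℕ) (hΔ : 3 ≤ Δ) (lam : ℝ → ℝ)
    (hdiff : Differentiable ℝ lam) (h0 : lam 0 = 0)
    (hode : ∀ t : ℝ, 0 ≤ t → deriv lam t = Real.exp (-lam t) * (1 + lam t)) :
    ∀ δ : ℝ, 0 < δ → δ < 1 → ∃ ε₀ : ℝ, 0 < ε₀ ∧ ε₀ < 1 ∧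
      ∀ ε : ℝ, 0 < ε → ε < ε₀ → ∀ r : ℕ → ℝ, memR Δ r →
        ∀ lamp : ℝ → ℝ, Differentiable ℝ lamp → lamp 0 = 0 →
          (∀ t : ℝ, 0 ≤ t → deriv lamp t = Real.exp (-lamp t) *
            (1 + lamp t + ε * ∑ k ∈ Finset.Icc 2 (Δ - 1),
              lamp t ^ k / (Nat.factorial k : ℝ) * tailS Δ r (k + 1))) →
          ∀ t : ℝ, 0 ≤ t → t ≤ 2 / (ε * Upsilon Δ r) →
            lam t + (1 - δ) * ε * LamErr lam Δ r t ≤ lamp t ∧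
            lamp t ≤ lam t + (1 + δ) * ε * LamErr lam Δ r t := by
  intro δ hδ0 hδ1
  set N : ℕ := 3*Δ + 4 with hN_def
  set K : ℝ := 4*Δ*(2*N)^N with hK_def
  have hΔ1 : (1:ℝ) ≤ (Δ:ℝ) := by
    have : (1:ℕ) ≤ Δ := by omega
    exact_mod_cast this
  have hN1 : (1:ℝ) ≤ (N:ℝ) := by
    have : (1:ℕ) ≤ N := by omega
    exact_mod_cast this
  have hK1 : (1:ℝ) ≤ K := by
    rw [hK_def]
    have h1 : (1:ℝ) ≤ (2*(N:ℝ))^N := one_le_pow₀ (by linarith)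
    nlinarith
  have hKpos : (0:ℝ) < K := lt_of_lt_of_le one_pos hK1
  refine ⟨min (1/2) (δ^2/(256*Δ^2*K)), lt_min (by norm_num)
    (div_pos (by positivity) (mul_pos (by positivity) hKpos)),
    lt_of_le_of_lt (min_le_left _ _) (by norm_num), ?_⟩
  intro ε hε0 hεlt r hr lamp hdp h0p hodep t ht hT
  have hε1 : ε ≤ 1/2 := le_of_lt (lt_of_lt_of_le hεlt (min_le_left _ _))
  have hεK : ε ≤ δ^2/(256*Δ^2*K) := le_of_lt (lt_of_lt_of_le hεlt (min_le_right _ _))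
  set S : ℝ → ℝ := Spoly Δ r with hS_def
  have hScont : Continuous S := Spoly_cont Δ r
  -- nonnegativity of lam and lamp
  have hlamnn : ∀ u : ℝ, 0 ≤ u → 0 ≤ lam u := by
    apply nonneg_of_ode lam hdiff h0
    intro u hu hfu
    rw [hode u hu, hfu]
    norm_num
  have hlampnn : ∀ u : ℝ, 0 ≤ u → 0 ≤ lamp u := by
    apply nonneg_of_ode lamp hdp h0p
    intro u hu hfu
    rw [hodep u hu, hfu]
    have hz : (∑ k ∈ Finset.Icc 2 (Δ - 1),
        (0:ℝ) ^ k / (Nat.factorial k : ℝ) * tailS Δ r (k + 1)) = 0 := Spoly_zero Δ r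
    rw [hz]
    norm_num
  set a : ℝ := lam t with ha_def
  set b : ℝ := lamp t with hb_def
  have ha0 : 0 ≤ a := hlamnn t ht
  have hb0 : 0 ≤ b := hlampnn t ht
  -- inverse relations
  have hTa : ∫ x in (0:ℝ)..a, Real.exp x / (1+x) = t := by
    have hmain := integral_inv_comp (fun x => Real.exp (-x) * (1 + max x 0))
      ((Real.continuous_exp.comp continuous_neg).mul
        (continuous_const.add (continuous_id.max continuous_const)))
      (fun x => by positivity)
      lam hdiff h0
      (fun u hu => by
        rw [hode u hu]
        simp [max_eq_left (hlamnn u hu)]) t ht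
    rw [← hmain]
    apply intervalIntegral.integral_congr
    intro x hx
    rw [Set.uIcc_of_le ha0] at hx
    have hmx : max x 0 = x := max_eq_left hx.1
    have h1x : (0:ℝ) < 1 + x := by linarith [hx.1]
    simp only [hmx, Real.exp_neg]
    rw [mul_inv, inv_inv, div_eq_mul_inv]
  have hTb : ∫ x in (0:ℝ)..b, Real.exp x / (1+x+ε*S x) = t := by
    have hmain := integral_inv_comp (fun x => Real.exp (-x) * (1 + max x 0 + ε * S (max x 0)))
      ((Real.continuous_exp.comp continuous_neg).mul
        ((continuous_const.add (continuous_id.max continuous_const)).add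
          (continuous_const.mul (hScont.comp (continuous_id.max continuous_const)))))
      (fun x => by
        have hS0 : 0 ≤ S (max x 0) := Spoly_nonneg hr (le_max_right x 0)
        have : (0:ℝ) < 1 + max x 0 + ε * S (max x 0) := by
          have := le_max_right x 0
          nlinarith
        positivity)
      lamp hdp h0p
      (fun u hu => by
        rw [hodep u hu]
        simp only [max_eq_left (hlampnn u hu)]
        rfl) t ht
    rw [← hmain]
    apply intervalIntegral.integral_congr
    intro x hx
    rw [Set.uIcc_of_le hb0] at hx
    have hmx : max x 0 = x := max_eq_left hx.1
    have hS0 : 0 ≤ S x := Spoly_nonneg hr hx.1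
    simp only [hmx, Real.exp_neg]
    rw [mul_inv, inv_inv, div_eq_mul_inv]
  -- integrand functions
  set f1 : ℝ → ℝ := fun x => Real.exp x / (1+x) with hf1_def
  set f2 : ℝ → ℝ := fun x => Real.exp x / (1+x+ε*S x) with hf2_def
  set f3 : ℝ → ℝ := fun x => Real.exp x / (1+x)^2 * S x with hf3_def
  have hden2 : ∀ x : ℝ, 0 ≤ x → (0:ℝ) < 1+x+ε*S x := by
    intro x hx
    have hS0 : 0 ≤ S x := Spoly_nonneg hr hx
    nlinarith
  have hsub : ∀ u v : ℝ, 0 ≤ u → 0 ≤ v → Set.uIcc u v ⊆ Set.Ici (0:ℝ) := by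
    intro u v hu hv x hx
    rw [Set.mem_uIcc] at hx
    rcases hx with h | h
    · exact le_trans hu h.1
    · exact le_trans hv h.1
  have hc1 : ContinuousOn f1 (Set.Ici 0) := by
    apply ContinuousOn.div Real.continuous_exp.continuousOn (by fun_prop)
    intro x hx
    have : (0:ℝ) ≤ x := hx
    positivity
  have hc2 : ContinuousOn f2 (Set.Ici 0) := by
    apply ContinuousOn.div Real.continuous_exp.continuousOn (by fun_prop)
    intro x hx
    exact (hden2 x hx).ne'
  have hc3 : ContinuousOn f3 (Set.Ici 0) := by
    apply ContinuousOn.mul _ hScont.continuousOn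
    apply ContinuousOn.div Real.continuous_exp.continuousOn (by fun_prop)
    intro x hx
    have : (0:ℝ) ≤ x := hx
    positivity
  have int1 : ∀ u v : ℝ, 0 ≤ u → 0 ≤ v → IntervalIntegrable f1 volume u v :=
    fun u v hu hv => (hc1.mono (hsub u v hu hv)).intervalIntegrable
  have int2 : ∀ u v : ℝ, 0 ≤ u → 0 ≤ v → IntervalIntegrable f2 volume u v :=
    fun u v hu hv => (hc2.mono (hsub u v hu hv)).intervalIntegrable
  have int3 : ∀ u v : ℝ, 0 ≤ u → 0 ≤ v → IntervalIntegrable f3 volume u v :=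
    fun u v hu hv => (hc3.mono (hsub u v hu hv)).intervalIntegrable
  have hpt21 : ∀ x : ℝ, 0 ≤ x → f2 x ≤ f1 x := by
    intro x hx
    simp only [hf1_def, hf2_def]
    have hS0 : 0 ≤ S x := Spoly_nonneg hr hx
    apply div_le_div_of_nonneg_left (Real.exp_pos x).le (by linarith) (by nlinarith)
  -- a ≤ b
  have hab : a ≤ b := by
    by_contra hba
    push_neg at hba
    have h1 : ∫ x in (0:ℝ)..b, f2 x ≤ ∫ x in (0:ℝ)..b, f1 x := by
      apply intervalIntegral.integral_mono_on hb0 (int2 0 b le_rfl hb0) (int1 0 b le_rfl hb0)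
      intro x hx
      exact hpt21 x hx.1
    have h2 : 0 < ∫ x in b..a, f1 x := by
      have hconst : ∫ x in b..a, (Real.exp 0 / (1+a)) = (a - b) * (Real.exp 0 / (1+a)) := by
        rw [intervalIntegral.integral_const, smul_eq_mul]
      have hmono : ∫ x in b..a, (Real.exp 0 / (1+a)) ≤ ∫ x in b..a, f1 x := by
        apply intervalIntegral.integral_mono_on hba.le intervalIntegrable_const
          (int1 b a hb0 ha0)
        intro x hx
        have hx0 : 0 ≤ x := le_trans hb0 hx.1
        have h1x : (0:ℝ) < 1 + x := by linarith
        have he : Real.exp 0 ≤ Real.exp x := Real.exp_le_exp.mpr hx0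
        have hxa : (1:ℝ) + x ≤ 1 + a := by linarith [hx.2]
        simp only [hf1_def]
        exact div_le_div₀ (Real.exp_pos x).le he h1x hxa
      have hpos : 0 < (a - b) * (Real.exp 0 / (1+a)) := by
        have h5 : (0:ℝ) < Real.exp 0 / (1+a) := by positivity
        exact mul_pos (sub_pos.mpr hba) h5
      linarith
    have h3 : (∫ x in (0:ℝ)..b, f1 x) + ∫ x in b..a, f1 x = ∫ x in (0:ℝ)..a, f1 x :=
      intervalIntegral.integral_add_adjacent_intervals (int1 0 b le_rfl hb0) (int1 b a hb0 ha0)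
    have hTa' : ∫ x in (0:ℝ)..a, f1 x = t := hTa
    have hTb' : ∫ x in (0:ℝ)..b, f2 x = t := hTb
    linarith
  set D : ℝ := b - a with hD_def
  have hD0 : 0 ≤ D := by simp [hD_def]; linarith
  set L : ℝ := 1 + b with hL_def
  have hL1 : (1:ℝ) ≤ L := by simp [hL_def]; linarith
  have hLpos : (0:ℝ) < L := by linarith
  -- key identity
  set Dif : ℝ := ∫ x in (0:ℝ)..b, (f1 x - f2 x) with hDif_def
  have hsubint : Dif = (∫ x in (0:ℝ)..b, f1 x) - ∫ x in (0:ℝ)..b, f2 x :=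
    intervalIntegral.integral_sub (int1 0 b le_rfl hb0) (int2 0 b le_rfl hb0)
  have hadj : (∫ x in (0:ℝ)..a, f1 x) + ∫ x in a..b, f1 x = ∫ x in (0:ℝ)..b, f1 x :=
    intervalIntegral.integral_add_adjacent_intervals (int1 0 a le_rfl ha0) (int1 a b ha0 hb0)
  have hkey : ∫ x in a..b, f1 x = Dif := by
    have hTa' : ∫ x in (0:ℝ)..a, f1 x = t := hTa
    have hTb' : ∫ x in (0:ℝ)..b, f2 x = t := hTb
    rw [hsubint]
    linarith
  set G : ℝ := ∫ x in (0:ℝ)..a, f3 x with hG_def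
  set Gb : ℝ := ∫ x in (0:ℝ)..b, f3 x with hGb_def
  have hf3nn : ∀ x : ℝ, 0 ≤ x → 0 ≤ f3 x := by
    intro x hx
    have hS0 : 0 ≤ S x := Spoly_nonneg hr hx
    have : (0:ℝ) < 1 + x := by linarith
    positivity
  have hG0 : 0 ≤ G := intervalIntegral.integral_nonneg ha0 (fun x hx => hf3nn x hx.1)
  have hGb0 : 0 ≤ Gb := intervalIntegral.integral_nonneg hb0 (fun x hx => hf3nn x hx.1)
  have hGadj : G + (∫ x in a..b, f3 x) = Gb :=
    intervalIntegral.integral_add_adjacent_intervals (int3 0 a le_rfl ha0) (int3 a b ha0 hb0)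
  have hGGb : G ≤ Gb := by
    have : 0 ≤ ∫ x in a..b, f3 x :=
      intervalIntegral.integral_nonneg hab (fun x hx => hf3nn x (le_trans ha0 hx.1))
    linarith
  have hpt1 : ∀ x : ℝ, 0 ≤ x →
      f1 x - f2 x = ε * S x * Real.exp x / ((1+x) * (1+x+ε*S x)) := by
    intro x hx
    have h1 : (0:ℝ) < 1 + x := by linarith
    have h2 := hden2 x hx
    simp only [hf1_def, hf2_def]
    rw [div_sub_div _ _ h1.ne' h2.ne']
    congr 1
    ring
  -- h1 : Dif ≤ ε * Gb
  have hup1 : Dif ≤ ε * Gb := by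
    have hmono : Dif ≤ ∫ x in (0:ℝ)..b, ε * f3 x := by
      apply intervalIntegral.integral_mono_on hb0
        ((int1 0 b le_rfl hb0).sub (int2 0 b le_rfl hb0))
        ((int3 0 b le_rfl hb0).const_mul ε)
      intro x hx
      rw [hpt1 x hx.1]
      have h1 : (0:ℝ) < 1 + x := by linarith [hx.1]
      have h2 := hden2 x hx.1
      have hS0 : 0 ≤ S x := Spoly_nonneg hr hx.1
      have heq : ε * f3 x = ε * S x * Real.exp x / ((1+x) * (1+x)) := by
        simp only [hf3_def]
        rw [show ((1:ℝ)+x)*(1+x) = (1+x)^2 by ring]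
        ring
      rw [heq]
      have hden_le : (1+x)*(1+x) ≤ (1+x)*(1+x+ε*S x) := by
        have h3 : (0:ℝ) ≤ ε * S x := mul_nonneg hε0.le hS0
        clear * - h1 h3
        try clear_value η
        try clear_value Dif
        try clear_value G
        try clear_value Gb
        try clear_value I
        try clear_value D
        try clear_value L
        try clear_value S
        try clear_value f1
        try clear_value f2
        try clear_value f3
        try clear_value a
        try clear_value b
        try clear_value N
        try clear_value K
        nlinarith
      exact div_le_div_of_nonneg_left (by positivity) (by positivity) hden_le
    rwa [intervalIntegral.integral_const_mul] at hmono
  -- h2 : lower bound on Dif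
  have hSa0 : 0 ≤ S a := Spoly_nonneg hr ha0
  have hlo1 : ε / (1 + ε * S a) * G ≤ Dif := by
    have hsplit : (∫ x in (0:ℝ)..a, (f1 x - f2 x)) + (∫ x in a..b, (f1 x - f2 x)) = Dif :=
      intervalIntegral.integral_add_adjacent_intervals
        ((int1 0 a le_rfl ha0).sub (int2 0 a le_rfl ha0))
        ((int1 a b ha0 hb0).sub (int2 a b ha0 hb0))
    have hnn : 0 ≤ ∫ x in a..b, (f1 x - f2 x) := by
      apply intervalIntegral.integral_nonneg hab
      intro x hx
      have := hpt21 x (le_trans ha0 hx.1)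
      linarith
    have hmono : ∫ x in (0:ℝ)..a, (ε / (1 + ε * S a)) * f3 x
        ≤ ∫ x in (0:ℝ)..a, (f1 x - f2 x) := by
      apply intervalIntegral.integral_mono_on ha0
        ((int3 0 a le_rfl ha0).const_mul _)
        ((int1 0 a le_rfl ha0).sub (int2 0 a le_rfl ha0))
      intro x hx
      rw [hpt1 x hx.1]
      have h1 : (0:ℝ) < 1 + x := by linarith [hx.1]
      have h2 := hden2 x hx.1
      have hS0 : 0 ≤ S x := Spoly_nonneg hr hx.1
      have hSxa : S x ≤ S a := Spoly_mono hr hx.1 hx.2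
      have h3 : (0:ℝ) < 1 + ε * S a := by
        have h4 : (0:ℝ) ≤ ε * S a := mul_nonneg hε0.le hSa0
        linarith
      have heq : (ε / (1 + ε * S a)) * f3 x
          = ε * S x * Real.exp x / ((1+x)^2 * (1 + ε * S a)) := by
        simp only [hf3_def]
        have h1x2 : ((1:ℝ)+x)^2 ≠ 0 := by positivity
        clear * - h1x2 h3
        try clear_value η
        try clear_value Dif
        try clear_value G
        try clear_value Gb
        try clear_value I
        try clear_value D
        try clear_value L
        try clear_value S
        try clear_value f1
        try clear_value f2
        try clear_value f3
        try clear_value a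
        try clear_value b
        try clear_value N
        try clear_value K
        field_simp
      rw [heq]
      apply div_le_div_of_nonneg_left (by positivity) (by positivity) ?_
      have h4 : 1+x+ε*S x ≤ (1+x)*(1+ε*S a) := by
        have h5 : ε * S x ≤ ε * S a := mul_le_mul_of_nonneg_left hSxa hε0.le
        have h6 : (0:ℝ) ≤ ε * S a := mul_nonneg hε0.le hSa0
        have hx0 : (0:ℝ) ≤ x := hx.1
        clear * - h1 h5 h6 hx0
        try clear_value η
        try clear_value Dif
        try clear_value G
        try clear_value Gb
        try clear_value I
        try clear_value D
        try clear_value L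
        try clear_value S
        try clear_value f1
        try clear_value f2
        try clear_value f3
        try clear_value a
        try clear_value b
        try clear_value N
        try clear_value K
        nlinarith [mul_nonneg hx0 h6]
      calc (1+x)*(1+x+ε*S x) ≤ (1+x)*((1+x)*(1+ε*S a)) :=
            mul_le_mul_of_nonneg_left h4 h1.le
        _ = (1+x)^2*(1+ε*S a) := by ring
    rw [intervalIntegral.integral_const_mul] at hmono
    linarith
  -- pointwise bound for f3
  have hSle : ∀ x : ℝ, 0 ≤ x → S x ≤ (Δ:ℝ) * (1+x)^Δ := fun x hx => Spoly_le hr hx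
  have hf3bd : ∀ x : ℝ, 0 ≤ x → x ≤ b → f3 x ≤ Real.exp b * ((Δ:ℝ) * L^Δ) := by
    intro x hx0 hxb
    have hS0 : 0 ≤ S x := Spoly_nonneg hr hx0
    have h1 : (0:ℝ) < 1 + x := by linarith
    have hpm : (1+x)^Δ ≤ L^Δ := pow_le_pow_left₀ (by linarith) (by rw [hL_def]; linarith) Δ
    have h2 : f3 x ≤ Real.exp x * S x := by
      simp only [hf3_def]
      rw [div_mul_eq_mul_div, div_le_iff₀ (by positivity)]
      have h3 : (1:ℝ) ≤ (1+x)^2 := by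
        clear * - h1 hx0
        try clear_value η
        try clear_value Dif
        try clear_value G
        try clear_value Gb
        try clear_value I
        try clear_value D
        try clear_value L
        try clear_value S
        try clear_value f1
        try clear_value f2
        try clear_value f3
        try clear_value a
        try clear_value b
        try clear_value N
        try clear_value K
        nlinarith
      have h4 : (0:ℝ) ≤ Real.exp x * S x := mul_nonneg (Real.exp_pos x).le hS0
      clear * - h3 h4
      try clear_value η
      try clear_value Dif
      try clear_value G
      try clear_value Gb
      try clear_value I
      try clear_value D
      try clear_value L
      try clear_value S
      try clear_value f1
      try clear_value f2
      try clear_value f3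
      try clear_value a
      try clear_value b
      try clear_value N
      try clear_value K
      nlinarith
    have h5 : S x ≤ (Δ:ℝ) * L^Δ := by
      have h6 := hSle x hx0
      have h7 : (Δ:ℝ) * (1+x)^Δ ≤ (Δ:ℝ) * L^Δ :=
        mul_le_mul_of_nonneg_left hpm (by positivity)
      linarith
    calc f3 x ≤ Real.exp x * S x := h2
      _ ≤ Real.exp b * ((Δ:ℝ) * L^Δ) :=
          mul_le_mul (Real.exp_le_exp.mpr hxb) h5 hS0 (Real.exp_pos b).le
  -- h3 : Gb - G ≤ D * (exp b * (Δ * L^Δ))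
  have hGbG_diff : Gb - G ≤ D * (Real.exp b * ((Δ:ℝ) * L^Δ)) := by
    have hmono : ∫ x in a..b, f3 x ≤ ∫ x in a..b, (Real.exp b * ((Δ:ℝ) * L^Δ)) := by
      apply intervalIntegral.integral_mono_on hab (int3 a b ha0 hb0) intervalIntegrable_const
      intro x hx
      exact hf3bd x (le_trans ha0 hx.1) hx.2
    rw [intervalIntegral.integral_const, smul_eq_mul] at hmono
    have h8 : Gb - G = ∫ x in a..b, f3 x := by linarith [hGadj]
    rw [h8]
    calc (∫ x in a..b, f3 x) ≤ (b - a) * (Real.exp b * ((Δ:ℝ) * L^Δ)) := hmono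
      _ = D * (Real.exp b * ((Δ:ℝ) * L^Δ)) := by rw [hD_def]
  -- h4 : Gb ≤ Δ * exp b * L^(Δ+1)
  have hGb_up : Gb ≤ (Δ:ℝ) * Real.exp b * L^(Δ+1) := by
    have hmono : Gb ≤ ∫ x in (0:ℝ)..b, (Real.exp b * ((Δ:ℝ) * L^Δ)) := by
      apply intervalIntegral.integral_mono_on hb0 (int3 0 b le_rfl hb0) intervalIntegrable_const
      intro x hx
      exact hf3bd x hx.1 hx.2
    rw [intervalIntegral.integral_const, smul_eq_mul] at hmono
    have hbL : b ≤ L := by rw [hL_def]; linarith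
    have h9 : (0:ℝ) ≤ Real.exp b * ((Δ:ℝ) * L^Δ) := by positivity
    calc Gb ≤ (b - 0) * (Real.exp b * ((Δ:ℝ) * L^Δ)) := hmono
      _ ≤ L * (Real.exp b * ((Δ:ℝ) * L^Δ)) := by
          apply mul_le_mul_of_nonneg_right (by linarith) h9
      _ = (Δ:ℝ) * Real.exp b * L^(Δ+1) := by rw [pow_succ]; ring
  -- h6 : D * exp a ≤ Dif * L
  have hM1 : D * Real.exp a ≤ Dif * L := by
    have hmono : ∫ x in a..b, (Real.exp a / L) ≤ ∫ x in a..b, f1 x := by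
      apply intervalIntegral.integral_mono_on hab intervalIntegrable_const (int1 a b ha0 hb0)
      intro x hx
      have hx0 : 0 ≤ x := le_trans ha0 hx.1
      have h1x : (0:ℝ) < 1 + x := by linarith
      have he : Real.exp a ≤ Real.exp x := Real.exp_le_exp.mpr hx.1
      have hxL : (1:ℝ) + x ≤ L := by rw [hL_def]; linarith [hx.2]
      simp only [hf1_def]
      exact div_le_div₀ (Real.exp_pos x).le he h1x hxL
    rw [intervalIntegral.integral_const, smul_eq_mul, hkey] at hmono
    have heq : D * Real.exp a = ((b - a) * (Real.exp a / L)) * L := by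
      rw [hD_def]
      field_simp
    rw [heq]
    exact mul_le_mul_of_nonneg_right hmono hLpos.le
  -- h7 : Dif * (1+a) ≤ D * exp b
  have hM2 : Dif * (1+a) ≤ D * Real.exp b := by
    have h1a : (0:ℝ) < 1 + a := by linarith
    have hmono : ∫ x in a..b, f1 x ≤ ∫ x in a..b, (Real.exp b / (1+a)) := by
      apply intervalIntegral.integral_mono_on hab (int1 a b ha0 hb0) intervalIntegrable_const
      intro x hx
      have hx0 : 0 ≤ x := le_trans ha0 hx.1
      have he : Real.exp x ≤ Real.exp b := Real.exp_le_exp.mpr hx.2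
      have hax : (1:ℝ) + a ≤ 1 + x := by linarith [hx.1]
      simp only [hf1_def]
      exact div_le_div₀ (Real.exp_pos b).le he h1a hax
    rw [intervalIntegral.integral_const, smul_eq_mul, hkey] at hmono
    calc Dif * (1+a) ≤ ((b-a) * (Real.exp b / (1+a))) * (1+a) :=
          mul_le_mul_of_nonneg_right hmono h1a.le
      _ = D * Real.exp b := by
          rw [hD_def]
          field_simp
  -- h8 : exp b - exp a ≤ Dif * L
  have hM3 : Real.exp b - Real.exp a ≤ Dif * L := by
    have hmono : ∫ x in a..b, (Real.exp x / L) ≤ ∫ x in a..b, f1 x := by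
      apply intervalIntegral.integral_mono_on hab
        ((Real.continuous_exp.intervalIntegrable a b).div_const L) (int1 a b ha0 hb0)
      intro x hx
      have hx0 : 0 ≤ x := le_trans ha0 hx.1
      have h1x : (0:ℝ) < 1 + x := by linarith
      have hxL : (1:ℝ) + x ≤ L := by rw [hL_def]; linarith [hx.2]
      simp only [hf1_def]
      exact div_le_div_of_nonneg_left (Real.exp_pos x).le h1x hxL
    rw [intervalIntegral.integral_div, integral_exp, hkey] at hmono
    rw [div_le_iff₀ hLpos] at hmono
    exact hmono
  -- size bound B1 : exp b ≤ (3Δ/ε) L^Δ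
  have hΥ : (3:ℝ) ≤ Upsilon Δ r := Upsilon_ge hr
  have ht23 : t ≤ 2 / (3*ε) := by
    apply le_trans hT
    apply div_le_div_of_nonneg_left (by norm_num) (by positivity)
    have h1 : ε * 3 ≤ ε * Upsilon Δ r := mul_le_mul_of_nonneg_left hΥ hε0.le
    linarith
  have hB1 : Real.exp b ≤ 3*(Δ:ℝ)/ε * L^Δ := by
    have hmono : ∫ x in (0:ℝ)..b, (Real.exp x / (2*(Δ:ℝ)*(1+x)^Δ)) ≤ ∫ x in (0:ℝ)..b, f2 x := by
      apply intervalIntegral.integral_mono_on hb0 ?_ (int2 0 b le_rfl hb0)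
      · intro x hx
        have hx0 : 0 ≤ x := hx.1
        have hS0 : 0 ≤ S x := Spoly_nonneg hr hx0
        have h1x : (0:ℝ) < 1 + x := by linarith
        have hden : 1+x+ε*S x ≤ 2*(Δ:ℝ)*(1+x)^Δ := by
          have h1 : 1+x ≤ (1+x)^Δ := le_self_pow₀ (by linarith) (by omega)
          have h2 : S x ≤ (Δ:ℝ)*(1+x)^Δ := hSle x hx0
          have h3 : ε*S x ≤ S x := by
            have h5 : ε * S x ≤ 1 * S x := mul_le_mul_of_nonneg_right (by linarith) hS0
            linarith
          have h4 : (0:ℝ) < (1+x)^Δ := pow_pos h1x Δ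
          have h6 : (1:ℝ) ≤ (Δ:ℝ) := hΔ1
          clear * - h1 h2 h3 h4 h6
          try clear_value η
          try clear_value Dif
          try clear_value G
          try clear_value Gb
          try clear_value I
          try clear_value D
          try clear_value L
          try clear_value S
          try clear_value f1
          try clear_value f2
          try clear_value f3
          try clear_value a
          try clear_value b
          try clear_value N
          try clear_value K
          nlinarith
        have h7 := hden2 x hx0
        simp only [hf2_def]
        exact div_le_div_of_nonneg_left (Real.exp_pos x).le h7 hden
      · apply ContinuousOn.intervalIntegrable
        apply ContinuousOn.div Real.continuous_exp.continuousOn (by fun_prop)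
        intro x hx
        have hx0 : (0:ℝ) ≤ x := (hsub 0 b le_rfl hb0) hx
        have h1x : (0:ℝ) < 1 + x := by linarith
        positivity
    have hcongr : ∫ x in (0:ℝ)..b, (Real.exp x / (2*(Δ:ℝ)*(1+x)^Δ))
        = (1/(2*(Δ:ℝ))) * ∫ x in (0:ℝ)..b, (Real.exp x / (1+x)^Δ) := by
      rw [← intervalIntegral.integral_const_mul]
      apply intervalIntegral.integral_congr
      intro x hx
      have hx0 : (0:ℝ) ≤ x := (hsub 0 b le_rfl hb0) hx
      have h1x : (0:ℝ) < 1 + x := by linarith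
      have hΔ0 : (0:ℝ) < (Δ:ℝ) := by linarith
      clear * - h1x hΔ0
      try clear_value η
      try clear_value Dif
      try clear_value G
      try clear_value Gb
      try clear_value I
      try clear_value D
      try clear_value L
      try clear_value S
      try clear_value f1
      try clear_value f2
      try clear_value f3
      try clear_value a
      try clear_value b
      try clear_value N
      try clear_value K
      field_simp
    have hftc := exp_div_pow_aux Δ b hb0
    have hTb' : ∫ x in (0:ℝ)..b, f2 x = t := hTb
    have hstep : Real.exp b / L^Δ - 1 ≤ 2*(Δ:ℝ)*t := by
      have h2Δ : (0:ℝ) < 2*(Δ:ℝ) := by linarith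
      have hmm := hmono
      rw [hcongr, hTb'] at hmm
      have hL_eq : (1:ℝ)+b = L := rfl
      rw [hL_eq] at hftc
      set I : ℝ := ∫ x in (0:ℝ)..b, (Real.exp x / (1+x)^Δ) with hI_def
      clear * - h2Δ hmm hftc
      try clear_value η
      try clear_value Dif
      try clear_value G
      try clear_value Gb
      try clear_value I
      try clear_value D
      try clear_value L
      try clear_value S
      try clear_value f1
      try clear_value f2
      try clear_value f3
      try clear_value a
      try clear_value b
      try clear_value N
      try clear_value K
      have h1 : I ≤ 2*(Δ:ℝ)*t := by
        have h2 := mul_le_mul_of_nonneg_left hmm h2Δ.le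
        have h3 : 2*(Δ:ℝ) * (1/(2*(Δ:ℝ)) * I) = I := by
          field_simp [show (Δ:ℝ) ≠ 0 by linarith]
        linarith [h3 ▸ h2]
      linarith
    have hLΔpos : (0:ℝ) < L^Δ := by positivity
    have hLΔ1 : (1:ℝ) ≤ L^Δ := one_le_pow₀ hL1
    have hfinal : Real.exp b / L^Δ ≤ 3*(Δ:ℝ)/ε := by
      have h1 : Real.exp b / L^Δ ≤ 1 + 2*(Δ:ℝ)*t := by linarith
      have h2 : 2*(Δ:ℝ)*t ≤ 2*(Δ:ℝ)*(2/(3*ε)) := by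
        apply mul_le_mul_of_nonneg_left ht23 (by linarith)
      have h3 : (1:ℝ) ≤ (Δ:ℝ)/ε := by
        rw [le_div_iff₀ hε0]
        linarith
      have h4 : 2*(Δ:ℝ)*(2/(3*ε)) = (4/3)*((Δ:ℝ)/ε) := by
        clear * - hε0
        try clear_value η
        try clear_value Dif
        try clear_value G
        try clear_value Gb
        try clear_value I
        try clear_value D
        try clear_value L
        try clear_value S
        try clear_value f1
        try clear_value f2
        try clear_value f3
        try clear_value a
        try clear_value b
        try clear_value N
        try clear_value K
        field_simp
        ring
      have h6 : (3:ℝ)*(Δ:ℝ)/ε = 3*((Δ:ℝ)/ε) := by ring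
      clear * - h1 h2 h3 h4 h6
      try clear_value η
      try clear_value Dif
      try clear_value G
      try clear_value Gb
      try clear_value I
      try clear_value D
      try clear_value L
      try clear_value S
      try clear_value f1
      try clear_value f2
      try clear_value f3
      try clear_value a
      try clear_value b
      try clear_value N
      try clear_value K
      calc Real.exp b / L^Δ ≤ 1 + (4/3)*((Δ:ℝ)/ε) := by rw [← h4]; linarith
        _ ≤ ((Δ:ℝ)/ε) + (4/3)*((Δ:ℝ)/ε) := by linarith
        _ ≤ 3*(Δ:ℝ)/ε := by rw [h6]; linarith
    rw [div_le_iff₀ hLΔpos] at hfinal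
    exact hfinal
  -- size bound B2 : η ≤ δ/16 where η = Δ ε L^(Δ+2)
  set η : ℝ := (Δ:ℝ) * ε * L^(Δ+2) with hη_def
  have hη0 : 0 ≤ η := by positivity
  have hB2 : η ≤ δ/16 := by
    have hNpos : (0:ℝ) < (N:ℝ) := by linarith
    have hbN : b^N ≤ (N:ℝ)^N * Real.exp b := by
      have h1 : b/(N:ℝ) ≤ Real.exp (b/(N:ℝ)) := by
        have := Real.add_one_le_exp (b/(N:ℝ))
        linarith
      have h2 : (b/(N:ℝ))^N ≤ (Real.exp (b/(N:ℝ)))^N :=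
        pow_le_pow_left₀ (by positivity) h1 N
      rw [← Real.exp_nat_mul] at h2
      have h3 : (N:ℝ) * (b/(N:ℝ)) = b := by
        clear * - hNpos
        try clear_value η
        try clear_value Dif
        try clear_value G
        try clear_value Gb
        try clear_value I
        try clear_value D
        try clear_value L
        try clear_value S
        try clear_value f1
        try clear_value f2
        try clear_value f3
        try clear_value a
        try clear_value b
        try clear_value N
        try clear_value K
        field_simp
      rw [h3] at h2
      have h4 : (b/(N:ℝ))^N = b^N / (N:ℝ)^N := div_pow b _ N
      rw [h4, div_le_iff₀ (by positivity)] at h2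
      clear * - h2
      try clear_value η
      try clear_value Dif
      try clear_value G
      try clear_value Gb
      try clear_value I
      try clear_value D
      try clear_value L
      try clear_value S
      try clear_value f1
      try clear_value f2
      try clear_value f3
      try clear_value a
      try clear_value b
      try clear_value N
      try clear_value K
      linarith
    have hLN2 : L^N ≤ (2:ℝ)^N * (1 + b^N) := by
      by_cases hb1 : b ≤ 1
      · have h1 : L ≤ 2 := by rw [hL_def]; linarith
        have h2 : L^N ≤ 2^N := pow_le_pow_left₀ hLpos.le h1 N
        have h3 : (0:ℝ) ≤ b^N := by positivity
        have h4 : (0:ℝ) < (2:ℝ)^N := pow_pos (by norm_num) N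
        clear * - h2 h3 h4
        try clear_value η
        try clear_value Dif
        try clear_value G
        try clear_value Gb
        try clear_value I
        try clear_value D
        try clear_value L
        try clear_value S
        try clear_value f1
        try clear_value f2
        try clear_value f3
        try clear_value a
        try clear_value b
        try clear_value N
        try clear_value K
        nlinarith
      · push_neg at hb1
        have h1 : L ≤ 2*b := by rw [hL_def]; linarith
        have h2 : L^N ≤ (2*b)^N := pow_le_pow_left₀ hLpos.le h1 N
        have h3 : (2*b)^N = 2^N * b^N := mul_pow 2 b N
        have h4 : (0:ℝ) < (2:ℝ)^N := pow_pos (by norm_num) N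
        clear * - h2 h3 h4
        try clear_value η
        try clear_value Dif
        try clear_value G
        try clear_value Gb
        try clear_value I
        try clear_value D
        try clear_value L
        try clear_value S
        try clear_value f1
        try clear_value f2
        try clear_value f3
        try clear_value a
        try clear_value b
        try clear_value N
        try clear_value K
        nlinarith
    have hLΔ1 : (1:ℝ) ≤ L^Δ := one_le_pow₀ hL1
    have hLΔε : (1:ℝ) ≤ L^Δ/ε := by
      rw [le_div_iff₀ hε0]
      linarith
    have h2N : (0:ℝ) < 2*(N:ℝ) := by linarith
    have hcoef : (2:ℝ)^N ≤ (Δ:ℝ)*(2*(N:ℝ))^N := by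
      have h1 : (2:ℝ)^N ≤ (2*(N:ℝ))^N := pow_le_pow_left₀ (by norm_num) (by linarith) N
      have h2 : (0:ℝ) < (2*(N:ℝ))^N := pow_pos h2N N
      clear * - h1 h2 hΔ1
      try clear_value η
      try clear_value Dif
      try clear_value G
      try clear_value Gb
      try clear_value I
      try clear_value D
      try clear_value L
      try clear_value S
      try clear_value f1
      try clear_value f2
      try clear_value f3
      try clear_value a
      try clear_value b
      try clear_value N
      try clear_value K
      nlinarith
    have hNN : ((N:ℝ))^N * (2:ℝ)^N = (2*(N:ℝ))^N := by
      rw [← mul_pow]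
      ring_nf
    have hchain : L^N ≤ K * (L^Δ/ε) := by
      have hp2 : (0:ℝ) < (2:ℝ)^N := pow_pos (by norm_num) N
      have hpN : (0:ℝ) < ((N:ℝ))^N := pow_pos hNpos N
      have h1 : L^N ≤ 2^N + 2^N * ((N:ℝ)^N * Real.exp b) := by
        clear * - hLN2 hbN hp2
        try clear_value η
        try clear_value Dif
        try clear_value G
        try clear_value Gb
        try clear_value I
        try clear_value D
        try clear_value L
        try clear_value S
        try clear_value f1
        try clear_value f2
        try clear_value f3
        try clear_value a
        try clear_value b
        try clear_value N
        try clear_value K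
        nlinarith
      have h2 : Real.exp b ≤ 3*(Δ:ℝ)/ε * L^Δ := hB1
      have h4 : L^N ≤ 2^N + 2^N*(N:ℝ)^N * (3*(Δ:ℝ)/ε*L^Δ) := by
        have h9 : (0:ℝ) < (2:ℝ)^N * ((N:ℝ))^N := mul_pos hp2 hpN
        clear * - h1 h2 h9
        try clear_value η
        try clear_value Dif
        try clear_value G
        try clear_value Gb
        try clear_value I
        try clear_value D
        try clear_value L
        try clear_value S
        try clear_value f1
        try clear_value f2
        try clear_value f3
        try clear_value a
        try clear_value b
        try clear_value N
        try clear_value K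
        nlinarith
      have h5 : (2:ℝ)^N*(N:ℝ)^N * (3*(Δ:ℝ)/ε*L^Δ) = 3*(Δ:ℝ)*(2*(N:ℝ))^N * (L^Δ/ε) := by
        rw [← hNN]
        ring
      have h6 : (2:ℝ)^N ≤ (Δ:ℝ)*(2*(N:ℝ))^N * (L^Δ/ε) := by
        have h9 : (0:ℝ) < (Δ:ℝ)*(2*(N:ℝ))^N := mul_pos (by linarith) (pow_pos h2N N)
        clear * - hcoef hLΔε h9
        try clear_value η
        try clear_value Dif
        try clear_value G
        try clear_value Gb
        try clear_value I
        try clear_value D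
        try clear_value L
        try clear_value S
        try clear_value f1
        try clear_value f2
        try clear_value f3
        try clear_value a
        try clear_value b
        try clear_value N
        try clear_value K
        nlinarith
      have h7 : (Δ:ℝ)*(2*(N:ℝ))^N * (L^Δ/ε) + 3*(Δ:ℝ)*(2*(N:ℝ))^N * (L^Δ/ε) = K * (L^Δ/ε) := by
        rw [hK_def]
        push_cast
        ring
      clear * - h4 h5 h6 h7
      try clear_value η
      try clear_value Dif
      try clear_value G
      try clear_value Gb
      try clear_value I
      try clear_value D
      try clear_value L
      try clear_value S
      try clear_value f1
      try clear_value f2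
      try clear_value f3
      try clear_value a
      try clear_value b
      try clear_value N
      try clear_value K
      nlinarith
    have hLsplit : L^N = L^Δ * (L^(Δ+2))^2 := by
      rw [← pow_mul, ← pow_add]
      congr 1
      rw [hN_def]
      ring
    have hLpow : (L^(Δ+2))^2 ≤ K/ε := by
      rw [hLsplit] at hchain
      have hLΔpos : (0:ℝ) < L^Δ := by positivity
      have h8 : L^Δ * (L^(Δ+2))^2 ≤ L^Δ * (K/ε) := by
        calc L^Δ * (L^(Δ+2))^2 ≤ K * (L^Δ/ε) := hchain
          _ = L^Δ * (K/ε) := by ring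
      exact le_of_mul_le_mul_left h8 hLΔpos
    have hsq : η^2 ≤ (δ/16)^2 := by
      have h1 : η^2 = (Δ:ℝ)^2*ε^2*(L^(Δ+2))^2 := by rw [hη_def]; ring
      have h2 : (Δ:ℝ)^2*ε^2*(L^(Δ+2))^2 ≤ (Δ:ℝ)^2*ε^2*(K/ε) := by
        apply mul_le_mul_of_nonneg_left hLpow (by positivity)
      have h3 : (Δ:ℝ)^2*ε^2*(K/ε) = (Δ:ℝ)^2*K*ε := by
        clear * - hε0
        try clear_value η
        try clear_value Dif
        try clear_value G
        try clear_value Gb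
        try clear_value I
        try clear_value D
        try clear_value L
        try clear_value S
        try clear_value f1
        try clear_value f2
        try clear_value f3
        try clear_value a
        try clear_value b
        try clear_value N
        try clear_value K
        field_simp
      have h4 : (Δ:ℝ)^2*K*ε ≤ (Δ:ℝ)^2*K*(δ^2/(256*(Δ:ℝ)^2*K)) := by
        apply mul_le_mul_of_nonneg_left hεK (by positivity)
      have h5 : (Δ:ℝ)^2*K*(δ^2/(256*(Δ:ℝ)^2*K)) = δ^2/256 := by
        have hΔ0 : (Δ:ℝ) ≠ 0 := by linarith
        have hK0 : K ≠ 0 := by linarith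
        clear * - hΔ0 hK0
        try clear_value η
        try clear_value Dif
        try clear_value G
        try clear_value Gb
        try clear_value I
        try clear_value D
        try clear_value L
        try clear_value S
        try clear_value f1
        try clear_value f2
        try clear_value f3
        try clear_value a
        try clear_value b
        try clear_value N
        try clear_value K
        field_simp
      have h6 : (δ/16)^2 = δ^2/256 := by ring
      clear * - h1 h2 h3 h4 h5 h6
      try clear_value η
      try clear_value Dif
      try clear_value G
      try clear_value Gb
      try clear_value I
      try clear_value D
      try clear_value L
      try clear_value S
      try clear_value f1
      try clear_value f2
      try clear_value f3
      try clear_value a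
      try clear_value b
      try clear_value N
      try clear_value K
      nlinarith
    clear * - hsq hη0 hδ0
    try clear_value η
    try clear_value Dif
    try clear_value G
    try clear_value Gb
    try clear_value I
    try clear_value D
    try clear_value L
    try clear_value S
    try clear_value f1
    try clear_value f2
    try clear_value f3
    try clear_value a
    try clear_value b
    try clear_value N
    try clear_value K
    nlinarith
  have hηδ : η ≤ 1/16 := by linarith
  have hLΔ2 : L^Δ ≤ L^(Δ+2) := pow_le_pow_right₀ hL1 (by omega)
  have hLΔ1' : L^(Δ+1) ≤ L^(Δ+2) := pow_le_pow_right₀ hL1 (by omega)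
  -- crude bound : exp b - exp a ≤ η exp b  and D ≤ 2η
  have hcrude : Real.exp b - Real.exp a ≤ η * Real.exp b := by
    have h1 : Dif * L ≤ ε * Gb * L := mul_le_mul_of_nonneg_right hup1 hLpos.le
    have h2 : ε * Gb * L ≤ ε * ((Δ:ℝ) * Real.exp b * L^(Δ+1)) * L := by
      apply mul_le_mul_of_nonneg_right _ hLpos.le
      apply mul_le_mul_of_nonneg_left hGb_up hε0.le
    have h3 : ε * ((Δ:ℝ) * Real.exp b * L^(Δ+1)) * L = (Δ:ℝ)*ε*L^(Δ+2) * Real.exp b := by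
      rw [pow_succ]
      ring
    have h4 := hM3
    rw [hη_def]
    clear * - h1 h2 h3 h4
    try clear_value η
    try clear_value Dif
    try clear_value G
    try clear_value Gb
    try clear_value I
    try clear_value D
    try clear_value L
    try clear_value S
    try clear_value f1
    try clear_value f2
    try clear_value f3
    try clear_value a
    try clear_value b
    try clear_value N
    try clear_value K
    linarith [h3 ▸ le_trans h1 h2]
  have hexpb_pos : (0:ℝ) < Real.exp b := Real.exp_pos b
  have hea : (1 - η) * Real.exp b ≤ Real.exp a := by
    clear * - hcrude hexpb_pos
    try clear_value η
    try clear_value Dif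
    try clear_value G
    try clear_value Gb
    try clear_value I
    try clear_value D
    try clear_value L
    try clear_value S
    try clear_value f1
    try clear_value f2
    try clear_value f3
    try clear_value a
    try clear_value b
    try clear_value N
    try clear_value K
    nlinarith
  have heD : Real.exp D ≤ 1/(1-η) := by
    have h1 : Real.exp D = Real.exp b / Real.exp a := by
      rw [hD_def, Real.exp_sub]
    have hea_pos : (0:ℝ) < Real.exp a := Real.exp_pos a
    have h2 : (0:ℝ) < 1 - η := by linarith
    rw [h1, div_le_div_iff₀ hea_pos h2]
    clear * - hea hexpb_pos hηδ
    try clear_value η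
    try clear_value Dif
    try clear_value G
    try clear_value Gb
    try clear_value I
    try clear_value D
    try clear_value L
    try clear_value S
    try clear_value f1
    try clear_value f2
    try clear_value f3
    try clear_value a
    try clear_value b
    try clear_value N
    try clear_value K
    nlinarith
  have hD2η : D ≤ 2*η := by
    have h1 : D + 1 ≤ Real.exp D := Real.add_one_le_exp D
    have h2 : 1/(1-η) ≤ 1 + 2*η := by
      rw [div_le_iff₀ (by linarith : (0:ℝ) < 1 - η)]
      clear * - hη0 hηδ
      try clear_value η
      try clear_value Dif
      try clear_value G
      try clear_value Gb
      try clear_value I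
      try clear_value D
      try clear_value L
      try clear_value S
      try clear_value f1
      try clear_value f2
      try clear_value f3
      try clear_value a
      try clear_value b
      try clear_value N
      try clear_value K
      nlinarith
    linarith
  have hDδ8 : D ≤ δ/8 := by linarith
  have heD2 : Real.exp b / 2 ≤ Real.exp a := by
    clear * - hea hexpb_pos hηδ hη0
    try clear_value η
    try clear_value Dif
    try clear_value G
    try clear_value Gb
    try clear_value I
    try clear_value D
    try clear_value L
    try clear_value S
    try clear_value f1
    try clear_value f2
    try clear_value f3
    try clear_value a
    try clear_value b
    try clear_value N
    try clear_value K
    nlinarith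
  -- upper bound : D * exp a ≤ (1+δ) ε (1+a) G
  have hεGbL : D * Real.exp a ≤ ε * Gb * L :=
    le_trans hM1 (mul_le_mul_of_nonneg_right hup1 hLpos.le)
  have hGbG : Gb ≤ (1 + 4*η) * G := by
    have h4 : D * Real.exp b ≤ 2 * (ε * Gb * L) := by
      have h5 : (0:ℝ) ≤ ε * Gb * L := by positivity
      clear * - hεGbL heD2 hD0 h5
      try clear_value η
      try clear_value Dif
      try clear_value G
      try clear_value Gb
      try clear_value I
      try clear_value D
      try clear_value L
      try clear_value S
      try clear_value f1
      try clear_value f2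
      try clear_value f3
      try clear_value a
      try clear_value b
      try clear_value N
      try clear_value K
      nlinarith
    have h5 : Gb - G ≤ 2*(ε*Gb*L)*((Δ:ℝ)*L^Δ) := by
      have hnn : (0:ℝ) ≤ (Δ:ℝ)*L^Δ := by positivity
      have h6 := hGbG_diff
      clear * - h4 h6 hnn
      try clear_value η
      try clear_value Dif
      try clear_value G
      try clear_value Gb
      try clear_value I
      try clear_value D
      try clear_value L
      try clear_value S
      try clear_value f1
      try clear_value f2
      try clear_value f3
      try clear_value a
      try clear_value b
      try clear_value N
      try clear_value K
      nlinarith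
    have h6 : 2*(ε*Gb*L)*((Δ:ℝ)*L^Δ) ≤ 2*η*Gb := by
      have h7 : ε*L*((Δ:ℝ)*L^Δ) = (Δ:ℝ)*ε*L^(Δ+1) := by rw [pow_succ]; ring
      have h8 : (Δ:ℝ)*ε*L^(Δ+1) ≤ η := by
        rw [hη_def]
        apply mul_le_mul_of_nonneg_left hLΔ1' (by positivity)
      clear * - h7 h8 hGb0
      try clear_value η
      try clear_value Dif
      try clear_value G
      try clear_value Gb
      try clear_value I
      try clear_value D
      try clear_value L
      try clear_value S
      try clear_value f1
      try clear_value f2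
      try clear_value f3
      try clear_value a
      try clear_value b
      try clear_value N
      try clear_value K
      nlinarith
    have h9 : Gb - G ≤ 2*η*Gb := le_trans h5 h6
    have h10 : (0:ℝ) ≤ 1+4*η := by linarith
    have h11 := mul_le_mul_of_nonneg_left h9 h10
    have h12 : (0:ℝ) ≤ (η*(1-4*η))*Gb :=
      mul_nonneg (mul_nonneg hη0 (by linarith)) hGb0
    clear * - h11 h12
    try clear_value η
    try clear_value Dif
    try clear_value G
    try clear_value Gb
    try clear_value I
    try clear_value D
    try clear_value L
    try clear_value S
    try clear_value f1
    try clear_value f2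
    try clear_value f3
    try clear_value a
    try clear_value b
    try clear_value N
    try clear_value K
    nlinarith [h11, h12]
  have hupper : D * Real.exp a ≤ (1+δ) * ε * ((1+a) * G) := by
    have h2 : L ≤ (1+a)*(1+D) := by
      have hLD : L = 1 + a + D := by rw [hL_def, hD_def]; ring
      clear * - hLD ha0 hD0
      try clear_value η
      try clear_value Dif
      try clear_value G
      try clear_value Gb
      try clear_value I
      try clear_value D
      try clear_value L
      try clear_value S
      try clear_value f1
      try clear_value f2
      try clear_value f3
      try clear_value a
      try clear_value b
      try clear_value N
      try clear_value K
      nlinarith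
    have h3 : Gb * L ≤ ((1+4*η)*G)*((1+a)*(1+D)) := by
      apply mul_le_mul hGbG h2 hLpos.le ?_
      have h9 : (0:ℝ) ≤ 1 + 4*η := by linarith
      clear * - h9 hG0
      try clear_value η
      try clear_value Dif
      try clear_value G
      try clear_value Gb
      try clear_value I
      try clear_value D
      try clear_value L
      try clear_value S
      try clear_value f1
      try clear_value f2
      try clear_value f3
      try clear_value a
      try clear_value b
      try clear_value N
      try clear_value K
      positivity
    have h4 : (1+4*η)*(1+D) ≤ 1+δ := by
      clear * - hB2 hDδ8 hδ0 hδ1 hη0 hD0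
      try clear_value η
      try clear_value Dif
      try clear_value G
      try clear_value Gb
      try clear_value I
      try clear_value D
      try clear_value L
      try clear_value S
      try clear_value f1
      try clear_value f2
      try clear_value f3
      try clear_value a
      try clear_value b
      try clear_value N
      try clear_value K
      have h13 : η*D ≤ (δ/16)*(δ/8) := mul_le_mul hB2 hDδ8 hD0 (by linarith)
      have h14 : δ*δ ≤ δ := by nlinarith
      nlinarith [h13, h14]
    have h6 : ((1+4*η)*G)*((1+a)*(1+D)) ≤ (1+δ)*((1+a)*G) := by
      have he : ((1+4*η)*G)*((1+a)*(1+D)) = ((1+4*η)*(1+D))*((1+a)*G) := by ring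
      rw [he]
      apply mul_le_mul_of_nonneg_right h4 ?_
      clear * - ha0 hG0
      try clear_value η
      try clear_value Dif
      try clear_value G
      try clear_value Gb
      try clear_value I
      try clear_value D
      try clear_value L
      try clear_value S
      try clear_value f1
      try clear_value f2
      try clear_value f3
      try clear_value a
      try clear_value b
      try clear_value N
      try clear_value K
      positivity
    have h7 : ε * (Gb * L) ≤ ε * ((1+δ)*((1+a)*G)) :=
      mul_le_mul_of_nonneg_left (le_trans h3 h6) hε0.le
    clear * - hεGbL h7
    try clear_value η
    try clear_value Dif
    try clear_value G
    try clear_value Gb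
    try clear_value I
    try clear_value D
    try clear_value L
    try clear_value S
    try clear_value f1
    try clear_value f2
    try clear_value f3
    try clear_value a
    try clear_value b
    try clear_value N
    try clear_value K
    calc D * Real.exp a ≤ ε * Gb * L := hεGbL
      _ = ε * (Gb * L) := by ring
      _ ≤ ε * ((1+δ)*((1+a)*G)) := h7
      _ = (1+δ) * ε * ((1+a)*G) := by ring
  -- lower bound : (1-δ) ε (1+a) G ≤ D * exp a
  have hlower : (1-δ) * ε * ((1+a) * G) ≤ D * Real.exp a := by
    have h1a : (0:ℝ) < 1 + a := by linarith
    have h1 : ε/(1+ε*S a)*G*(1+a) ≤ D * Real.exp b := by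
      calc ε/(1+ε*S a)*G*(1+a) ≤ Dif * (1+a) := mul_le_mul_of_nonneg_right hlo1 h1a.le
        _ ≤ D * Real.exp b := hM2
    have hSaup : ε * S a ≤ δ/16 := by
      have h2 : S a ≤ (Δ:ℝ)*(1+a)^Δ := hSle a ha0
      have h3 : (1+a)^Δ ≤ L^Δ := pow_le_pow_left₀ (by linarith) (by rw [hL_def]; linarith) Δ
      have h4 : ε * S a ≤ ε * ((Δ:ℝ)*(1+a)^Δ) := mul_le_mul_of_nonneg_left h2 hε0.le
      have h5 : ε*((Δ:ℝ)*(1+a)^Δ) ≤ ε*((Δ:ℝ)*L^Δ) := by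
        apply mul_le_mul_of_nonneg_left _ hε0.le
        exact mul_le_mul_of_nonneg_left h3 (by positivity)
      have h6 : ε*((Δ:ℝ)*L^Δ) ≤ η := by
        rw [hη_def]
        have h7 : (Δ:ℝ)*ε*L^Δ ≤ (Δ:ℝ)*ε*L^(Δ+2) :=
          mul_le_mul_of_nonneg_left hLΔ2 (by positivity)
        clear * - h7
        try clear_value η
        try clear_value Dif
        try clear_value G
        try clear_value Gb
        try clear_value I
        try clear_value D
        try clear_value L
        try clear_value S
        try clear_value f1
        try clear_value f2
        try clear_value f3
        try clear_value a
        try clear_value b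
        try clear_value N
        try clear_value K
        nlinarith [h7]
      clear * - h4 h5 h6 hB2
      try clear_value η
      try clear_value Dif
      try clear_value G
      try clear_value Gb
      try clear_value I
      try clear_value D
      try clear_value L
      try clear_value S
      try clear_value f1
      try clear_value f2
      try clear_value f3
      try clear_value a
      try clear_value b
      try clear_value N
      try clear_value K
      linarith
    have hεSa0 : 0 ≤ ε * S a := mul_nonneg hε0.le hSa0
    have heDlow : (1 - D) * Real.exp b ≤ Real.exp a := by
      have h6 : 1 - D ≤ Real.exp (-D) := by
        have := Real.add_one_le_exp (-D)
        linarith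
      have h7 : Real.exp (-D) * Real.exp b = Real.exp a := by
        rw [← Real.exp_add]
        congr 1
        rw [hD_def]
        ring
      clear * - h6 h7 hexpb_pos
      try clear_value η
      try clear_value Dif
      try clear_value G
      try clear_value Gb
      try clear_value I
      try clear_value D
      try clear_value L
      try clear_value S
      try clear_value f1
      try clear_value f2
      try clear_value f3
      try clear_value a
      try clear_value b
      try clear_value N
      try clear_value K
      nlinarith
    have hG1a : (0:ℝ) ≤ (1+a)*G := by
      clear * - ha0 hG0
      try clear_value η
      try clear_value Dif
      try clear_value G
      try clear_value Gb
      try clear_value I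
      try clear_value D
      try clear_value L
      try clear_value S
      try clear_value f1
      try clear_value f2
      try clear_value f3
      try clear_value a
      try clear_value b
      try clear_value N
      try clear_value K
      positivity
    have hden : (0:ℝ) < 1 + ε*S a := by linarith
    have h8 : (1-δ)*(1+ε*S a) ≤ 1 - D := by
      have h16 : (0:ℝ) ≤ δ*(ε*S a) := mul_nonneg hδ0.le hεSa0
      clear * - hDδ8 hδ1 hδ0 hSaup hεSa0 h16
      try clear_value η
      try clear_value Dif
      try clear_value G
      try clear_value Gb
      try clear_value I
      try clear_value D
      try clear_value L
      try clear_value S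
      try clear_value f1
      try clear_value f2
      try clear_value f3
      try clear_value a
      try clear_value b
      try clear_value N
      try clear_value K
      nlinarith [h16]
    have h10 : ε*((1+a)*G) ≤ D * Real.exp b * (1+ε*S a) := by
      have h11 : ε/(1+ε*S a)*G*(1+a)*(1+ε*S a) = ε*((1+a)*G) := by
        clear * - hden
        try clear_value η
        try clear_value Dif
        try clear_value G
        try clear_value Gb
        try clear_value I
        try clear_value D
        try clear_value L
        try clear_value S
        try clear_value f1
        try clear_value f2
        try clear_value f3
        try clear_value a
        try clear_value b
        try clear_value N
        try clear_value K
        field_simp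
      have h12 := mul_le_mul_of_nonneg_right h1 hden.le
      clear * - h11 h12
      try clear_value η
      try clear_value Dif
      try clear_value G
      try clear_value Gb
      try clear_value I
      try clear_value D
      try clear_value L
      try clear_value S
      try clear_value f1
      try clear_value f2
      try clear_value f3
      try clear_value a
      try clear_value b
      try clear_value N
      try clear_value K
      linarith [h11 ▸ h12]
    have h13 : (1-δ)*ε*((1+a)*G)*(1+ε*S a) ≤ (1-D)*(D*Real.exp b)*(1+ε*S a) := by
      have hDlt : (0:ℝ) ≤ 1 - D := by linarith
      have h9 : (1-δ)*ε*((1+a)*G)*(1+ε*S a) ≤ ε*((1+a)*G)*(1-D) := by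
        have h14 : (0:ℝ) ≤ ε*((1+a)*G) := mul_nonneg hε0.le hG1a
        clear * - h8 h14
        try clear_value η
        try clear_value Dif
        try clear_value G
        try clear_value Gb
        try clear_value I
        try clear_value D
        try clear_value L
        try clear_value S
        try clear_value f1
        try clear_value f2
        try clear_value f3
        try clear_value a
        try clear_value b
        try clear_value N
        try clear_value K
        nlinarith
      have h12 : ε*((1+a)*G)*(1-D) ≤ (1-D) * (D * Real.exp b * (1+ε*S a)) := by
        clear * - h10 hDlt
        try clear_value η
        try clear_value Dif
        try clear_value G
        try clear_value Gb
        try clear_value I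
        try clear_value D
        try clear_value L
        try clear_value S
        try clear_value f1
        try clear_value f2
        try clear_value f3
        try clear_value a
        try clear_value b
        try clear_value N
        try clear_value K
        nlinarith
      have h15 : (1-D) * (D * Real.exp b * (1+ε*S a)) = (1-D)*(D*Real.exp b)*(1+ε*S a) := by
        ring
      clear * - h9 h12 h15
      try clear_value η
      try clear_value Dif
      try clear_value G
      try clear_value Gb
      try clear_value I
      try clear_value D
      try clear_value L
      try clear_value S
      try clear_value f1
      try clear_value f2
      try clear_value f3
      try clear_value a
      try clear_value b
      try clear_value N
      try clear_value K
      linarith [h15 ▸ h12]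
    have h14 : (1-δ)*ε*((1+a)*G) ≤ (1-D)*(D*Real.exp b) := by
      have := le_of_mul_le_mul_right h13 hden
      linarith
    have h15 : (1-D)*(D*Real.exp b) ≤ D * Real.exp a := by
      have hDlt : (0:ℝ) ≤ 1 - D := by linarith
      clear * - heDlow hD0 hexpb_pos hDlt
      try clear_value η
      try clear_value Dif
      try clear_value G
      try clear_value Gb
      try clear_value I
      try clear_value D
      try clear_value L
      try clear_value S
      try clear_value f1
      try clear_value f2
      try clear_value f3
      try clear_value a
      try clear_value b
      try clear_value N
      try clear_value K
      nlinarith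
    linarith
  -- finish
  have hLamErr : LamErr lam Δ r t = Real.exp (-a) * (1+a) * G := by
    have hode' := hode t ht
    rw [LamErr]
    have hGrfl : (∫ x in (0:ℝ)..(lam t), Real.exp x / (1 + x) ^ 2 *
        ∑ k ∈ Finset.Icc 2 (Δ - 1), x ^ k / (Nat.factorial k : ℝ) * tailS Δ r (k + 1)) = G := rfl
    rw [hGrfl, hode']
  have hexp_na : Real.exp (-a) = (Real.exp a)⁻¹ := Real.exp_neg a
  have hea_pos : (0:ℝ) < Real.exp a := Real.exp_pos a
  constructor
  · rw [hLamErr, hexp_na]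
    have h1 : (1-δ)*ε*((Real.exp a)⁻¹*(1+a)*G) = ((1-δ)*ε*((1+a)*G)) * (Real.exp a)⁻¹ := by
      ring
    have h2 : ((1-δ)*ε*((1+a)*G)) * (Real.exp a)⁻¹ ≤ (D * Real.exp a) * (Real.exp a)⁻¹ :=
      mul_le_mul_of_nonneg_right hlower (by positivity)
    rw [mul_inv_cancel_right₀ hea_pos.ne'] at h2
    have h3 : D = b - a := hD_def
    clear * - h1 h2 h3
    try clear_value η
    try clear_value Dif
    try clear_value G
    try clear_value Gb
    try clear_value I
    try clear_value D
    try clear_value L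
    try clear_value S
    try clear_value f1
    try clear_value f2
    try clear_value f3
    try clear_value a
    try clear_value b
    try clear_value N
    try clear_value K
    rw [h1]
    linarith [h3 ▸ h2]
  · rw [hLamErr, hexp_na]
    have h1 : (1+δ)*ε*((Real.exp a)⁻¹*(1+a)*G) = ((1+δ)*ε*((1+a)*G)) * (Real.exp a)⁻¹ := by
      ring
    have h2 : (D * Real.exp a) * (Real.exp a)⁻¹ ≤ ((1+δ)*ε*((1+a)*G)) * (Real.exp a)⁻¹ :=
      mul_le_mul_of_nonneg_right hupper (by positivity)
    rw [mul_inv_cancel_right₀ hea_pos.ne'] at h2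
    have h3 : D = b - a := hD_def
    clear * - h1 h2 h3
    try clear_value η
    try clear_value Dif
    try clear_value G
    try clear_value Gb
    try clear_value I
    try clear_value D
    try clear_value L
    try clear_value S
    try clear_value f1
    try clear_value f2
    try clear_value f3
    try clear_value a
    try clear_value b
    try clear_value N
    try clear_value K
    rw [h1]
    linarith [h3 ▸ h2]
end
end

section
/- Explicit tail integral of H_r (Claim 'Explicit formulas for H_r and I_r', equation for I_r): Fix an integer Δ ≥ 3 and let r ∈ R_Δ. For every t ≥ 0 the improper integral ∫_t^∞ H_r(s) ds converges and equals I_r(t) := e^{−λ(t)} · ( −Λ_r(t) + Σ_{k=1}^{Δ−2} (λ(t)^k/k!) · s_{k+2} ). In particular ∫_0^∞ H_r(s) ds = 0. -/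
open Real MeasureTheory Filter

noncomputable section

namespace HTaux

/-! ### Auxiliary polynomials and integrals -/

def Qp (Δ : ℕ) (r : ℕ → ℝ) (x : ℝ) : ℝ :=
  ∑ k ∈ Finset.Icc 2 (Δ - 1), x ^ k / (Nat.factorial k : ℝ) * tailS Δ r (k + 1)

def gp (Δ : ℕ) (r : ℕ → ℝ) (x : ℝ) : ℝ := Real.exp x / (1 + x) ^ 2 * Qp Δ r x

def Fp (Δ : ℕ) (r : ℕ → ℝ) (y : ℝ) : ℝ := ∫ x in (0:ℝ)..y, gp Δ r x

def Sp (Δ : ℕ) (r : ℕ → ℝ) (x : ℝ) : ℝ :=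
  ∑ k ∈ Finset.Icc 1 (Δ - 2), x ^ k / (Nat.factorial k : ℝ) * tailS Δ r (k + 2)

def Spd (Δ : ℕ) (r : ℕ → ℝ) (x : ℝ) : ℝ :=
  ∑ k ∈ Finset.range (Δ - 2), x ^ k / (Nat.factorial k : ℝ) * tailS Δ r (k + 3)

def Pp (Δ : ℕ) (r : ℕ → ℝ) (x : ℝ) : ℝ :=
  ∑ k ∈ Finset.range (Δ - 1), x ^ k / (Nat.factorial k : ℝ) * r (k + 2)

def InJ (Δ : ℕ) (r : ℕ → ℝ) (x : ℝ) : ℝ :=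
  Real.exp (-x) * (-(Real.exp (-x) * (1 + x) * Fp Δ r x) + Sp Δ r x)

/-! ### tailS lemmas -/

theorem tailS_step (Δ : ℕ) (r : ℕ → ℝ) {j : ℕ} (h : j ≤ Δ) :
    tailS Δ r j = r j + tailS Δ r (j + 1) := by
  unfold tailS
  rw [show Finset.Icc j Δ = insert j (Finset.Icc (j+1) Δ) by
        ext x; simp only [Finset.mem_Icc, Finset.mem_insert]; omega,
    Finset.sum_insert (by simp [Finset.mem_Icc])]

theorem tailS_eq_zero (Δ : ℕ) (r : ℕ → ℝ) {j : ℕ} (h : Δ < j) : tailS Δ r j = 0 := by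
  unfold tailS
  rw [Finset.Icc_eq_empty (by omega)]; simp

theorem tailS_three {Δ : ℕ} {r : ℕ → ℝ} (hr : memR Δ r) : tailS Δ r 3 = 1 := hr.2.2.2

theorem tailS_two {Δ : ℕ} {r : ℕ → ℝ} (hΔ : 3 ≤ Δ) (hr : memR Δ r) : tailS Δ r 2 = 0 := by
  rw [tailS_step Δ r (by omega), hr.1, show (2:ℕ)+1 = 3 from rfl, tailS_three hr]; ring

theorem tailS_nonneg {Δ : ℕ} {r : ℕ → ℝ} (hr : memR Δ r) {j : ℕ} (hj : 3 ≤ j) :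
    0 ≤ tailS Δ r j :=
  Finset.sum_nonneg fun d hd =>
    hr.2.1 d (le_trans hj (Finset.mem_Icc.mp hd).1) (Finset.mem_Icc.mp hd).2

theorem tailS_le_one {Δ : ℕ} {r : ℕ → ℝ} (hr : memR Δ r) {j : ℕ} (hj : 3 ≤ j) :
    tailS Δ r j ≤ 1 := by
  rw [← hr.2.2.2]
  exact Finset.sum_le_sum_of_subset_of_nonneg (Finset.Icc_subset_Icc_left hj)
    (fun d hd _ => hr.2.1 d (Finset.mem_Icc.mp hd).1 (Finset.mem_Icc.mp hd).2)

theorem abs_tailS_le_one {Δ : ℕ} {r : ℕ → ℝ} (hr : memR Δ r) {j : ℕ} (hj : 3 ≤ j) :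
    |tailS Δ r j| ≤ 1 := by
  rw [abs_of_nonneg (tailS_nonneg hr hj)]; exact tailS_le_one hr hj

theorem abs_r_le_one {Δ : ℕ} {r : ℕ → ℝ} (hr : memR Δ r) {j : ℕ} (hj : 2 ≤ j) :
    |r j| ≤ 1 := by
  rcases eq_or_lt_of_le hj with h2 | h3
  · rw [← h2, hr.1]; norm_num
  rcases le_or_gt j Δ with hle | hgt
  · have hnn : 0 ≤ r j := hr.2.1 j h3 hle
    rw [abs_of_nonneg hnn, ← hr.2.2.2]
    exact Finset.single_le_sum
      (fun d hd => hr.2.1 d (Finset.mem_Icc.mp hd).1 (Finset.mem_Icc.mp hd).2)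
      (Finset.mem_Icc.mpr ⟨h3, hle⟩)
  · rw [hr.2.2.1 j hgt]; norm_num

/-! ### The polynomial identity `P = S - S'` -/

theorem Pp_eq {Δ : ℕ} {r : ℕ → ℝ} (hΔ : 3 ≤ Δ) (hr : memR Δ r) (x : ℝ) :
    Pp Δ r x = Sp Δ r x - Spd Δ r x := by
  have h1 : Pp Δ r x =
      (∑ k ∈ Finset.range (Δ-1), x ^ k / (Nat.factorial k : ℝ) * tailS Δ r (k+2)) -
      ∑ k ∈ Finset.range (Δ-1), x ^ k / (Nat.factorial k : ℝ) * tailS Δ r (k+3) := by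
    rw [← Finset.sum_sub_distrib]
    refine Finset.sum_congr rfl fun k hk => ?_
    have hk' : k + 2 ≤ Δ := by have := Finset.mem_range.mp hk; omega
    rw [tailS_step Δ r hk']
    ring_nf
  have h2 : (∑ k ∈ Finset.range (Δ-1), x ^ k / (Nat.factorial k : ℝ) * tailS Δ r (k+2))
      = Sp Δ r x := by
    rw [show Δ - 1 = (Δ-2) + 1 by omega, Finset.sum_range_succ']
    have hz : x ^ 0 / (Nat.factorial 0 : ℝ) * tailS Δ r (0+2) = 0 := by
      rw [show (0:ℕ)+2 = 2 from rfl, tailS_two hΔ hr]; ring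
    rw [hz, add_zero]
    unfold Sp
    rw [show Finset.Icc 1 (Δ-2) = Finset.Ico 1 (Δ-2+1) by rw [Finset.Ico_add_one_right_eq_Icc],
      Finset.sum_Ico_eq_sum_range]
    simp only [Nat.add_sub_cancel]
    exact (Finset.sum_congr rfl fun i _ => by rw [Nat.add_comm 1 i]).symm
  have h3 : (∑ k ∈ Finset.range (Δ-1), x ^ k / (Nat.factorial k : ℝ) * tailS Δ r (k+3))
      = Spd Δ r x := by
    rw [show Δ - 1 = (Δ-2) + 1 by omega, Finset.sum_range_succ,
      tailS_eq_zero Δ r (show Δ < Δ - 2 + 3 by omega)]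
    unfold Spd; simp
  rw [h1, h2, h3]

/-! ### Derivative of `Sp` -/

theorem hasDerivAt_Sp (Δ : ℕ) (r : ℕ → ℝ) (x : ℝ) :
    HasDerivAt (Sp Δ r) (Spd Δ r x) x := by
  have h : HasDerivAt (Sp Δ r)
      (∑ k ∈ Finset.Icc 1 (Δ-2),
        (k : ℝ) * x ^ (k-1) / (Nat.factorial k : ℝ) * tailS Δ r (k+2)) x := by
    unfold Sp
    apply HasDerivAt.fun_sum
    intro k _
    exact ((hasDerivAt_pow k x).div_const _).mul_const _
  convert h using 1
  unfold Spd
  rw [show Finset.Icc 1 (Δ-2) = Finset.Ico 1 (Δ-2+1) by rw [Finset.Ico_add_one_right_eq_Icc],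
    Finset.sum_Ico_eq_sum_range]
  simp only [Nat.add_sub_cancel]
  refine Finset.sum_congr rfl fun i _ => ?_
  rw [Nat.add_comm 1 i, Nat.add_sub_cancel, Nat.factorial_succ, show i+1+2 = i+3 from rfl]
  push_cast
  have h1 : ((i:ℝ) + 1) ≠ 0 := by positivity
  have h2 : ((Nat.factorial i : ℕ) : ℝ) ≠ 0 := by positivity
  field_simp

end HTaux
namespace HTaux

theorem continuous_Qp (Δ : ℕ) (r : ℕ → ℝ) : Continuous (Qp Δ r) := by
  unfold Qp
  exact continuous_finset_sum _ fun k _ => ((continuous_pow k).div_const _).mul continuous_const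

theorem continuousAt_gp (Δ : ℕ) (r : ℕ → ℝ) {x : ℝ} (hx : -1 < x) :
    ContinuousAt (gp Δ r) x := by
  have h1 : (1 + x) ^ 2 ≠ 0 := by nlinarith
  exact ((Real.continuous_exp.continuousAt).div
    (((continuous_const.add continuous_id).pow 2).continuousAt) h1).mul
    (continuous_Qp Δ r).continuousAt

theorem intervalIntegrable_gp (Δ : ℕ) (r : ℕ → ℝ) {a b : ℝ} (ha : -1 < a) (hb : -1 < b) :
    IntervalIntegrable (gp Δ r) MeasureTheory.volume a b := by
  apply ContinuousOn.intervalIntegrable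
  intro x hx
  have : -1 < x := lt_of_lt_of_le (lt_min ha hb) hx.1
  exact (continuousAt_gp Δ r this).continuousWithinAt

theorem hasDerivAt_Fp (Δ : ℕ) (r : ℕ → ℝ) {y : ℝ} (hy : -1 < y) :
    HasDerivAt (Fp Δ r) (gp Δ r y) y := by
  refine intervalIntegral.integral_hasDerivAt_right
    (intervalIntegrable_gp Δ r (by norm_num) hy) ?_ (continuousAt_gp Δ r hy)
  exact ContinuousAt.stronglyMeasurableAtFilter isOpen_Ioi
    (fun x hx => continuousAt_gp Δ r hx) y hy

/-! ### Bounds -/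

theorem sum_poly_abs_le {n : ℕ} (s : Finset ℕ) (c : ℕ → ℝ) (hc : ∀ k ∈ s, |c k| ≤ 1)
    (hk : ∀ k ∈ s, k ≤ n) {x : ℝ} (hx : 0 ≤ x) :
    |∑ k ∈ s, x ^ k / (Nat.factorial k : ℝ) * c k| ≤ (s.card : ℝ) * (1+x) ^ n := by
  calc |∑ k ∈ s, x ^ k / (Nat.factorial k : ℝ) * c k|
      ≤ ∑ k ∈ s, |x ^ k / (Nat.factorial k : ℝ) * c k| := Finset.abs_sum_le_sum_abs _ _
    _ ≤ ∑ _k ∈ s, (1+x) ^ n := by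
        refine Finset.sum_le_sum fun k hks => ?_
        rw [abs_mul, abs_of_nonneg (by positivity : (0:ℝ) ≤ x ^ k / (Nat.factorial k : ℝ))]
        have h1 : x ^ k / (Nat.factorial k : ℝ) * |c k| ≤ x ^ k / (Nat.factorial k : ℝ) * 1 :=
          mul_le_mul_of_nonneg_left (hc k hks) (by positivity)
        have h2 : x ^ k / (Nat.factorial k : ℝ) ≤ x ^ k := by
          apply div_le_self (by positivity)
          exact_mod_cast Nat.one_le_iff_ne_zero.mpr (Nat.factorial_ne_zero k)
        have h3 : x ^ k ≤ (1+x) ^ k := pow_le_pow_left₀ hx (by linarith) k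
        have h4 : (1+x) ^ k ≤ (1+x) ^ n := pow_le_pow_right₀ (by linarith) (hk k hks)
        linarith [mul_one (x ^ k / (Nat.factorial k : ℝ))]
    _ = (s.card : ℝ) * (1+x) ^ n := by rw [Finset.sum_const, nsmul_eq_mul]

theorem Qp_abs_le {Δ : ℕ} {r : ℕ → ℝ} (hΔ : 3 ≤ Δ) (hr : memR Δ r) {x : ℝ} (hx : 0 ≤ x) :
    |Qp Δ r x| ≤ (Δ : ℝ) * (1+x) ^ (Δ - 1) := by
  refine le_trans (sum_poly_abs_le _ _ (fun k hks => abs_tailS_le_one hr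
    (by have := (Finset.mem_Icc.mp hks).1; omega))
    (fun k hks => (Finset.mem_Icc.mp hks).2) hx) ?_
  have : ((Finset.Icc 2 (Δ-1)).card : ℝ) ≤ (Δ : ℝ) := by
    rw [Nat.card_Icc]; exact_mod_cast (show Δ - 1 + 1 - 2 ≤ Δ by omega)
  exact mul_le_mul_of_nonneg_right this (by positivity)

theorem Qp_nonneg {Δ : ℕ} {r : ℕ → ℝ} (hr : memR Δ r) {x : ℝ} (hx : 0 ≤ x) :
    0 ≤ Qp Δ r x := by
  refine Finset.sum_nonneg fun k hks => mul_nonneg (by positivity) ?_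
  exact tailS_nonneg hr (by have := (Finset.mem_Icc.mp hks).1; omega)

theorem Sp_abs_le {Δ : ℕ} {r : ℕ → ℝ} (hΔ : 3 ≤ Δ) (hr : memR Δ r) {x : ℝ} (hx : 0 ≤ x) :
    |Sp Δ r x| ≤ (Δ : ℝ) * (1+x) ^ Δ := by
  refine le_trans (sum_poly_abs_le (n := Δ) _ _
    (fun k hks => abs_tailS_le_one hr (by have := (Finset.mem_Icc.mp hks).1; omega))
    (fun k hks => by have := (Finset.mem_Icc.mp hks).2; omega) hx) ?_
  have : ((Finset.Icc 1 (Δ-2)).card : ℝ) ≤ (Δ : ℝ) := by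
    rw [Nat.card_Icc]; exact_mod_cast (show Δ - 2 + 1 - 1 ≤ Δ by omega)
  exact mul_le_mul_of_nonneg_right this (by positivity)

theorem Pp_abs_le {Δ : ℕ} {r : ℕ → ℝ} (hΔ : 3 ≤ Δ) (hr : memR Δ r) {x : ℝ} (hx : 0 ≤ x) :
    |Pp Δ r x| ≤ (Δ : ℝ) * (1+x) ^ Δ := by
  refine le_trans (sum_poly_abs_le (n := Δ) _ _ (fun k _ => abs_r_le_one hr (by omega))
    (fun k hks => by have := Finset.mem_range.mp hks; omega) hx) ?_
  have : ((Finset.range (Δ-1)).card : ℝ) ≤ (Δ : ℝ) := by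
    rw [Finset.card_range]; exact_mod_cast (show Δ - 1 ≤ Δ by omega)
  exact mul_le_mul_of_nonneg_right this (by positivity)

theorem Fp_nonneg {Δ : ℕ} {r : ℕ → ℝ} (hr : memR Δ r) {y : ℝ} (hy : 0 ≤ y) :
    0 ≤ Fp Δ r y := by
  refine intervalIntegral.integral_nonneg hy fun x hx => ?_
  exact mul_nonneg (by positivity) (Qp_nonneg hr hx.1)

theorem Fp_le {Δ : ℕ} {r : ℕ → ℝ} (hΔ : 3 ≤ Δ) (hr : memR Δ r) {y : ℝ} (hy : 0 ≤ y) :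
    Fp Δ r y ≤ (Δ : ℝ) * (1+y) ^ (Δ - 1) * Real.exp y := by
  have hmono : Fp Δ r y ≤ ∫ x in (0:ℝ)..y, (Δ : ℝ) * (1+y) ^ (Δ - 1) * Real.exp x := by
    refine intervalIntegral.integral_mono_on hy
      (intervalIntegrable_gp Δ r (by norm_num) (by linarith))
      ((continuous_const.mul Real.continuous_exp).intervalIntegrable 0 y) fun x hx => ?_
    have hx0 : 0 ≤ x := hx.1
    have hxy : x ≤ y := hx.2
    unfold gp
    have h1 : Real.exp x / (1+x) ^ 2 ≤ Real.exp x := by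
      apply div_le_self (Real.exp_pos x).le
      nlinarith
    have h2 : Qp Δ r x ≤ (Δ : ℝ) * (1+x) ^ (Δ-1) :=
      le_trans (le_abs_self _) (Qp_abs_le hΔ hr hx0)
    have h3 : (Δ : ℝ) * (1+x) ^ (Δ-1) ≤ (Δ : ℝ) * (1+y) ^ (Δ-1) := by
      apply mul_le_mul_of_nonneg_left _ (by positivity)
      exact pow_le_pow_left₀ (by linarith) (by linarith) _
    calc Real.exp x / (1+x) ^ 2 * Qp Δ r x
        ≤ Real.exp x * Qp Δ r x :=
          mul_le_mul_of_nonneg_right h1 (Qp_nonneg hr hx0)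
      _ ≤ Real.exp x * ((Δ : ℝ) * (1+y) ^ (Δ-1)) :=
          mul_le_mul_of_nonneg_left (le_trans h2 h3) (Real.exp_pos x).le
      _ = (Δ : ℝ) * (1+y) ^ (Δ-1) * Real.exp x := by ring
  calc Fp Δ r y ≤ ∫ x in (0:ℝ)..y, (Δ : ℝ) * (1+y) ^ (Δ - 1) * Real.exp x := hmono
    _ = (Δ : ℝ) * (1+y) ^ (Δ-1) * (Real.exp y - Real.exp 0) := by
        rw [intervalIntegral.integral_const_mul, integral_exp]
    _ ≤ (Δ : ℝ) * (1+y) ^ (Δ-1) * Real.exp y := by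
        have : (0:ℝ) ≤ (Δ : ℝ) * (1+y) ^ (Δ-1) := by positivity
        nlinarith [Real.exp_pos (0:ℝ), Real.exp_le_exp.mpr hy]

theorem abs_Fp_le {Δ : ℕ} {r : ℕ → ℝ} (hΔ : 3 ≤ Δ) (hr : memR Δ r) {y : ℝ} (hy : 0 ≤ y) :
    |Fp Δ r y| ≤ (Δ : ℝ) * (1+y) ^ (Δ - 1) * Real.exp y := by
  rw [abs_of_nonneg (Fp_nonneg hr hy)]; exact Fp_le hΔ hr hy

theorem continuousAt_InJ (Δ : ℕ) (r : ℕ → ℝ) {x : ℝ} (hx : -1 < x) :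
    ContinuousAt (InJ Δ r) x := by
  unfold InJ
  have he : ContinuousAt (fun x : ℝ => Real.exp (-x)) x :=
    (Real.continuous_exp.comp continuous_neg).continuousAt
  exact he.mul ((((he.mul ((continuous_const.add continuous_id).continuousAt)).mul
    (hasDerivAt_Fp Δ r hx).continuousAt).neg).add (hasDerivAt_Sp Δ r x).continuousAt)

end HTaux
namespace HTaux

section lam
variable {lam : ℝ → ℝ} (hdiff : Differentiable ℝ lam) (h0 : lam 0 = 0)
  (hode : ∀ t : ℝ, 0 ≤ t → deriv lam t = Real.exp (-lam t) * (1 + lam t))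

include hdiff h0 hode

theorem lam_nonneg : ∀ t : ℝ, 0 ≤ t → 0 ≤ lam t := by
  intro t1 ht1
  by_contra hneg
  push_neg at hneg
  set a : ℝ := max (lam t1) (-1/2) with ha_def
  have ha_neg : a < 0 := max_lt hneg (by norm_num)
  have ha_half : -1/2 ≤ a := le_max_right _ _
  set K : Set ℝ := Set.Icc 0 t1 ∩ lam ⁻¹' Set.Iic a with hK_def
  have hK_closed : IsClosed K :=
    isClosed_Icc.inter (isClosed_Iic.preimage hdiff.continuous)
  have ht1K : t1 ∈ K := ⟨⟨ht1, le_refl _⟩, show lam t1 ≤ a from le_max_left _ _⟩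
  have hK_bdd : BddBelow K := ⟨0, fun x hx => hx.1.1⟩
  set t0 : ℝ := sInf K with ht0_def
  have ht0K : t0 ∈ K := hK_closed.csInf_mem ⟨t1, ht1K⟩ hK_bdd
  have ht0_nonneg : 0 ≤ t0 := ht0K.1.1
  have hlt : ∀ t, 0 ≤ t → t < t0 → a < lam t := by
    intro t ht htlt
    by_contra hle
    push_neg at hle
    have htK : t ∈ K := ⟨⟨ht, le_trans htlt.le ht0K.1.2⟩, hle⟩
    exact absurd (csInf_le hK_bdd htK) (not_le.mpr htlt)
  have ht0_pos : 0 < t0 := by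
    rcases lt_or_eq_of_le ht0_nonneg with h | h
    · exact h
    · exfalso
      have : lam t0 ≤ a := ht0K.2
      rw [← h, h0] at this
      linarith
  have hmono : MonotoneOn lam (Set.Icc 0 t0) := by
    apply monotoneOn_of_deriv_nonneg (convex_Icc 0 t0) hdiff.continuous.continuousOn
      (fun x _ => (hdiff x).differentiableWithinAt)
    intro x hx
    rw [interior_Icc] at hx
    rw [hode x hx.1.le]
    have h1 : a < lam x := hlt x hx.1.le hx.2
    have h2 : 0 ≤ 1 + lam x := by linarith
    positivity
  have := hmono (Set.left_mem_Icc.mpr ht0_pos.le)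
    (Set.right_mem_Icc.mpr ht0_pos.le) ht0_pos.le
  rw [h0] at this
  have : lam t0 ≤ a := ht0K.2
  linarith [hmono (Set.left_mem_Icc.mpr ht0_pos.le) (Set.right_mem_Icc.mpr ht0_pos.le)
    ht0_pos.le, ht0K.2]

theorem exp_lam_lower : ∀ s : ℝ, 0 ≤ s → 1 + s ≤ Real.exp (lam s) := by
  have hln := lam_nonneg hdiff h0 hode
  intro s hs
  set φ : ℝ → ℝ := fun u => Real.exp (lam u) - (1 + u) with hφ
  have hφdiff : Differentiable ℝ φ := ((Real.differentiable_exp.comp hdiff).sub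
    (differentiable_const _ |>.add differentiable_id))
  have hmono : MonotoneOn φ (Set.Ici 0) := by
    apply monotoneOn_of_deriv_nonneg (convex_Ici 0) hφdiff.continuous.continuousOn
      (fun x _ => (hφdiff x).differentiableWithinAt)
    intro x hx
    rw [interior_Ici] at hx
    have hd : HasDerivAt φ (deriv lam x * Real.exp (lam x) - 1) x := by
      have h1 : HasDerivAt (fun u => Real.exp (lam u)) (Real.exp (lam x) * deriv lam x) x :=
        (hdiff x).hasDerivAt.exp
      have h2 : HasDerivAt (fun u : ℝ => 1 + u) 1 x := (hasDerivAt_id x).const_add 1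
      simpa [mul_comm] using h1.fun_sub h2
    rw [hd.deriv, hode x hx.le]
    have : Real.exp (-lam x) * Real.exp (lam x) = 1 := by
      rw [← Real.exp_add]; simp
    have hlx : 0 ≤ lam x := hln x hx.le
    nlinarith
  have := hmono (Set.self_mem_Ici) (Set.mem_Ici.mpr hs) hs
  simp only [φ, h0, Real.exp_zero] at this
  linarith

theorem lam_tendsto : Filter.Tendsto lam Filter.atTop Filter.atTop := by
  have h1 : Filter.Tendsto (fun s : ℝ => Real.log (1 + s)) Filter.atTop Filter.atTop :=
    Real.tendsto_log_atTop.comp (Filter.tendsto_atTop_add_const_left _ 1 Filter.tendsto_id)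
  apply Filter.tendsto_atTop_mono' _ _ h1
  filter_upwards [Filter.eventually_ge_atTop (0:ℝ)] with s hs
  exact (Real.log_le_iff_le_exp (by linarith)).mpr (exp_lam_lower hdiff h0 hode s hs)

end lam

theorem pow_le_exp_half (m : ℕ) :
    ∃ C : ℝ, 0 ≤ C ∧ ∀ x : ℝ, 0 ≤ x → (1+x) ^ m ≤ C * Real.exp (x/2) := by
  refine ⟨2^m * (1 + 2^m * (Nat.factorial m : ℝ)), by positivity, fun x hx => ?_⟩
  have h1 : (1+x) ^ m ≤ (2 * max 1 x) ^ m := by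
    apply pow_le_pow_left₀ (by linarith)
    rcases le_total x 1 with h | h
    · rw [max_eq_left h]; linarith
    · rw [max_eq_right h]; linarith
  have h2 : (2 * max 1 x) ^ m = 2^m * (max 1 x) ^ m := mul_pow 2 _ m
  have h3 : (max 1 x) ^ m ≤ 1 + x ^ m := by
    rcases le_total x 1 with h | h
    · rw [max_eq_left h, one_pow]
      have : 0 ≤ x ^ m := by positivity
      linarith
    · rw [max_eq_right h]
      linarith [pow_nonneg hx m]
  have h4 : x ^ m ≤ 2^m * (Nat.factorial m : ℝ) * Real.exp (x/2) := by
    have key : (x/2) ^ m / (Nat.factorial m : ℝ) ≤ Real.exp (x/2) := by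
      calc (x/2) ^ m / (Nat.factorial m : ℝ)
          ≤ ∑ i ∈ Finset.range (m+1), (x/2) ^ i / (Nat.factorial i : ℝ) := by
            exact Finset.single_le_sum (f := fun i => (x/2)^i / (Nat.factorial i : ℝ))
              (fun i _ => by positivity) (Finset.self_mem_range_succ m)
        _ ≤ Real.exp (x/2) := Real.sum_le_exp_of_nonneg (by linarith) _
    have hfact : (0:ℝ) < (Nat.factorial m : ℝ) := by positivity
    have hxm : x ^ m = 2^m * ((x/2) ^ m) := by
      rw [div_pow]; field_simp
    rw [hxm]
    calc 2^m * ((x/2) ^ m) ≤ 2^m * ((Nat.factorial m : ℝ) * Real.exp (x/2)) := by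
          apply mul_le_mul_of_nonneg_left _ (by positivity)
          have := (div_le_iff₀ hfact).mp key
          linarith
      _ = 2^m * (Nat.factorial m : ℝ) * Real.exp (x/2) := by ring
  have h5 : (1:ℝ) ≤ Real.exp (x/2) := Real.one_le_exp (by linarith)
  calc (1+x) ^ m ≤ 2^m * (max 1 x) ^ m := by rw [← h2]; exact h1
    _ ≤ 2^m * (1 + x^m) := by
        apply mul_le_mul_of_nonneg_left h3 (by positivity)
    _ ≤ 2^m * (Real.exp (x/2) + 2^m * (Nat.factorial m : ℝ) * Real.exp (x/2)) := by
        apply mul_le_mul_of_nonneg_left _ (by positivity)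
        linarith
    _ = 2^m * (1 + 2^m * (Nat.factorial m : ℝ)) * Real.exp (x/2) := by ring

end HTaux
namespace HTaux

section main
variable {Δ : ℕ} {r : ℕ → ℝ} {lam : ℝ → ℝ}

theorem main_deriv (hΔ : 3 ≤ Δ) (hr : memR Δ r)
    (hdiff : Differentiable ℝ lam) (h0 : lam 0 = 0)
    (hode : ∀ t : ℝ, 0 ≤ t → deriv lam t = Real.exp (-lam t) * (1 + lam t))
    {s : ℝ} (hs : 0 < s) :
    HasDerivAt (fun t => InJ Δ r (lam t)) (-(Herr lam Δ r s)) s ∧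
    Herr lam Δ r s = Real.exp (-lam s) ^ 2 *
      (Qp Δ r (lam s) + (1 + lam s) * Pp Δ r (lam s)
        - Real.exp (-lam s) * Fp Δ r (lam s) * (1 + lam s) * (1 + 2 * lam s)) := by
  have hln := lam_nonneg hdiff h0 hode
  have hl0 : 0 ≤ lam s := hln s hs.le
  have hNs : HasDerivAt lam (Real.exp (-lam s) * (1 + lam s)) s := by
    have := (hdiff s).hasDerivAt
    rwa [hode s hs.le] at this
  have hE : HasDerivAt (fun t => Real.exp (-lam t))
      (Real.exp (-lam s) * -(Real.exp (-lam s) * (1 + lam s))) s := hNs.neg.exp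
  have hNder : HasDerivAt (fun t => Real.exp (-lam t) * (1 + lam t))
      (Real.exp (-lam s) * -(Real.exp (-lam s) * (1 + lam s)) * (1 + lam s) +
        Real.exp (-lam s) * (Real.exp (-lam s) * (1 + lam s))) s :=
    hE.mul (hNs.const_add 1)
  have hFl : HasDerivAt (fun t => Fp Δ r (lam t))
      (gp Δ r (lam s) * (Real.exp (-lam s) * (1 + lam s))) s :=
    (hasDerivAt_Fp Δ r (by linarith : (-1:ℝ) < lam s)).comp s hNs
  have hSl : HasDerivAt (fun t => Sp Δ r (lam t))
      (Spd Δ r (lam s) * (Real.exp (-lam s) * (1 + lam s))) s :=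
    (hasDerivAt_Sp Δ r (lam s)).comp s hNs
  have hLam : HasDerivAt (fun t => Real.exp (-lam t) * (1 + lam t) * Fp Δ r (lam t))
      ((Real.exp (-lam s) * -(Real.exp (-lam s) * (1 + lam s)) * (1 + lam s) +
        Real.exp (-lam s) * (Real.exp (-lam s) * (1 + lam s))) * Fp Δ r (lam s) +
        Real.exp (-lam s) * (1 + lam s) *
          (gp Δ r (lam s) * (Real.exp (-lam s) * (1 + lam s)))) s :=
    hNder.mul hFl
  have hLamErr_ev : LamErr lam Δ r =ᶠ[nhds s]
      fun t => Real.exp (-lam t) * (1 + lam t) * Fp Δ r (lam t) := by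
    filter_upwards [IsOpen.mem_nhds isOpen_Ioi hs] with t ht
    show LamErr lam Δ r t = _
    unfold LamErr Fp gp Qp
    rw [hode t (le_of_lt ht)]
  have hdLE : deriv (LamErr lam Δ r) s =
      (Real.exp (-lam s) * -(Real.exp (-lam s) * (1 + lam s)) * (1 + lam s) +
        Real.exp (-lam s) * (Real.exp (-lam s) * (1 + lam s))) * Fp Δ r (lam s) +
        Real.exp (-lam s) * (1 + lam s) *
          (gp Δ r (lam s) * (Real.exp (-lam s) * (1 + lam s))) := by
    rw [Filter.EventuallyEq.deriv_eq hLamErr_ev]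
    exact hLam.deriv
  have hLEs : LamErr lam Δ r s = Real.exp (-lam s) * (1 + lam s) * Fp Δ r (lam s) :=
    hLamErr_ev.eq_of_nhds
  have hHerr : Herr lam Δ r s = Real.exp (-lam s) *
      (((Real.exp (-lam s) * -(Real.exp (-lam s) * (1 + lam s)) * (1 + lam s) +
        Real.exp (-lam s) * (Real.exp (-lam s) * (1 + lam s))) * Fp Δ r (lam s) +
        Real.exp (-lam s) * (1 + lam s) *
          (gp Δ r (lam s) * (Real.exp (-lam s) * (1 + lam s))))
      - Real.exp (-lam s) * (1 + lam s) *
          (Real.exp (-lam s) * (1 + lam s) * Fp Δ r (lam s))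
      + Real.exp (-lam s) * (1 + lam s) * Pp Δ r (lam s)) := by
    show Real.exp (-lam s) * (deriv (LamErr lam Δ r) s - deriv lam s * LamErr lam Δ r s +
      deriv lam s * ∑ k ∈ Finset.range (Δ - 1),
        lam s ^ k / (Nat.factorial k : ℝ) * r (k + 2)) = _
    rw [hdLE, hLEs, hode s hs.le]
    rfl
  have hexp1 : Real.exp (-lam s) * Real.exp (lam s) = 1 := by
    rw [← Real.exp_add]; simp
  have h1l : (0:ℝ) < 1 + lam s := by linarith
  have hclosed : Herr lam Δ r s = Real.exp (-lam s) ^ 2 *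
      (Qp Δ r (lam s) + (1 + lam s) * Pp Δ r (lam s)
        - Real.exp (-lam s) * Fp Δ r (lam s) * (1 + lam s) * (1 + 2 * lam s)) := by
    rw [hHerr]
    unfold gp
    rw [Real.exp_neg]
    have hne : Real.exp (lam s) ≠ 0 := Real.exp_ne_zero _
    field_simp
    ring
  refine ⟨?_, hclosed⟩
  have hI : HasDerivAt (fun t => InJ Δ r (lam t))
      (Real.exp (-lam s) * -(Real.exp (-lam s) * (1 + lam s)) *
        (-(Real.exp (-lam s) * (1 + lam s) * Fp Δ r (lam s)) + Sp Δ r (lam s)) +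
       Real.exp (-lam s) *
        (-((Real.exp (-lam s) * -(Real.exp (-lam s) * (1 + lam s)) * (1 + lam s) +
          Real.exp (-lam s) * (Real.exp (-lam s) * (1 + lam s))) * Fp Δ r (lam s) +
          Real.exp (-lam s) * (1 + lam s) *
            (gp Δ r (lam s) * (Real.exp (-lam s) * (1 + lam s)))) +
          Spd Δ r (lam s) * (Real.exp (-lam s) * (1 + lam s)))) s :=
    hE.mul ((hLam.neg).add hSl)
  convert hI using 1
  rw [hHerr, Pp_eq hΔ hr]
  ring

end main
end HTaux
namespace HTaux

section bounds
variable {Δ : ℕ} {r : ℕ → ℝ} {lam : ℝ → ℝ}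

theorem herr_bound (hΔ : 3 ≤ Δ) (hr : memR Δ r)
    (hdiff : Differentiable ℝ lam) (h0 : lam 0 = 0)
    (hode : ∀ t : ℝ, 0 ≤ t → deriv lam t = Real.exp (-lam t) * (1 + lam t))
    {s : ℝ} (hs : 0 < s) :
    |Herr lam Δ r s| ≤
      4 * (Δ:ℝ) * Real.exp (-lam s) ^ 2 * (1 + lam s) ^ (Δ + 1) := by
  obtain ⟨-, hclosed⟩ := main_deriv hΔ hr hdiff h0 hode hs
  have hl0 : 0 ≤ lam s := lam_nonneg hdiff h0 hode s hs.le
  set l := lam s with hldef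
  have h1l : (0:ℝ) < 1 + l := by linarith
  have hexp1 : Real.exp (-l) * Real.exp l = 1 := by rw [← Real.exp_add]; simp
  have hQ : |Qp Δ r l| ≤ (Δ:ℝ) * (1+l) ^ (Δ-1) := Qp_abs_le hΔ hr hl0
  have hP : |Pp Δ r l| ≤ (Δ:ℝ) * (1+l) ^ Δ := Pp_abs_le hΔ hr hl0
  have hF0 : 0 ≤ Fp Δ r l := Fp_nonneg hr hl0
  have hEF : Real.exp (-l) * Fp Δ r l ≤ (Δ:ℝ) * (1+l) ^ (Δ-1) := by
    calc Real.exp (-l) * Fp Δ r l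
        ≤ Real.exp (-l) * ((Δ:ℝ) * (1+l) ^ (Δ-1) * Real.exp l) :=
          mul_le_mul_of_nonneg_left (Fp_le hΔ hr hl0) (Real.exp_pos _).le
      _ = (Δ:ℝ) * (1+l) ^ (Δ-1) * (Real.exp (-l) * Real.exp l) := by ring
      _ = (Δ:ℝ) * (1+l) ^ (Δ-1) := by rw [hexp1, mul_one]
  have hpow1 : (1+l) ^ (Δ-1) * (1+l) ^ 2 = (1+l) ^ (Δ+1) := by
    rw [← pow_add]; congr 1; omega
  have hpow2 : (1+l) ^ Δ * (1+l) = (1+l) ^ (Δ+1) := (pow_succ _ _).symm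
  have hpow3 : (1+l) ^ (Δ-1) ≤ (1+l) ^ (Δ+1) :=
    pow_le_pow_right₀ (by linarith) (by omega)
  have hpownn : (0:ℝ) ≤ (1+l) ^ (Δ-1) := by positivity
  rw [hclosed, abs_mul, abs_of_nonneg (by positivity : (0:ℝ) ≤ Real.exp (-l) ^ 2)]
  -- inner bound
  have habs : |Qp Δ r l + (1+l) * Pp Δ r l - Real.exp (-l) * Fp Δ r l * (1+l) * (1+2*l)|
      ≤ |Qp Δ r l| + (1+l) * |Pp Δ r l| +
        Real.exp (-l) * Fp Δ r l * (1+l) * (1+2*l) := by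
    have h3nn : 0 ≤ Real.exp (-l) * Fp Δ r l * (1+l) * (1+2*l) := by positivity
    calc |Qp Δ r l + (1+l) * Pp Δ r l - Real.exp (-l) * Fp Δ r l * (1+l) * (1+2*l)|
        ≤ |Qp Δ r l + (1+l) * Pp Δ r l| +
            |Real.exp (-l) * Fp Δ r l * (1+l) * (1+2*l)| := abs_sub _ _
      _ ≤ |Qp Δ r l| + |(1+l) * Pp Δ r l| +
            |Real.exp (-l) * Fp Δ r l * (1+l) * (1+2*l)| := by
          linarith [abs_add_le (Qp Δ r l) ((1+l) * Pp Δ r l)]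
      _ = |Qp Δ r l| + (1+l) * |Pp Δ r l| +
            Real.exp (-l) * Fp Δ r l * (1+l) * (1+2*l) := by
          rw [abs_mul, abs_of_nonneg h1l.le, abs_of_nonneg h3nn]
  have h3 : Real.exp (-l) * Fp Δ r l * (1+l) * (1+2*l) ≤ 2 * (Δ:ℝ) * (1+l) ^ (Δ+1) := by
    have step : Real.exp (-l) * Fp Δ r l * (1+l) * (1+2*l)
        ≤ (Δ:ℝ) * (1+l) ^ (Δ-1) * (1+l) * (1+2*l) := by
      apply mul_le_mul_of_nonneg_right _ (by linarith)
      exact mul_le_mul_of_nonneg_right hEF h1l.le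
    have step2 : (Δ:ℝ) * (1+l) ^ (Δ-1) * (1+l) * (1+2*l)
        ≤ (Δ:ℝ) * (1+l) ^ (Δ-1) * (1+l) * (2*(1+l)) := by
      apply mul_le_mul_of_nonneg_left (by linarith)
      positivity
    have step3 : (Δ:ℝ) * (1+l) ^ (Δ-1) * (1+l) * (2*(1+l)) = 2 * (Δ:ℝ) * (1+l) ^ (Δ+1) := by
      rw [← hpow1]; ring
    linarith
  have h1 : |Qp Δ r l| ≤ (Δ:ℝ) * (1+l) ^ (Δ+1) := by
    refine le_trans hQ (mul_le_mul_of_nonneg_left hpow3 (by positivity))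
  have h2 : (1+l) * |Pp Δ r l| ≤ (Δ:ℝ) * (1+l) ^ (Δ+1) := by
    calc (1+l) * |Pp Δ r l| ≤ (1+l) * ((Δ:ℝ) * (1+l) ^ Δ) :=
          mul_le_mul_of_nonneg_left hP h1l.le
      _ = (Δ:ℝ) * (1+l) ^ (Δ+1) := by rw [← hpow2]; ring
  have hinner : |Qp Δ r l + (1+l) * Pp Δ r l - Real.exp (-l) * Fp Δ r l * (1+l) * (1+2*l)|
      ≤ 4 * ((Δ:ℝ) * (1+l) ^ (Δ+1)) := by
    calc |Qp Δ r l + (1+l) * Pp Δ r l - Real.exp (-l) * Fp Δ r l * (1+l) * (1+2*l)|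
        ≤ |Qp Δ r l| + (1+l) * |Pp Δ r l| +
          Real.exp (-l) * Fp Δ r l * (1+l) * (1+2*l) := habs
      _ ≤ (Δ:ℝ) * (1+l) ^ (Δ+1) + (Δ:ℝ) * (1+l) ^ (Δ+1) + 2 * (Δ:ℝ) * (1+l) ^ (Δ+1) := by
          linarith
      _ = 4 * ((Δ:ℝ) * (1+l) ^ (Δ+1)) := by ring
  calc Real.exp (-l) ^ 2 *
        |Qp Δ r l + (1+l) * Pp Δ r l - Real.exp (-l) * Fp Δ r l * (1+l) * (1+2*l)|
      ≤ Real.exp (-l) ^ 2 * (4 * ((Δ:ℝ) * (1+l) ^ (Δ+1))) :=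
        mul_le_mul_of_nonneg_left hinner (by positivity)
    _ = 4 * (Δ:ℝ) * Real.exp (-l) ^ 2 * (1+l) ^ (Δ+1) := by ring

theorem InJ_abs_le (hΔ : 3 ≤ Δ) (hr : memR Δ r) {x : ℝ} (hx : 0 ≤ x) :
    |InJ Δ r x| ≤ 2 * (Δ:ℝ) * ((1+x) ^ Δ * Real.exp (-x)) := by
  have h1x : (0:ℝ) < 1 + x := by linarith
  have hexp1 : Real.exp (-x) * Real.exp x = 1 := by rw [← Real.exp_add]; simp
  have hEF : Real.exp (-x) * Fp Δ r x ≤ (Δ:ℝ) * (1+x) ^ (Δ-1) := by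
    calc Real.exp (-x) * Fp Δ r x
        ≤ Real.exp (-x) * ((Δ:ℝ) * (1+x) ^ (Δ-1) * Real.exp x) :=
          mul_le_mul_of_nonneg_left (Fp_le hΔ hr hx) (Real.exp_pos _).le
      _ = (Δ:ℝ) * (1+x) ^ (Δ-1) * (Real.exp (-x) * Real.exp x) := by ring
      _ = (Δ:ℝ) * (1+x) ^ (Δ-1) := by rw [hexp1, mul_one]
  have hF0 : 0 ≤ Fp Δ r x := Fp_nonneg hr hx
  have hS : |Sp Δ r x| ≤ (Δ:ℝ) * (1+x) ^ Δ := Sp_abs_le hΔ hr hx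
  have hpow : (1+x) ^ (Δ-1) * (1+x) ≤ (1+x) ^ Δ := by
    rw [← pow_succ]
    exact pow_le_pow_right₀ (by linarith) (by omega)
  unfold InJ
  rw [abs_mul, abs_of_nonneg (Real.exp_pos (-x)).le]
  have hinner : |-(Real.exp (-x) * (1 + x) * Fp Δ r x) + Sp Δ r x|
      ≤ 2 * ((Δ:ℝ) * (1+x) ^ Δ) := by
    have t1 : |(-(Real.exp (-x) * (1 + x) * Fp Δ r x))| =
        Real.exp (-x) * Fp Δ r x * (1+x) := by
      rw [abs_neg, abs_of_nonneg (by positivity)]; ring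
    have t2 : Real.exp (-x) * Fp Δ r x * (1+x) ≤ (Δ:ℝ) * ((1+x) ^ (Δ-1) * (1+x)) := by
      calc Real.exp (-x) * Fp Δ r x * (1+x) ≤ (Δ:ℝ) * (1+x) ^ (Δ-1) * (1+x) :=
            mul_le_mul_of_nonneg_right hEF h1x.le
        _ = (Δ:ℝ) * ((1+x) ^ (Δ-1) * (1+x)) := by ring
    have t3 : (Δ:ℝ) * ((1+x) ^ (Δ-1) * (1+x)) ≤ (Δ:ℝ) * (1+x) ^ Δ :=
      mul_le_mul_of_nonneg_left hpow (by positivity)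
    calc |(-(Real.exp (-x) * (1 + x) * Fp Δ r x)) + Sp Δ r x|
        ≤ |(-(Real.exp (-x) * (1 + x) * Fp Δ r x))| + |Sp Δ r x| := abs_add_le _ _
      _ ≤ 2 * ((Δ:ℝ) * (1+x) ^ Δ) := by rw [t1]; linarith
  calc Real.exp (-x) * |-(Real.exp (-x) * (1 + x) * Fp Δ r x) + Sp Δ r x|
      ≤ Real.exp (-x) * (2 * ((Δ:ℝ) * (1+x) ^ Δ)) :=
        mul_le_mul_of_nonneg_left hinner (Real.exp_pos _).le
    _ = 2 * (Δ:ℝ) * ((1+x) ^ Δ * Real.exp (-x)) := by ring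

theorem InJ_tendsto (hΔ : 3 ≤ Δ) (hr : memR Δ r) :
    Filter.Tendsto (InJ Δ r) Filter.atTop (nhds 0) := by
  have hb : Filter.Tendsto (fun x : ℝ => (1+x) ^ Δ * Real.exp (-(1+x)))
      Filter.atTop (nhds 0) :=
    (tendsto_pow_mul_exp_neg_atTop_nhds_zero Δ).comp
      (Filter.tendsto_atTop_add_const_left _ 1 Filter.tendsto_id)
  have hb' : Filter.Tendsto (fun x : ℝ => 2 * (Δ:ℝ) * Real.exp 1 *
      ((1+x) ^ Δ * Real.exp (-(1+x)))) Filter.atTop (nhds 0) := by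
    have := hb.const_mul (2 * (Δ:ℝ) * Real.exp 1)
    simpa using this
  apply squeeze_zero_norm' _ hb'
  filter_upwards [Filter.eventually_ge_atTop (0:ℝ)] with x hx
  have heq : 2 * (Δ:ℝ) * Real.exp 1 * ((1+x) ^ Δ * Real.exp (-(1+x)))
      = 2 * (Δ:ℝ) * ((1+x) ^ Δ * Real.exp (-x)) := by
    rw [show -(1+x) = -x + -1 by ring, Real.exp_add]
    rw [show (Real.exp (-1) : ℝ) = (Real.exp 1)⁻¹ by rw [← Real.exp_neg]]
    field_simp
  rw [heq]
  exact InJ_abs_le hΔ hr hx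

end bounds
end HTaux
namespace HTaux

theorem integrable_majorant (C : ℝ) {t : ℝ} (ht : 0 ≤ t) :
    MeasureTheory.IntegrableOn (fun s : ℝ => C * (1+s) ^ (-(3/2):ℝ)) (Set.Ici t) := by
  have base : MeasureTheory.IntegrableOn (fun s : ℝ => (1+s) ^ (-(3/2):ℝ)) (Set.Ici t) := by
    rw [integrableOn_Ici_iff_integrableOn_Ioi]
    have h1 : MeasureTheory.IntegrableOn (fun u : ℝ => u ^ (-(3/2):ℝ)) (Set.Ioi (1+t)) :=
      integrableOn_Ioi_rpow_of_lt (by norm_num) (by linarith)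
    have e : MeasureTheory.MeasurePreserving (fun x : ℝ => x + 1)
        MeasureTheory.volume MeasureTheory.volume := measurePreserving_add_right _ 1
    have emb : MeasurableEmbedding (fun x : ℝ => x + 1) :=
      (Homeomorph.addRight (1:ℝ)).measurableEmbedding
    have h2 := (e.integrableOn_comp_preimage emb).mpr h1
    have hpre : (fun x : ℝ => x + 1) ⁻¹' (Set.Ioi (1+t)) = Set.Ioi t := by
      ext x
      simp only [Set.mem_preimage, Set.mem_Ioi]
      constructor <;> intro h <;> linarith
    rw [hpre] at h2
    refine h2.congr_fun (fun x _ => ?_) measurableSet_Ioi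
    simp only [Function.comp_apply]
    rw [add_comm]
  exact base.const_mul C

section final
variable {Δ : ℕ} {r : ℕ → ℝ} {lam : ℝ → ℝ}

theorem herr_final_bound (hΔ : 3 ≤ Δ) (hr : memR Δ r)
    (hdiff : Differentiable ℝ lam) (h0 : lam 0 = 0)
    (hode : ∀ t : ℝ, 0 ≤ t → deriv lam t = Real.exp (-lam t) * (1 + lam t))
    {C0 : ℝ} (hC0 : 0 ≤ C0)
    (hC : ∀ x : ℝ, 0 ≤ x → (1+x) ^ (Δ+1) ≤ C0 * Real.exp (x/2))
    {s : ℝ} (hs : 0 < s) :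
    ‖Herr lam Δ r s‖ ≤ (4 * (Δ:ℝ) * C0) * (1+s) ^ (-(3/2):ℝ) := by
  have hb := herr_bound hΔ hr hdiff h0 hode hs
  have hl0 : 0 ≤ lam s := lam_nonneg hdiff h0 hode s hs.le
  have hC' := hC (lam s) hl0
  have hexp2 : Real.exp (-lam s) ^ 2 * Real.exp (lam s / 2)
      = Real.exp (-(3/2) * lam s) := by
    rw [sq, ← Real.exp_add, ← Real.exp_add]
    congr 1
    ring
  have hstep1 : Real.exp (-lam s) ^ 2 * (1 + lam s) ^ (Δ+1)
      ≤ C0 * Real.exp (-(3/2) * lam s) := by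
    calc Real.exp (-lam s) ^ 2 * (1 + lam s) ^ (Δ+1)
        ≤ Real.exp (-lam s) ^ 2 * (C0 * Real.exp (lam s / 2)) :=
          mul_le_mul_of_nonneg_left hC' (by positivity)
      _ = C0 * (Real.exp (-lam s) ^ 2 * Real.exp (lam s / 2)) := by ring
      _ = C0 * Real.exp (-(3/2) * lam s) := by rw [hexp2]
  have hstep2 : Real.exp (-(3/2) * lam s) ≤ (1+s) ^ (-(3/2):ℝ) := by
    have h1s : (0:ℝ) < 1 + s := by linarith
    have hle : 1 + s ≤ Real.exp (lam s) := exp_lam_lower hdiff h0 hode s hs.le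
    have := Real.rpow_le_rpow_of_nonpos h1s hle (by norm_num : -(3/2:ℝ) ≤ 0)
    rwa [Real.rpow_def_of_pos (Real.exp_pos _), Real.log_exp,
      show lam s * (-(3/2:ℝ)) = -(3/2) * lam s by ring] at this
  rw [Real.norm_eq_abs]
  calc |Herr lam Δ r s| ≤ 4 * (Δ:ℝ) * Real.exp (-lam s) ^ 2 * (1 + lam s) ^ (Δ+1) := hb
    _ = 4 * (Δ:ℝ) * (Real.exp (-lam s) ^ 2 * (1 + lam s) ^ (Δ+1)) := by ring
    _ ≤ 4 * (Δ:ℝ) * (C0 * Real.exp (-(3/2) * lam s)) := by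
        apply mul_le_mul_of_nonneg_left hstep1 (by positivity)
    _ ≤ 4 * (Δ:ℝ) * (C0 * (1+s) ^ (-(3/2):ℝ)) := by
        apply mul_le_mul_of_nonneg_left _ (by positivity)
        exact mul_le_mul_of_nonneg_left hstep2 hC0
    _ = (4 * (Δ:ℝ) * C0) * (1+s) ^ (-(3/2):ℝ) := by ring

end final
end HTaux
/-- Explicit tail integral of `H_r`: `∫_t^∞ H_r = I_r(t)`, and `∫_0^∞ H_r = 0`. -/
theorem Herr_tail_integral (Δ : ℕ) (hΔ : 3 ≤ Δ) (lam : ℝ → ℝ)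
    (hdiff : Differentiable ℝ lam) (h0 : lam 0 = 0)
    (hode : ∀ t : ℝ, 0 ≤ t → deriv lam t = Real.exp (-lam t) * (1 + lam t))
    (r : ℕ → ℝ) (hr : memR Δ r) :
    (∀ t : ℝ, 0 ≤ t →
      MeasureTheory.IntegrableOn (Herr lam Δ r) (Set.Ici t) ∧
      (∫ s in Set.Ici t, Herr lam Δ r s) = Ierr lam Δ r t) ∧
    (∫ s in Set.Ici (0:ℝ), Herr lam Δ r s) = 0 := by
  classical
  have hln := HTaux.lam_nonneg hdiff h0 hode
  obtain ⟨C0, hC0, hC⟩ := HTaux.pow_le_exp_half (Δ+1)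
  have hfb : ∀ s : ℝ, 0 < s →
      ‖Herr lam Δ r s‖ ≤ (4 * (Δ:ℝ) * C0) * (1+s) ^ (-(3/2):ℝ) :=
    fun s hs => HTaux.herr_final_bound hΔ hr hdiff h0 hode hC0 hC hs
  have hderiv : ∀ s : ℝ, 0 < s →
      Herr lam Δ r s = -(deriv (fun u => HTaux.InJ Δ r (lam u)) s) := by
    intro s hs
    rw [(HTaux.main_deriv hΔ hr hdiff h0 hode hs).1.deriv]
    ring
  have key : ∀ t : ℝ, 0 ≤ t →
      MeasureTheory.IntegrableOn (Herr lam Δ r) (Set.Ici t) ∧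
      (∫ s in Set.Ici t, Herr lam Δ r s) = Ierr lam Δ r t := by
    intro t ht
    have hnull : (MeasureTheory.volume.restrict (Set.Ici t)) (Set.Iic 0) = 0 := by
      rw [MeasureTheory.Measure.restrict_apply measurableSet_Iic]
      refine MeasureTheory.measure_mono_null ?_ (MeasureTheory.measure_singleton (0:ℝ))
      intro x hx
      exact Set.mem_singleton_iff.mpr (le_antisymm hx.1 (ht.trans hx.2))
    have hsub1 : {s : ℝ | ¬ Herr lam Δ r s
        = -(deriv (fun u => HTaux.InJ Δ r (lam u)) s)} ⊆ Set.Iic 0 := by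
      intro s hs'
      by_contra hs0
      exact hs' (hderiv s (not_le.mp hs0))
    have hae : Herr lam Δ r =ᵐ[MeasureTheory.volume.restrict (Set.Ici t)]
        fun s => -(deriv (fun u => HTaux.InJ Δ r (lam u)) s) :=
      MeasureTheory.ae_iff.mpr (MeasureTheory.measure_mono_null hsub1 hnull)
    have hmeas : MeasureTheory.AEStronglyMeasurable (Herr lam Δ r)
        (MeasureTheory.volume.restrict (Set.Ici t)) :=
      (((measurable_deriv (fun u => HTaux.InJ Δ r (lam u))).neg).aestronglyMeasurable).congr
        hae.symm
    have hsub2 : {s : ℝ | ¬ ‖Herr lam Δ r s‖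
        ≤ (4 * (Δ:ℝ) * C0) * (1+s) ^ (-(3/2):ℝ)} ⊆ Set.Iic 0 := by
      intro s hs'
      by_contra hs0
      exact hs' (hfb s (not_le.mp hs0))
    have hbae : ∀ᵐ s ∂(MeasureTheory.volume.restrict (Set.Ici t)),
        ‖Herr lam Δ r s‖ ≤ (4 * (Δ:ℝ) * C0) * (1+s) ^ (-(3/2):ℝ) :=
      MeasureTheory.ae_iff.mpr (MeasureTheory.measure_mono_null hsub2 hnull)
    have hint : MeasureTheory.IntegrableOn (Herr lam Δ r) (Set.Ici t) :=
      MeasureTheory.Integrable.mono' (HTaux.integrable_majorant _ ht) hmeas hbae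
    refine ⟨hint, ?_⟩
    have h1 : Filter.Tendsto (fun T => ∫ s in t..T, Herr lam Δ r s) Filter.atTop
        (nhds (∫ s in Set.Ioi t, Herr lam Δ r s)) :=
      MeasureTheory.intervalIntegral_tendsto_integral_Ioi t
        (hint.mono_set Set.Ioi_subset_Ici_self) Filter.tendsto_id
    have hev : ∀ᶠ T in Filter.atTop, HTaux.InJ Δ r (lam t) - HTaux.InJ Δ r (lam T)
        = ∫ s in t..T, Herr lam Δ r s := by
      filter_upwards [Filter.eventually_ge_atTop t] with T hT
      have hcont : ContinuousOn (fun u => -(HTaux.InJ Δ r (lam u))) (Set.Icc t T) := by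
        intro u hu
        have hu0 : (-1:ℝ) < lam u := by
          have := hln u (ht.trans hu.1); linarith
        exact (((HTaux.continuousAt_InJ Δ r hu0).comp
          (hdiff.continuous.continuousAt)).neg).continuousWithinAt
      have hder : ∀ s ∈ Set.Ioo t T,
          HasDerivAt (fun u => -(HTaux.InJ Δ r (lam u))) (Herr lam Δ r s) s := by
        intro s hsm
        have hs0 : 0 < s := lt_of_le_of_lt ht hsm.1
        simpa using (HTaux.main_deriv hΔ hr hdiff h0 hode hs0).1.fun_neg
      have hii : IntervalIntegrable (Herr lam Δ r) MeasureTheory.volume t T := by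
        rw [intervalIntegrable_iff_integrableOn_Icc_of_le hT]
        exact hint.mono_set Set.Icc_subset_Ici_self
      have := intervalIntegral.integral_eq_sub_of_hasDerivAt_of_le hT hcont hder hii
      rw [this]; ring
    have h2 : Filter.Tendsto (fun T => ∫ s in t..T, Herr lam Δ r s) Filter.atTop
        (nhds (HTaux.InJ Δ r (lam t))) := by
      have hlim : Filter.Tendsto (fun T => HTaux.InJ Δ r (lam t) - HTaux.InJ Δ r (lam T))
          Filter.atTop (nhds (HTaux.InJ Δ r (lam t) - 0)) :=
        tendsto_const_nhds.sub ((HTaux.InJ_tendsto hΔ hr).comp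
          (HTaux.lam_tendsto hdiff h0 hode))
      rw [sub_zero] at hlim
      exact Filter.Tendsto.congr' hev hlim
    have hval : (∫ s in Set.Ioi t, Herr lam Δ r s) = HTaux.InJ Δ r (lam t) :=
      tendsto_nhds_unique h1 h2
    rw [MeasureTheory.integral_Ici_eq_integral_Ioi, hval]
    have hLE : LamErr lam Δ r t
        = Real.exp (-lam t) * (1 + lam t) * HTaux.Fp Δ r (lam t) := by
      unfold LamErr HTaux.Fp HTaux.gp HTaux.Qp
      rw [hode t ht]
    unfold Ierr HTaux.InJ HTaux.Sp
    rw [hLE]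
  refine ⟨key, ?_⟩
  rw [(key 0 le_rfl).2]
  have hL0 : LamErr lam Δ r 0 = 0 := by
    unfold LamErr
    rw [h0, intervalIntegral.integral_same, mul_zero]
  have hsum : (∑ k ∈ Finset.Icc 1 (Δ-2),
      lam 0 ^ k / (Nat.factorial k : ℝ) * tailS Δ r (k+2)) = 0 := by
    refine Finset.sum_eq_zero fun k hk => ?_
    rw [h0, zero_pow (by have := (Finset.mem_Icc.mp hk).1; omega)]
    ring
  unfold Ierr
  rw [hL0, hsum]
  simp
end
end
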